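/- arXiv:1009.0566 — 5 statements merged into one kernel-verified Lean document; each statement's English description precedes it below -/
import Mathlib

section
/- Let 𝒪 be the set of polynomials with rational coefficients, preordered by: p ≼ q iff p.eval x ≤ q.eval x for every rational x with 0 < x < 1. Then this order is universal: for every partial order P on a countable type there is a map f : P → Polynomial ℚ such that p ≤ q if and only if f p ≼ f q. -/
open Polynomial Set

noncomputable section

namespace PolyUniv

/-- Evaluation of a rational polynomial at a real point. -/
def ev (p : ℚ[X]) (x : ℝ) : ℝ := (p.map (algebraMap ℚ ℝ)).eval x

lemma continuous_ev (p : ℚ[X]) : Continuous (ev p) := Polynomial.continuous _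

lemma ev_rat (p : ℚ[X]) (x : ℚ) : ev p (x:ℝ) = ((p.eval x : ℚ) : ℝ) := by
  unfold ev
  rw [Polynomial.eval_map, show ((x:ℝ)) = algebraMap ℚ ℝ x from rfl,
    Polynomial.eval₂_at_apply]
  rfl

lemma ev_add (p q : ℚ[X]) (x : ℝ) : ev (p + q) x = ev p x + ev q x := by
  simp [ev]

lemma ev_sub (p q : ℚ[X]) (x : ℝ) : ev (p - q) x = ev p x - ev q x := by
  simp [ev]

lemma ev_mul (p q : ℚ[X]) (x : ℝ) : ev (p * q) x = ev p x * ev q x := by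
  simp [ev]

lemma ev_pow (p : ℚ[X]) (n : ℕ) (x : ℝ) : ev (p ^ n) x = (ev p x) ^ n := by
  simp [ev]

lemma ev_C (c : ℚ) (x : ℝ) : ev (C c) x = (c : ℝ) := by simp [ev]

lemma ev_X (x : ℝ) : ev X x = x := by simp [ev]

lemma ev_neg (p : ℚ[X]) (x : ℝ) : ev (-p) x = - ev p x := by simp [ev]

lemma ev_comp (p q : ℚ[X]) (x : ℝ) : ev (p.comp q) x = ev p (ev q x) := by
  unfold ev
  rw [Polynomial.map_comp, Polynomial.eval_comp]

/-- A rational uniform bound on `[0,1]`. -/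
lemma exists_bound (p : ℚ[X]) : ∃ M : ℚ, 0 < M ∧ ∀ x ∈ Icc (0:ℝ) 1, |ev p x| ≤ (M:ℝ) := by
  have hc : ContinuousOn (fun x => |ev p x|) (Icc (0:ℝ) 1) :=
    ((continuous_ev p).abs).continuousOn
  obtain ⟨xm, hxm, hmax⟩ := isCompact_Icc.exists_isMaxOn (by
    exact ⟨0, by norm_num⟩) hc
  obtain ⟨M, hM⟩ := exists_rat_gt (|ev p xm|)
  refine ⟨M, ?_, fun x hx => ?_⟩
  · have := abs_nonneg (ev p xm); exact_mod_cast lt_of_le_of_lt this hM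
  · exact le_of_lt (lt_of_le_of_lt (hmax hx) hM)

/-- A positive polynomial on `[0,1]` has a positive lower bound.  -/
lemma exists_pos_lb (p : ℚ[X]) (h : ∀ x ∈ Icc (0:ℝ) 1, 0 < ev p x) :
    ∃ δ : ℝ, 0 < δ ∧ ∀ x ∈ Icc (0:ℝ) 1, δ ≤ ev p x := by
  obtain ⟨xm, hxm, hmin⟩ := isCompact_Icc.exists_isMinOn (⟨0, by norm_num⟩ :
    (Icc (0:ℝ) 1).Nonempty) (continuous_ev p).continuousOn
  exact ⟨ev p xm, h xm hxm, fun x hx => hmin hx⟩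

/-- Find a rational in an interval avoiding a finite set. -/
lemma rat_avoid (a : ℝ) (S : Finset ℚ) :
    ∀ b : ℝ, a < b → ∃ q : ℚ, a < (q:ℝ) ∧ (q:ℝ) < b ∧ q ∉ S := by
  classical
  induction S using Finset.induction_on with
  | empty =>
      intro b h
      obtain ⟨q, h1, h2⟩ := exists_rat_btwn h; exact ⟨q, h1, h2, by simp⟩
  | @insert s S hs ih =>
      intro b h
      obtain ⟨q, hq1, hq2, hq3⟩ := ih b h
      by_cases hqs : q = s
      · obtain ⟨q', h1', h2', h3'⟩ := ih (q:ℝ) hq1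
        refine ⟨q', h1', lt_trans h2' hq2, ?_⟩
        simp only [Finset.mem_insert]
        rintro (rfl | hmem)
        · subst hqs; exact lt_irrefl _ (by exact_mod_cast h2')
        · exact h3' hmem
      · exact ⟨q, hq1, hq2, by simp [hqs, hq3]⟩

def evh (x : ℝ) : ℚ[X] →+* ℝ :=
  (Polynomial.evalRingHom x).comp (Polynomial.mapRingHom (algebraMap ℚ ℝ))

lemma ev_eq_evh (p : ℚ[X]) (x : ℝ) : ev p x = evh x p := rfl

/-- Newton iterates for `√y` on `[0,1]`. -/
def sq : ℕ → ℚ[X]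
  | 0 => 0
  | n + 1 => sq n + (X - (sq n)^2) * C (1/2)

lemma sq_bounds (n : ℕ) (y : ℝ) (hy : y ∈ Icc (0:ℝ) 1) :
    0 ≤ ev (sq n) y ∧ ev (sq n) y ≤ Real.sqrt y ∧
    Real.sqrt y - ev (sq n) y ≤ Real.sqrt y * (1 - Real.sqrt y / 2) ^ n := by
  obtain ⟨hy0, hy1⟩ := hy
  have hs0 : 0 ≤ Real.sqrt y := Real.sqrt_nonneg y
  have hs1 : Real.sqrt y ≤ 1 := by
    rw [show (1:ℝ) = Real.sqrt 1 by simp]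
    exact Real.sqrt_le_sqrt hy1
  have hsq : Real.sqrt y ^ 2 = y := Real.sq_sqrt hy0
  induction n with
  | zero =>
      have hz : ev (sq 0) y = 0 := by
        show ev (0:ℚ[X]) y = 0
        simp [ev, Polynomial.map_zero]
      rw [hz]
      exact ⟨le_refl _, hs0, by simp⟩
  | succ n ih =>
      obtain ⟨h0, hle, herr⟩ := ih
      set s := ev (sq n) y with hs
      have hev : ev (sq (n+1)) y = s + (y - s^2) * (1/2) := by
        show ev (sq n + (X - (sq n)^2) * C (1/2)) y = _
        rw [ev_add, ev_mul, ev_sub, ev_X, ev_pow, ev_C]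
        rw [← hs]
        norm_num
      have hs2 : s^2 ≤ y := by
        calc s^2 ≤ Real.sqrt y ^ 2 := by
              apply pow_le_pow_left₀ h0 hle
          _ = y := hsq
      constructor
      · rw [hev]; nlinarith
      have key : Real.sqrt y - (s + (y - s^2) * (1/2))
          = (Real.sqrt y - s) * (1 - (Real.sqrt y + s)/2) := by
        have : y = Real.sqrt y ^ 2 := hsq.symm
        ring_nf
        nlinarith [hsq]
      constructor
      · rw [hev]
        have h1 : 0 ≤ Real.sqrt y - s := by linarith
        have h2 : 0 ≤ 1 - (Real.sqrt y + s)/2 := by nlinarith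
        nlinarith [mul_nonneg h1 h2]
      · rw [hev]
        have h1 : 0 ≤ Real.sqrt y - s := by linarith
        have h3 : 1 - (Real.sqrt y + s)/2 ≤ 1 - Real.sqrt y / 2 := by nlinarith
        have h4 : (Real.sqrt y - s) * (1 - (Real.sqrt y + s)/2)
            ≤ (Real.sqrt y - s) * (1 - Real.sqrt y/2) := by
          apply mul_le_mul_of_nonneg_left h3 h1
        have h5 : (Real.sqrt y - s) * (1 - Real.sqrt y/2)
            ≤ (Real.sqrt y * (1 - Real.sqrt y / 2) ^ n) * (1 - Real.sqrt y/2) := by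
          apply mul_le_mul_of_nonneg_right herr
          nlinarith
        calc Real.sqrt y - (s + (y - s^2) * (1/2))
            = (Real.sqrt y - s) * (1 - (Real.sqrt y + s)/2) := key
          _ ≤ (Real.sqrt y - s) * (1 - Real.sqrt y/2) := h4
          _ ≤ (Real.sqrt y * (1 - Real.sqrt y / 2) ^ n) * (1 - Real.sqrt y/2) := h5
          _ = Real.sqrt y * (1 - Real.sqrt y / 2) ^ (n+1) := by ring

/-- Polynomial lower approximation to `|t|` on `[-1,1]`. -/
lemma abs_approx (ε : ℝ) (hε : 0 < ε) :
    ∃ s : ℚ[X], ∀ t ∈ Icc (-1:ℝ) 1, ev s t ≤ |t| ∧ |t| - ε ≤ ev s t := by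
  set ε' := min ε 1 with hε'
  have hε'0 : 0 < ε' := lt_min hε one_pos
  have hε'1 : ε' ≤ 1 := min_le_right _ _
  have hlt : (1 - ε'/2 : ℝ) < 1 := by linarith
  have hge : (0:ℝ) ≤ 1 - ε'/2 := by linarith
  obtain ⟨N, hN⟩ := exists_pow_lt_of_lt_one hε'0 hlt
  refine ⟨(sq N).comp (X^2), fun t ht => ?_⟩
  have ht2 : t^2 ∈ Icc (0:ℝ) 1 := by
    constructor
    · positivity
    · obtain ⟨h1, h2⟩ := ht; nlinarith
  have hevc : ev ((sq N).comp (X^2)) t = ev (sq N) (t^2) := by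
    rw [ev_comp, ev_pow, ev_X]
  have hsqrt : Real.sqrt (t^2) = |t| := Real.sqrt_sq_eq_abs t
  obtain ⟨h0, hle, herr⟩ := sq_bounds N (t^2) ht2
  rw [hsqrt] at hle herr
  constructor
  · rw [hevc]; exact hle
  · rw [hevc]
    have hb : |t| * (1 - |t| / 2) ^ N ≤ ε' := by
      rcases le_or_gt (|t|) ε' with h | h
      · calc |t| * (1 - |t| / 2) ^ N ≤ |t| * 1 := by
              apply mul_le_mul_of_nonneg_left _ (abs_nonneg t)
              apply pow_le_one₀ (by nlinarith [abs_nonneg t, abs_le.2 ⟨ht.1, ht.2⟩]) 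
              nlinarith [abs_nonneg t]
          _ ≤ ε' := by rw [mul_one]; exact h
      · have habs1 : |t| ≤ 1 := abs_le.2 ⟨ht.1, ht.2⟩
        calc |t| * (1 - |t| / 2) ^ N ≤ 1 * (1 - ε'/2) ^ N := by
              apply mul_le_mul habs1 _ (by apply pow_nonneg; nlinarith [abs_nonneg t]) zero_le_one
              apply pow_le_pow_left₀ (by nlinarith [abs_nonneg t]) (by linarith)
          _ = (1 - ε'/2) ^ N := one_mul _
          _ ≤ ε' := le_of_lt hN
    have : |t| - ev (sq N) (t^2) ≤ ε' := le_trans herr hb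
    have : |t| - ev (sq N) (t^2) ≤ ε := le_trans this (min_le_left _ _)
    linarith

/-- Approximate min of two polynomials from strictly below. -/
lemma min_approx (a b : ℚ[X]) (γ : ℝ) (hγ : 0 < γ) :
    ∃ m : ℚ[X], ∀ x ∈ Icc (0:ℝ) 1,
      ev m x < ev a x ∧ ev m x < ev b x ∧ min (ev a x) (ev b x) - γ < ev m x := by
  obtain ⟨γ', hγ'0, hγ'γ⟩ := exists_rat_btwn hγ
  have hγ'0' : (0:ℚ) < γ' := by exact_mod_cast hγ'0
  obtain ⟨M, hM0, hMb⟩ := exists_bound (a - b)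
  obtain ⟨s, hs⟩ := abs_approx ((γ':ℝ)/(2*M)) (by positivity)
  set d : ℚ[X] := (a - b) * C (1/M) with hd
  set m : ℚ[X] := (a + b - C M * (s.comp d)) * C (1/2) - C (γ'/2) with hm
  refine ⟨m, fun x hx => ?_⟩
  have hdx : ev d x = (ev a x - ev b x) / M := by
    rw [hd, ev_mul, ev_sub, ev_C]; push_cast; ring
  have hdx1 : ev d x ∈ Icc (-1:ℝ) 1 := by
    rw [hdx]
    have := hMb x hx
    rw [ev_sub] at this
    have hM0' : (0:ℝ) < M := by exact_mod_cast hM0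
    constructor
    · rw [le_div_iff₀ hM0']
      nlinarith [abs_le.1 this]
    · rw [div_le_one hM0']
      nlinarith [abs_le.1 this]
  obtain ⟨hsle, hsge⟩ := hs _ hdx1
  have habs : |ev d x| = |ev a x - ev b x| / M := by
    rw [hdx, abs_div]
    congr 1
    exact abs_of_pos (by exact_mod_cast hM0)
  have hmx : ev m x = (ev a x + ev b x - M * ev s (ev d x)) / 2 - (γ':ℝ)/2 := by
    rw [hm, ev_sub, ev_mul, ev_sub, ev_add, ev_mul, ev_C, ev_C, ev_C, ev_comp]
    push_cast; ring
  have hM0' : (0:ℝ) < M := by exact_mod_cast hM0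
  have key1 : M * ev s (ev d x) ≤ |ev a x - ev b x| := by
    have := mul_le_mul_of_nonneg_left hsle (le_of_lt hM0')
    rw [habs] at this
    calc M * ev s (ev d x) ≤ M * (|ev a x - ev b x| / M) := this
      _ = |ev a x - ev b x| := by field_simp
  have key2 : |ev a x - ev b x| - (γ':ℝ)/2 ≤ M * ev s (ev d x) := by
    have := mul_le_mul_of_nonneg_left hsge (le_of_lt hM0')
    rw [habs] at this
    calc |ev a x - ev b x| - (γ':ℝ)/2
        = M * (|ev a x - ev b x| / M - (γ':ℝ)/(2*M)) := by field_simp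
      _ ≤ M * ev s (ev d x) := this
  have hminid : min (ev a x) (ev b x) = (ev a x + ev b x - |ev a x - ev b x|) / 2 := by
    rcases le_total (ev a x) (ev b x) with h | h
    · rw [min_eq_left h, abs_of_nonpos (by linarith)]; ring
    · rw [min_eq_right h, abs_of_nonneg (by linarith)]; ring
  have hγ'pos : (0:ℝ) < γ' := hγ'0
  refine ⟨?_, ?_, ?_⟩
  · rw [hmx]
    have : (ev a x + ev b x - M * ev s (ev d x)) / 2 ≤
        (ev a x + ev b x - (|ev a x - ev b x| - γ'/2)) / 2 := by linarith
    have h2 : (ev a x + ev b x - |ev a x - ev b x|)/2 ≤ min (ev a x) (ev b x) := by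
      rw [hminid]
    have hmin_le : min (ev a x) (ev b x) ≤ ev a x := min_le_left _ _
    linarith
  · rw [hmx]
    have h2 : (ev a x + ev b x - |ev a x - ev b x|)/2 ≤ min (ev a x) (ev b x) := by
      rw [hminid]
    have hmin_le : min (ev a x) (ev b x) ≤ ev b x := min_le_right _ _
    linarith
  · rw [hmx]
    have h2 : (ev a x + ev b x - |ev a x - ev b x|)/2 = min (ev a x) (ev b x) := hminid.symm
    have : (ev a x + ev b x - M * ev s (ev d x))/2 ≥
        (ev a x + ev b x - |ev a x - ev b x|)/2 := by linarith
    have hγc : (γ':ℝ) < γ := hγ'γ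
    linarith


/-- Approximate max of two polynomials from strictly above. -/
lemma max_approx (a b : ℚ[X]) (γ : ℝ) (hγ : 0 < γ) :
    ∃ m : ℚ[X], ∀ x ∈ Icc (0:ℝ) 1,
      ev a x < ev m x ∧ ev b x < ev m x ∧ ev m x < max (ev a x) (ev b x) + γ := by
  obtain ⟨m₀, hm₀⟩ := min_approx (-a) (-b) γ hγ
  refine ⟨-m₀, fun x hx => ?_⟩
  obtain ⟨h1, h2, h3⟩ := hm₀ x hx
  rw [ev_neg] at h1 h2
  rw [ev_neg, ev_neg] at h3
  have hmm : min (-ev a x) (-ev b x) = - max (ev a x) (ev b x) := by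
    rcases le_total (ev a x) (ev b x) with h | h
    · rw [max_eq_right h, min_eq_right (neg_le_neg h)]
    · rw [max_eq_left h, min_eq_left (neg_le_neg h)]
  rw [hmm] at h3
  exact ⟨by rw [ev_neg]; linarith, by rw [ev_neg]; linarith, by rw [ev_neg]; linarith⟩

/-- Positive gap between two families on `[0,1]`. -/
lemma family_gap (q u : ℚ[X])
    (h : ∀ x ∈ Icc (0:ℝ) 1, ev q x < ev u x) :
    ∃ δ : ℝ, 0 < δ ∧ ∀ x ∈ Icc (0:ℝ) 1, ev q x + δ ≤ ev u x := by
  obtain ⟨δ, hδ0, hδ⟩ := exists_pos_lb (u - q) (fun x hx => by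
    rw [ev_sub]; linarith [h x hx])
  refine ⟨δ, hδ0, fun x hx => ?_⟩
  have := hδ x hx
  rw [ev_sub] at this
  linarith

/-- Combine finitely many positive-margin facts into one. -/
lemma finset_pos_combine {α : Type*} (s : Finset α) (Q : α → ℝ → Prop)
    (hdown : ∀ a δ δ', 0 < δ' → δ' ≤ δ → Q a δ → Q a δ')
    (h : ∀ a ∈ s, ∃ δ : ℝ, 0 < δ ∧ Q a δ) :
    ∃ δ : ℝ, 0 < δ ∧ ∀ a ∈ s, Q a δ := by
  classical
  induction s using Finset.cons_induction with
  | empty => exact ⟨1, one_pos, by simp⟩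
  | cons a s ha ih =>
      obtain ⟨δ₁, h₁0, h₁⟩ := h a (Finset.mem_cons_self _ _)
      obtain ⟨δ₂, h₂0, h₂⟩ := ih (fun b hb => h b (Finset.mem_cons_of_mem hb))
      refine ⟨min δ₁ δ₂, lt_min h₁0 h₂0, fun b hb => ?_⟩
      rcases Finset.mem_cons.1 hb with rfl | hb
      · exact hdown b δ₁ _ (lt_min h₁0 h₂0) (min_le_left _ _) h₁
      · exact hdown b δ₂ _ (lt_min h₁0 h₂0) (min_le_right _ _) (h₂ b hb)

/-- A polynomial strictly between `{l}` and a finite family `Hi`. -/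
lemma between_single (l : ℚ[X]) (Hi : Finset (ℚ[X])) (hHi : Hi.Nonempty)
    (hband : ∀ u ∈ Hi, ∀ x ∈ Icc (0:ℝ) 1, ev l x < ev u x) :
    ∃ q : ℚ[X], ∀ x ∈ Icc (0:ℝ) 1,
      (ev l x < ev q x) ∧ ∀ u ∈ Hi, ev q x < ev u x := by
  classical
  induction Hi using Finset.cons_induction with
  | empty => exact absurd hHi (by simp)
  | cons u' Hi hu' ih =>
      rcases Hi.eq_empty_or_nonempty with rfl | hne
      · have hb := hband u' (by simp)
        refine ⟨(l + u') * C (1/2), fun x hx => ?_⟩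
        have hq : ev ((l + u') * C (1/2)) x = (ev l x + ev u' x) / 2 := by
          rw [ev_mul, ev_add, ev_C]; push_cast; ring
        refine ⟨by rw [hq]; linarith [hb x hx], fun u hu => ?_⟩
        rcases Finset.mem_cons.1 hu with rfl | hu
        · rw [hq]; linarith [hb x hx]
        · simp at hu
      · obtain ⟨q, hq⟩ := ih hne (fun u hu x hx => hband u (Finset.mem_cons_of_mem hu) x hx)
        have hlu' := hband u' (Finset.mem_cons_self _ _)
        obtain ⟨δ1, hδ10, hδ1⟩ := family_gap l q (fun x hx => (hq x hx).1)
        obtain ⟨δ2, hδ20, hδ2⟩ := family_gap l u' hlu'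
        set γ := min δ1 δ2 with hγdef
        have hγ0 : 0 < γ := lt_min hδ10 hδ20
        obtain ⟨m, hm⟩ := min_approx q u' γ hγ0
        refine ⟨m, fun x hx => ?_⟩
        obtain ⟨h1, h2, h3⟩ := hm x hx
        constructor
        · have hq1 := hδ1 x hx
          have hq2 := hδ2 x hx
          have hle : ev l x + γ ≤ min (ev q x) (ev u' x) := by
            apply le_min
            · linarith [min_le_left δ1 δ2]
            · linarith [min_le_right δ1 δ2]
          linarith
        · intro u hu
          rcases Finset.mem_cons.1 hu with rfl | hu
          · exact h2
          · exact lt_trans h1 ((hq x hx).2 u hu)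

/-- A polynomial strictly between two finite families on `[0,1]`. -/
lemma between (Lo Hi : Finset (ℚ[X])) (hLo : Lo.Nonempty) (hHi : Hi.Nonempty)
    (hband : ∀ l ∈ Lo, ∀ u ∈ Hi, ∀ x ∈ Icc (0:ℝ) 1, ev l x < ev u x) :
    ∃ q : ℚ[X], ∀ x ∈ Icc (0:ℝ) 1,
      (∀ l ∈ Lo, ev l x < ev q x) ∧ ∀ u ∈ Hi, ev q x < ev u x := by
  classical
  induction Lo using Finset.cons_induction with
  | empty => exact absurd hLo (by simp)
  | cons l' Lo hl' ih =>
      rcases Lo.eq_empty_or_nonempty with rfl | hne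
      · obtain ⟨q, hq⟩ := between_single l' Hi hHi (fun u hu => hband l' (by simp) u hu)
        refine ⟨q, fun x hx => ⟨fun l hl => ?_, (hq x hx).2⟩⟩
        rcases Finset.mem_cons.1 hl with rfl | hl
        · exact (hq x hx).1
        · simp at hl
      · obtain ⟨q₁, hq₁⟩ := ih hne (fun l hl => hband l (Finset.mem_cons_of_mem hl))
        obtain ⟨q₂, hq₂⟩ := between_single l' Hi hHi
          (fun u hu => hband l' (Finset.mem_cons_self _ _) u hu)
        have hcomb : ∃ δ : ℝ, 0 < δ ∧ ∀ u ∈ Hi, ∀ x ∈ Icc (0:ℝ) 1,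
            max (ev q₁ x) (ev q₂ x) + δ ≤ ev u x := by
          apply finset_pos_combine Hi
            (fun u δ => ∀ x ∈ Icc (0:ℝ) 1, max (ev q₁ x) (ev q₂ x) + δ ≤ ev u x)
          · intro u δ δ' h0' hle hQ x hx
            linarith [hQ x hx]
          · intro u hu
            obtain ⟨δ1, h10, h1⟩ := family_gap q₁ u (fun x hx => (hq₁ x hx).2 u hu)
            obtain ⟨δ2, h20, h2⟩ := family_gap q₂ u (fun x hx => (hq₂ x hx).2 u hu)
            refine ⟨min δ1 δ2, lt_min h10 h20, fun x hx => ?_⟩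
            rcases max_cases (ev q₁ x) (ev q₂ x) with ⟨hmx, _⟩ | ⟨hmx, _⟩ <;> rw [hmx]
            · linarith [min_le_left δ1 δ2, h1 x hx]
            · linarith [min_le_right δ1 δ2, h2 x hx]
        obtain ⟨δ, hδ0, hδ⟩ := hcomb
        obtain ⟨m, hm⟩ := max_approx q₁ q₂ δ hδ0
        refine ⟨m, fun x hx => ?_⟩
        obtain ⟨h1, h2, h3⟩ := hm x hx
        constructor
        · intro l hl
          rcases Finset.mem_cons.1 hl with rfl | hl
          · exact lt_trans ((hq₂ x hx).1) h2
          · exact lt_trans ((hq₁ x hx).1 l hl) h1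
        · intro u hu
          have := hδ u hu x hx
          linarith

lemma ev_one (x : ℝ) : ev 1 x = 1 := by simp [ev]

lemma ev_prod {α : Type*} (s : Finset α) (f : α → ℚ[X]) (x : ℝ) :
    ev (∏ i ∈ s, f i) x = ∏ i ∈ s, ev (f i) x := by
  rw [ev_eq_evh, map_prod]; rfl

/-- Bump polynomial with prescribed zeroes, unit height at `x₀`, concentrated near `x₀`. -/
lemma bump (x₀ : ℚ) (hx₀0 : 0 < x₀) (hx₀1 : x₀ < 1) (Z : Finset ℚ) (hZ : x₀ ∉ Z)
    (ρ ε δ : ℝ) (hρ : 0 < ρ) (hε : 0 < ε) (hδ : 0 < δ) :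
    ∃ W : ℚ[X], W.eval x₀ = 1 ∧ (∀ z ∈ Z, W.eval z = 0) ∧
      (∀ x ∈ Icc (0:ℝ) 1, 0 ≤ ev W x ∧ ev W x ≤ 1 + δ) ∧
      (∀ x ∈ Icc (0:ℝ) 1, ρ ≤ |x - (x₀:ℝ)| → ev W x ≤ ε) := by
  classical
  set R : ℚ[X] := ∏ z ∈ Z, (X - C z)^2 with hR
  set R₀ : ℚ := R.eval x₀ with hR₀
  have hR₀pos : 0 < R₀ := by
    rw [hR₀, hR, Polynomial.eval_prod]
    apply Finset.prod_pos
    intro z hz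
    have hne : x₀ - z ≠ 0 := sub_ne_zero.2 (fun h => hZ (h ▸ hz))
    simp only [Polynomial.eval_pow, Polynomial.eval_sub, Polynomial.eval_X, Polynomial.eval_C]
    positivity
  -- real facts about R
  have hRnonneg : ∀ x : ℝ, 0 ≤ ev R x := by
    intro x
    rw [hR, ev_prod]
    apply Finset.prod_nonneg
    intro z hz
    rw [ev_pow]
    positivity
  obtain ⟨MR, hMR0, hMRb⟩ := exists_bound R
  -- continuity of ev R at x₀
  have hcont := Metric.continuous_iff.mp (continuous_ev R) (x₀:ℝ) ((R₀:ℝ) * δ)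
    (by positivity)
  obtain ⟨ρc, hρc0, hρc⟩ := hcont
  set ρ₁ : ℝ := min (min ρ (1/2)) (ρc/2) with hρ₁
  have hρ₁0 : 0 < ρ₁ := by
    apply lt_min (lt_min hρ (by norm_num)) (by positivity)
  have hρ₁ρ : ρ₁ ≤ ρ := le_trans (min_le_left _ _) (min_le_left _ _)
  have hρ₁half : ρ₁ ≤ 1/2 := le_trans (min_le_left _ _) (min_le_right _ _)
  have hρ₁c : ρ₁ < ρc := lt_of_le_of_lt (min_le_right _ _) (by linarith)
  have hr1 : (1 - ρ₁^2 : ℝ) < 1 := by nlinarith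
  have hr0 : (0:ℝ) ≤ 1 - ρ₁^2 := by nlinarith
  set ε' : ℝ := min ε 1 with hε'
  have hε'0 : 0 < ε' := lt_min hε one_pos
  obtain ⟨N, hN⟩ := exists_pow_lt_of_lt_one
    (show (0:ℝ) < ε' * R₀ / MR by positivity) hr1
  set B : ℚ[X] := 1 - (X - C x₀)^2 with hB
  set W : ℚ[X] := B^N * R * C (1/R₀) with hW
  have hBx : ∀ x : ℝ, ev B x = 1 - (x - (x₀:ℝ))^2 := by
    intro x
    rw [hB, ev_sub, ev_one, ev_pow, ev_sub, ev_X, ev_C]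
  have hWx : ∀ x : ℝ, ev W x = (1 - (x - (x₀:ℝ))^2)^N * ev R x / (R₀:ℝ) := by
    intro x
    rw [hW, ev_mul, ev_mul, ev_C, ev_pow, hBx]
    push_cast
    field_simp
  have hBpos : ∀ x ∈ Icc (0:ℝ) 1, 0 < 1 - (x - (x₀:ℝ))^2 := by
    intro x hx
    obtain ⟨h0, h1⟩ := hx
    have c0 : (0:ℝ) < x₀ := by exact_mod_cast hx₀0
    have c1 : (x₀:ℝ) < 1 := by exact_mod_cast hx₀1
    nlinarith
  refine ⟨W, ?_, ?_, ?_, ?_⟩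
  · rw [hW]
    have hBev : eval x₀ B = 1 := by
      rw [hB]; simp
    simp only [Polynomial.eval_mul, Polynomial.eval_pow, hBev, one_pow, Polynomial.eval_C,
      ← hR₀]
    field_simp
  · intro z hz
    rw [hW]
    simp only [Polynomial.eval_mul]
    have : R.eval z = 0 := by
      rw [hR, Polynomial.eval_prod]
      apply Finset.prod_eq_zero hz
      simp
    rw [this]
    ring
  · intro x hx
    have hB01 : 0 < 1 - (x - (x₀:ℝ))^2 := hBpos x hx
    have hBle1 : 1 - (x - (x₀:ℝ))^2 ≤ 1 := by nlinarith [sq_nonneg (x - (x₀:ℝ))]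
    constructor
    · rw [hWx]
      have := hRnonneg x
      positivity
    · rw [hWx]
      rcases le_or_gt (|x - (x₀:ℝ)|) ρ₁ with hc | hc
      · -- near: use continuity bound
        have hd : dist x (x₀:ℝ) < ρc := by
          rw [Real.dist_eq]
          exact lt_of_le_of_lt hc hρ₁c
        have hRx : ev R x ≤ (R₀:ℝ) * (1 + δ) := by
          have h2 := hρc x hd
          rw [Real.dist_eq] at h2
          have hRx₀ : ev R (x₀:ℝ) = (R₀:ℝ) := by
            rw [ev_rat, ← hR₀]
          rw [hRx₀] at h2
          have := abs_lt.1 h2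
          nlinarith [hR₀pos]
        have hBN : (1 - (x - (x₀:ℝ))^2)^N ≤ 1 := pow_le_one₀ (le_of_lt hB01) hBle1
        have hR₀r : (0:ℝ) < (R₀:ℝ) := by exact_mod_cast hR₀pos
        rw [div_le_iff₀ hR₀r]
        calc (1 - (x - (x₀:ℝ))^2)^N * ev R x ≤ 1 * ((R₀:ℝ) * (1+δ)) := by
              apply mul_le_mul hBN _ (hRnonneg x) zero_le_one
              exact hRx
          _ = (1 + δ) * (R₀:ℝ) := by ring
      · -- far from x₀ : small
        have hfar : (1 - (x - (x₀:ℝ))^2)^N * ev R x / (R₀:ℝ) ≤ ε' := by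
          have hBb : 1 - (x - (x₀:ℝ))^2 ≤ 1 - ρ₁^2 := by
            have h2 : ρ₁^2 ≤ (x-(x₀:ℝ))^2 := by
              rw [← sq_abs (x - (x₀:ℝ))]
              exact pow_le_pow_left₀ (le_of_lt hρ₁0) (le_of_lt hc) 2
            linarith
          have hBN : (1 - (x - (x₀:ℝ))^2)^N ≤ (1 - ρ₁^2)^N :=
            pow_le_pow_left₀ (le_of_lt hB01) hBb N
          have hR₀r : (0:ℝ) < (R₀:ℝ) := by exact_mod_cast hR₀pos
          have hMR0' : (0:ℝ) < (MR:ℝ) := by exact_mod_cast hMR0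
          have hRb : ev R x ≤ (MR:ℝ) := le_trans (le_abs_self _) (hMRb x hx)
          rw [div_le_iff₀ hR₀r]
          calc (1 - (x - (x₀:ℝ))^2)^N * ev R x ≤ (1 - ρ₁^2)^N * (MR:ℝ) := by
                apply mul_le_mul hBN hRb (hRnonneg x) (by positivity)
            _ ≤ (ε' * (R₀:ℝ) / (MR:ℝ)) * (MR:ℝ) := by
                apply mul_le_mul_of_nonneg_right (le_of_lt hN) (le_of_lt hMR0')
            _ = ε' * (R₀:ℝ) := by field_simp
        have : ε' ≤ 1 := min_le_right _ _
        linarith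
  · intro x hx hfarx
    rw [hWx]
    -- same far bound
    have hB01 : 0 < 1 - (x - (x₀:ℝ))^2 := hBpos x hx
    have hBb : 1 - (x - (x₀:ℝ))^2 ≤ 1 - ρ₁^2 := by
      have h1 : ρ₁ ≤ |x - (x₀:ℝ)| := le_trans hρ₁ρ hfarx
      have h2 : ρ₁^2 ≤ (x-(x₀:ℝ))^2 := by
        rw [← sq_abs (x - (x₀:ℝ))]
        exact pow_le_pow_left₀ (le_of_lt hρ₁0) h1 2
      linarith
    have hBN : (1 - (x - (x₀:ℝ))^2)^N ≤ (1 - ρ₁^2)^N :=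
      pow_le_pow_left₀ (le_of_lt hB01) hBb N
    have hR₀r : (0:ℝ) < (R₀:ℝ) := by exact_mod_cast hR₀pos
    have hMR0' : (0:ℝ) < (MR:ℝ) := by exact_mod_cast hMR0
    have hRb : ev R x ≤ (MR:ℝ) := le_trans (le_abs_self _) (hMRb x hx)
    have : (1 - (x - (x₀:ℝ))^2)^N * ev R x / (R₀:ℝ) ≤ ε' := by
      rw [div_le_iff₀ hR₀r]
      calc (1 - (x - (x₀:ℝ))^2)^N * ev R x ≤ (1 - ρ₁^2)^N * (MR:ℝ) := by
            apply mul_le_mul hBN hRb (hRnonneg x) (by positivity)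
        _ ≤ (ε' * (R₀:ℝ) / (MR:ℝ)) * (MR:ℝ) := by
            apply mul_le_mul_of_nonneg_right (le_of_lt hN) (le_of_lt hMR0')
        _ = ε' * (R₀:ℝ) := by field_simp
    exact le_trans this (min_le_left _ _)

/-- Push a polynomial up above a value at one node, preserving the band and other nodes. -/
lemma push_up (Lo Hi : Finset (ℚ[X])) (hHi : Hi.Nonempty) (h₀ : ℚ[X])
    (hb1 : ∀ l ∈ Lo, ∀ x ∈ Icc (0:ℝ) 1, ev l x < ev h₀ x)
    (hb2 : ∀ u ∈ Hi, ∀ x ∈ Icc (0:ℝ) 1, ev h₀ x < ev u x)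
    (x₀ : ℚ) (hx₀0 : 0 < x₀) (hx₀1 : x₀ < 1) (α : ℚ)
    (hfeas : ∀ u ∈ Hi, (α:ℝ) < ev u (x₀:ℝ))
    (Z : Finset ℚ) (hZ : x₀ ∉ Z) :
    ∃ h : ℚ[X], (∀ l ∈ Lo, ∀ x ∈ Icc (0:ℝ) 1, ev l x < ev h x) ∧
      (∀ u ∈ Hi, ∀ x ∈ Icc (0:ℝ) 1, ev h x < ev u x) ∧
      α < h.eval x₀ ∧ (∀ z ∈ Z, h.eval z = h₀.eval z) := by
  classical
  set img := Hi.image (fun u => u.eval x₀) with himg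
  have himgne : img.Nonempty := hHi.image _
  set βm : ℚ := img.min' himgne with hβm
  have hβle : ∀ u ∈ Hi, βm ≤ u.eval x₀ := fun u hu =>
    Finset.min'_le _ _ (Finset.mem_image_of_mem _ hu)
  have hβmem : ∃ u₀ ∈ Hi, βm = u₀.eval x₀ := by
    have hmm := Finset.min'_mem img himgne
    obtain ⟨u₀, hu₀, heq⟩ := Finset.mem_image.1 hmm
    exact ⟨u₀, hu₀, heq.symm⟩
  have hαβ : α < βm := by
    obtain ⟨u₀, hu₀, heq⟩ := hβmem
    have := hfeas u₀ hu₀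
    rw [ev_rat] at this
    have : (α:ℝ) < ((u₀.eval x₀ : ℚ):ℝ) := this
    rw [heq]
    exact_mod_cast this
  set Tq : ℚ := (α + βm)/2 with hTq
  have hαT : α < Tq := by rw [hTq]; linarith
  have hTβ : Tq < βm := by rw [hTq]; linarith
  set c : ℚ := Tq - h₀.eval x₀ with hc
  rcases le_or_gt c 0 with hc0 | hc0
  · exact ⟨h₀, hb1, hb2, by rw [hc] at hc0; linarith, fun z hz => rfl⟩
  -- main case : c > 0
  have hcr : (0:ℝ) < (c:ℝ) := by exact_mod_cast hc0
  set g₀ : ℝ := ((βm:ℝ) - (α:ℝ))/2 with hg₀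
  have hg₀0 : 0 < g₀ := by
    have : (α:ℝ) < (βm:ℝ) := by exact_mod_cast hαβ
    rw [hg₀]; linarith
  -- at x₀ each u exceeds h₀ by at least g₀ + c
  have hatx₀ : ∀ u ∈ Hi, g₀ + (c:ℝ) ≤ ev u (x₀:ℝ) - ev h₀ (x₀:ℝ) := by
    intro u hu
    rw [ev_rat, ev_rat]
    have h1 : (βm:ℝ) ≤ ((u.eval x₀:ℚ):ℝ) := by exact_mod_cast hβle u hu
    have h2 : ((h₀.eval x₀:ℚ):ℝ) = (Tq:ℝ) - (c:ℝ) := by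
      have : h₀.eval x₀ = Tq - c := by rw [hc]; ring
      rw [this]; push_cast; ring
    rw [h2]
    have h3 : (Tq:ℝ) = ((α:ℝ) + (βm:ℝ))/2 := by rw [hTq]; push_cast; ring
    rw [h3, hg₀]
    linarith
  -- global margin
  obtain ⟨m, hm0, hm⟩ := finset_pos_combine Hi
    (fun u δ => ∀ x ∈ Icc (0:ℝ) 1, δ ≤ ev u x - ev h₀ x)
    (fun u δ δ' h0' hle hQ x hx => le_trans hle (hQ x hx))
    (fun u hu => by
      obtain ⟨δ, hδ0, hδ⟩ := exists_pos_lb (u - h₀) (fun x hx => by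
        rw [ev_sub]; linarith [hb2 u hu x hx])
      exact ⟨δ, hδ0, fun x hx => by have := hδ x hx; rw [ev_sub] at this; linarith⟩)
  -- continuity radius
  obtain ⟨ρ, hρ0, hρ⟩ := finset_pos_combine Hi
    (fun u ρ => ∀ x : ℝ, |x - (x₀:ℝ)| ≤ ρ →
      (ev u (x₀:ℝ) - ev h₀ (x₀:ℝ)) - g₀/2 < ev u x - ev h₀ x)
    (fun u δ δ' h0' hle hQ x hx => hQ x (le_trans hx hle))
    (fun u hu => by
      obtain ⟨d, hd0, hd⟩ := Metric.continuous_iff.mp (continuous_ev (u - h₀)) (x₀:ℝ)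
        (g₀/2) (by linarith)
      refine ⟨d/2, by linarith, fun x hx => ?_⟩
      have := hd x (by rw [Real.dist_eq]; linarith)
      rw [Real.dist_eq] at this
      have h1 := abs_lt.1 this
      rw [ev_sub, ev_sub] at h1
      linarith [h1.1])
  obtain ⟨W, hW1, hWZ, hWb, hWfar⟩ := bump x₀ hx₀0 hx₀1 Z hZ ρ (m/(2*(c:ℝ)))
    (g₀/(2*(c:ℝ))) hρ0 (by positivity) (by positivity)
  set h : ℚ[X] := h₀ + C c * W with hh
  have hevh : ∀ x : ℝ, ev h x = ev h₀ x + (c:ℝ) * ev W x := by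
    intro x; rw [hh, ev_add, ev_mul, ev_C]
  refine ⟨h, ?_, ?_, ?_, ?_⟩
  · intro l hl x hx
    have := hb1 l hl x hx
    have hW0 := (hWb x hx).1
    rw [hevh]
    nlinarith
  · intro u hu x hx
    rw [hevh]
    rcases le_or_gt (|x - (x₀:ℝ)|) ρ with hnear | hfar
    · have h1 := hρ u hu x hnear
      have h2 := hatx₀ u hu
      have h3 := (hWb x hx).2
      have h4 := (hWb x hx).1
      have hkey : (c:ℝ) * ev W x ≤ (c:ℝ) * (1 + g₀/(2*(c:ℝ))) :=
        mul_le_mul_of_nonneg_left h3 (le_of_lt hcr)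
      have hexp : (c:ℝ) * (1 + g₀/(2*(c:ℝ))) = (c:ℝ) + g₀/2 := by
        field_simp
      rw [hexp] at hkey
      linarith
    · have h1 := hm u hu x hx
      have h2 := hWfar x hx (le_of_lt hfar)
      have hkey : (c:ℝ) * ev W x ≤ (c:ℝ) * (m/(2*(c:ℝ))) :=
        mul_le_mul_of_nonneg_left h2 (le_of_lt hcr)
      have hexp : (c:ℝ) * (m/(2*(c:ℝ))) = m/2 := by field_simp
      rw [hexp] at hkey
      linarith
  · have : h.eval x₀ = h₀.eval x₀ + c * W.eval x₀ := by
      rw [hh]; simp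
    rw [this, hW1, mul_one, hc]
    linarith
  · intro z hz
    have : h.eval z = h₀.eval z + c * W.eval z := by rw [hh]; simp
    rw [this, hWZ z hz, mul_zero, add_zero]

/-- Push a polynomial down below a value at one node. -/
lemma push_down (Lo Hi : Finset (ℚ[X])) (hLo : Lo.Nonempty) (h₀ : ℚ[X])
    (hb1 : ∀ l ∈ Lo, ∀ x ∈ Icc (0:ℝ) 1, ev l x < ev h₀ x)
    (hb2 : ∀ u ∈ Hi, ∀ x ∈ Icc (0:ℝ) 1, ev h₀ x < ev u x)
    (x₀ : ℚ) (hx₀0 : 0 < x₀) (hx₀1 : x₀ < 1) (β : ℚ)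
    (hfeas : ∀ l ∈ Lo, ev l (x₀:ℝ) < (β:ℝ))
    (Z : Finset ℚ) (hZ : x₀ ∉ Z) :
    ∃ h : ℚ[X], (∀ l ∈ Lo, ∀ x ∈ Icc (0:ℝ) 1, ev l x < ev h x) ∧
      (∀ u ∈ Hi, ∀ x ∈ Icc (0:ℝ) 1, ev h x < ev u x) ∧
      h.eval x₀ < β ∧ (∀ z ∈ Z, h.eval z = h₀.eval z) := by
  classical
  obtain ⟨h', hb1', hb2', hval, hZ'⟩ := push_up (Hi.image (fun p => -p))
    (Lo.image (fun p => -p)) (hLo.image _) (-h₀)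
    (fun l hl x hx => by
      obtain ⟨u, hu, rfl⟩ := Finset.mem_image.1 hl
      rw [ev_neg, ev_neg]
      have := hb2 u hu x hx
      linarith)
    (fun u hu x hx => by
      obtain ⟨l, hl, rfl⟩ := Finset.mem_image.1 hu
      rw [ev_neg, ev_neg]
      have := hb1 l hl x hx
      linarith)
    x₀ hx₀0 hx₀1 (-β)
    (fun u hu => by
      obtain ⟨l, hl, rfl⟩ := Finset.mem_image.1 hu
      rw [ev_neg]
      have := hfeas l hl
      push_cast
      linarith)
    Z hZ
  refine ⟨-h', ?_, ?_, ?_, ?_⟩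
  · intro l hl x hx
    have := hb2' (-l) (Finset.mem_image_of_mem _ hl) x hx
    rw [ev_neg] at this
    rw [ev_neg]
    linarith
  · intro u hu x hx
    have := hb1' (-u) (Finset.mem_image_of_mem _ hu) x hx
    rw [ev_neg] at this
    rw [ev_neg]
    linarith
  · rw [Polynomial.eval_neg]
    linarith
  · intro z hz
    have h1 := hZ' z hz
    rw [Polynomial.eval_neg] at h1
    rw [Polynomial.eval_neg, h1]
    ring

/-- Node-constraint data: `(x, true, a)` means value `> a` at `x`; `(x, false, b)` means `< b`. -/
def specOK (Lo Hi : Finset (ℚ[X])) (s : ℚ × Bool × ℚ) : Prop :=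
  0 < s.1 ∧ s.1 < 1 ∧
    (if s.2.1 then ∀ u ∈ Hi, ((s.2.2 : ℚ):ℝ) < ev u ((s.1:ℚ):ℝ)
     else ∀ l ∈ Lo, ev l ((s.1:ℚ):ℝ) < ((s.2.2 : ℚ):ℝ))

def specSat (h : ℚ[X]) (s : ℚ × Bool × ℚ) : Prop :=
  if s.2.1 then s.2.2 < h.eval s.1 else h.eval s.1 < s.2.2

/-- Main interpolation lemma: a polynomial strictly inside the band satisfying
all node constraints. -/
lemma satisfy_specs (Lo Hi : Finset (ℚ[X])) (hLo : Lo.Nonempty) (hHi : Hi.Nonempty)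
    (hband : ∀ l ∈ Lo, ∀ u ∈ Hi, ∀ x ∈ Icc (0:ℝ) 1, ev l x < ev u x)
    (specs : List (ℚ × Bool × ℚ))
    (hnodup : (specs.map (fun s => s.1)).Nodup)
    (hok : ∀ s ∈ specs, specOK Lo Hi s) :
    ∃ h : ℚ[X], (∀ l ∈ Lo, ∀ x ∈ Icc (0:ℝ) 1, ev l x < ev h x) ∧
      (∀ u ∈ Hi, ∀ x ∈ Icc (0:ℝ) 1, ev h x < ev u x) ∧
      ∀ s ∈ specs, specSat h s := by
  classical
  induction specs with
  | nil =>
      obtain ⟨q, hq⟩ := between Lo Hi hLo hHi hband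
      exact ⟨q, fun l hl x hx => (hq x hx).1 l hl, fun u hu x hx => (hq x hx).2 u hu,
        fun s hs => absurd hs List.not_mem_nil⟩
  | cons s rest ih =>
      rw [List.map_cons, List.nodup_cons] at hnodup
      obtain ⟨hs_not, hnodup'⟩ := hnodup
      obtain ⟨h₀, h₀1, h₀2, h₀3⟩ := ih hnodup' (fun t ht => hok t (List.mem_cons_of_mem s ht))
      obtain ⟨hx0, hx1, hcond⟩ := hok s List.mem_cons_self
      set Z : Finset ℚ := (rest.map (fun t => t.1)).toFinset with hZdef
      have hxZ : s.1 ∉ Z := by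
        rw [hZdef]
        intro hmem
        exact hs_not (List.mem_toFinset.1 hmem)
      cases hb : s.2.1 with
      | true =>
          rw [hb] at hcond
          simp only [if_true] at hcond
          obtain ⟨h, hh1, hh2, hh3, hh4⟩ := push_up Lo Hi hHi h₀ h₀1 h₀2 s.1 hx0 hx1
            s.2.2 hcond Z hxZ
          refine ⟨h, hh1, hh2, fun t ht => ?_⟩
          rcases List.mem_cons.1 ht with rfl | ht
          · unfold specSat
            rw [hb]
            simpa using hh3
          · have hzt : t.1 ∈ Z := by
              rw [hZdef]
              exact List.mem_toFinset.2 (List.mem_map_of_mem ht)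
            have heq := hh4 t.1 hzt
            have := h₀3 t ht
            unfold specSat at *
            rw [heq]
            exact this
      | false =>
          rw [hb] at hcond
          simp only [Bool.false_eq_true, if_false] at hcond
          obtain ⟨h, hh1, hh2, hh3, hh4⟩ := push_down Lo Hi hLo h₀ h₀1 h₀2 s.1 hx0 hx1
            s.2.2 hcond Z hxZ
          refine ⟨h, hh1, hh2, fun t ht => ?_⟩
          rcases List.mem_cons.1 ht with rfl | ht
          · unfold specSat
            rw [hb]
            simp only [Bool.false_eq_true, if_false]
            exact hh3
          · have hzt : t.1 ∈ Z := by
              rw [hZdef]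
              exact List.mem_toFinset.2 (List.mem_map_of_mem ht)
            have heq := hh4 t.1 hzt
            have := h₀3 t ht
            unfold specSat at *
            rw [heq]
            exact this

/-- A rational point inside an open set, avoiding a finite set. -/
lemma rat_in_open_avoid (O : Set ℝ) (hO : IsOpen O) (hne : O.Nonempty) (S : Finset ℚ) :
    ∃ q : ℚ, (q:ℝ) ∈ O ∧ q ∉ S := by
  obtain ⟨x, hx⟩ := hne
  obtain ⟨r, hr0, hball⟩ := Metric.isOpen_iff.1 hO x hx
  obtain ⟨q, h1, h2, h3⟩ := rat_avoid (x - r) S (x + r) (by linarith)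
  refine ⟨q, hball ?_, h3⟩
  rw [Real.ball_eq_Ioo]
  exact ⟨h1, h2⟩

/-- Choose distinct rational points, one in each of finitely many open sets. -/
lemma choose_points {α : Type*} (s : Finset α) (O : α → Set ℝ)
    (hO : ∀ a ∈ s, IsOpen (O a) ∧ (O a).Nonempty) :
    ∃ pt : α → ℚ, Set.InjOn pt s ∧ ∀ a ∈ s, ((pt a : ℝ) ∈ O a) := by
  classical
  induction s using Finset.cons_induction with
  | empty => exact ⟨fun _ => 0, by simp [Set.InjOn], by simp⟩
  | cons a s ha ih =>
      obtain ⟨pt, hinj, hmem⟩ := ih (fun b hb => hO b (Finset.mem_cons_of_mem hb))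
      obtain ⟨hOa, hOane⟩ := hO a (Finset.mem_cons_self a s)
      obtain ⟨q, hq1, hq2⟩ := rat_in_open_avoid (O a) hOa hOane (s.image pt)
      refine ⟨Function.update pt a q, ?_, ?_⟩
      · intro b hb c hc heq
        rcases Finset.mem_cons.1 (Finset.mem_coe.1 hb) with rfl | hb' <;>
          rcases Finset.mem_cons.1 (Finset.mem_coe.1 hc) with rfl | hc'
        · rfl
        · rw [Function.update_self, Function.update_of_ne (by rintro rfl; exact ha hc')] at heq
          exact absurd (Finset.mem_image_of_mem pt hc') (heq ▸ hq2)
        · rw [Function.update_self, Function.update_of_ne (by rintro rfl; exact ha hb')] at heq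
          exact absurd (Finset.mem_image_of_mem pt hb') (heq ▸ hq2)
        · rw [Function.update_of_ne (by rintro rfl; exact ha hb'),
            Function.update_of_ne (by rintro rfl; exact ha hc')] at heq
          exact hinj (Finset.mem_coe.2 hb') (Finset.mem_coe.2 hc') heq
      · intro b hb
        rcases Finset.mem_cons.1 hb with rfl | hb'
        · rw [Function.update_self]; exact hq1
        · rw [Function.update_of_ne (by rintro rfl; exact ha hb')]
          exact hmem b hb'

/-- Uniform rational bound for a finite family. -/
lemma exists_bound_family (s : Finset ℕ) (g : ℕ → ℚ[X]) :
    ∃ M : ℚ, 0 < M ∧ ∀ i ∈ s, ∀ x ∈ Icc (0:ℝ) 1, |ev (g i) x| ≤ (M:ℝ) := by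
  classical
  induction s using Finset.cons_induction with
  | empty => exact ⟨1, one_pos, by simp⟩
  | cons a s ha ih =>
      obtain ⟨M₁, hM₁0, hM₁⟩ := exists_bound (g a)
      obtain ⟨M₂, hM₂0, hM₂⟩ := ih
      refine ⟨max M₁ M₂, lt_max_of_lt_left hM₁0, fun i hi x hx => ?_⟩
      rcases Finset.mem_cons.1 hi with rfl | hi
      · exact le_trans (hM₁ x hx) (by exact_mod_cast le_max_left M₁ M₂)
      · exact le_trans (hM₂ i hi x hx) (by exact_mod_cast le_max_right M₁ M₂)

lemma fmax_le (s : Finset ℚ) (hs : s.Nonempty) (a : ℚ) (ha : a ∈ s) :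
    a ≤ WithBot.unbotD 0 s.max := by
  rw [← Finset.coe_max' hs, WithBot.unbotD_coe]
  exact Finset.le_max' s a ha

lemma fmax_mem (s : Finset ℚ) (hs : s.Nonempty) : WithBot.unbotD 0 s.max ∈ s := by
  rw [← Finset.coe_max' hs, WithBot.unbotD_coe]
  exact Finset.max'_mem s hs

lemma fmin_le (s : Finset ℚ) (hs : s.Nonempty) (a : ℚ) (ha : a ∈ s) :
    WithTop.untopD 0 s.min ≤ a := by
  rw [← Finset.coe_min' hs, WithTop.untopD_coe]
  exact Finset.min'_le s a ha

lemma fmin_mem (s : Finset ℚ) (hs : s.Nonempty) : WithTop.untopD 0 s.min ∈ s := by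
  rw [← Finset.coe_min' hs, WithTop.untopD_coe]
  exact Finset.min'_mem s hs

section Order

variable (R : ℕ → ℕ → Prop)

def SInv (n : ℕ) (g : ℕ → ℚ[X]) : Prop :=
  ∀ i j, i < n → j < n → R i j → i ≠ j → ∀ x ∈ Icc (0:ℝ) 1, ev (g i) x < ev (g j) x

def Sep (n : ℕ) (g : ℕ → ℚ[X]) : Prop :=
  ∀ A B : Finset ℕ, (∀ a ∈ A, a < n) → (∀ b ∈ B, b < n) →
    (∀ a ∈ A, ∀ b ∈ B, ¬ R b a) →
    ∃ x : ℝ, x ∈ Ioo (0:ℝ) 1 ∧ ∀ a ∈ A, ∀ b ∈ B, ev (g a) x < ev (g b) x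

/-- The key extension lemma. -/
lemma extend (hrefl : ∀ i, R i i) (htrans : ∀ i j k, R i j → R j k → R i k)
    (hanti : ∀ i j, R i j → R j i → i = j)
    (n : ℕ) (g : ℕ → ℚ[X]) (hS : SInv R n g) (hSep : Sep R n g) :
    ∃ h : ℚ[X], SInv R (n+1) (Function.update g n h) ∧
      Sep R (n+1) (Function.update g n h) := by
  classical
  set LoIdx : Finset ℕ := (Finset.range n).filter (fun i => R i n) with hLoIdx
  set UpIdx : Finset ℕ := (Finset.range n).filter (fun i => R n i) with hUpIdx
  have hLoIdx_lt : ∀ i ∈ LoIdx, i < n := fun i hi =>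
    Finset.mem_range.1 (Finset.mem_of_mem_filter i hi)
  have hUpIdx_lt : ∀ i ∈ UpIdx, i < n := fun i hi =>
    Finset.mem_range.1 (Finset.mem_of_mem_filter i hi)
  have hLoIdx_R : ∀ i ∈ LoIdx, R i n := fun i hi => (Finset.mem_filter.1 hi).2
  have hUpIdx_R : ∀ i ∈ UpIdx, R n i := fun i hi => (Finset.mem_filter.1 hi).2
  obtain ⟨M, hM0, hMb⟩ := exists_bound_family (Finset.range n) g
  set lo : ℚ[X] := C (-(M+1)) with hlo
  set hi : ℚ[X] := C (M+1) with hhi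
  set Lo : Finset ℚ[X] := LoIdx.image g ∪ {lo} with hLo
  set Hi : Finset ℚ[X] := UpIdx.image g ∪ {hi} with hHi
  have hLone : Lo.Nonempty := ⟨lo, by rw [hLo]; simp⟩
  have hHine : Hi.Nonempty := ⟨hi, by rw [hHi]; simp⟩
  have hlo_lt : ∀ i ∈ Finset.range n, ∀ x ∈ Icc (0:ℝ) 1, ev lo x < ev (g i) x := by
    intro i hi' x hx
    rw [hlo, ev_C]
    have := hMb i hi' x hx
    have h1 := abs_le.1 this
    push_cast
    linarith [h1.1]
  have hhi_gt : ∀ i ∈ Finset.range n, ∀ x ∈ Icc (0:ℝ) 1, ev (g i) x < ev hi x := by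
    intro i hi' x hx
    rw [hhi, ev_C]
    have := hMb i hi' x hx
    have h1 := abs_le.1 this
    push_cast
    linarith [h1.2]
  have hband : ∀ l ∈ Lo, ∀ u ∈ Hi, ∀ x ∈ Icc (0:ℝ) 1, ev l x < ev u x := by
    intro l hl u hu x hx
    rw [hLo] at hl; rw [hHi] at hu
    rcases Finset.mem_union.1 hl with hl' | hl' <;>
      rcases Finset.mem_union.1 hu with hu' | hu'
    · obtain ⟨i, hiIdx, rfl⟩ := Finset.mem_image.1 hl'
      obtain ⟨j, hjIdx, rfl⟩ := Finset.mem_image.1 hu'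
      have hij : i ≠ j := by
        rintro rfl
        have h1 := hLoIdx_R i hiIdx
        have h2 := hUpIdx_R i hjIdx
        have := hanti i n h1 h2
        exact absurd this (Nat.ne_of_lt (hLoIdx_lt i hiIdx))
      exact hS i j (hLoIdx_lt i hiIdx) (hUpIdx_lt j hjIdx)
        (htrans i n j (hLoIdx_R i hiIdx) (hUpIdx_R j hjIdx)) hij x hx
    · obtain ⟨i, hiIdx, rfl⟩ := Finset.mem_image.1 hl'
      rw [Finset.mem_singleton.1 hu']
      exact hhi_gt i (Finset.mem_range.2 (hLoIdx_lt i hiIdx)) x hx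
    · obtain ⟨j, hjIdx, rfl⟩ := Finset.mem_image.1 hu'
      rw [Finset.mem_singleton.1 hl']
      exact hlo_lt j (Finset.mem_range.2 (hUpIdx_lt j hjIdx)) x hx
    · rw [Finset.mem_singleton.1 hl', Finset.mem_singleton.1 hu', hlo, hhi, ev_C, ev_C]
      push_cast
      have : (0:ℝ) < (M:ℝ) := by exact_mod_cast hM0
      linarith
  -- configurations
  set CC : Finset (Bool × Finset ℕ × Finset ℕ) :=
    (((Finset.range n).powerset ×ˢ (Finset.range n).powerset).filter
      (fun c => c.1.Nonempty ∧ (∀ a ∈ c.1, ¬ R n a) ∧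
        (∀ a ∈ c.1, ∀ b ∈ c.2, ¬ R b a))).image (fun c => (true, c)) ∪
    (((Finset.range n).powerset ×ˢ (Finset.range n).powerset).filter
      (fun c => c.2.Nonempty ∧ (∀ b ∈ c.2, ¬ R b n) ∧
        (∀ a ∈ c.1, ∀ b ∈ c.2, ¬ R b a))).image (fun c => (false, c)) with hCC
  set Aeff : Bool × Finset ℕ × Finset ℕ → Finset ℕ :=
    fun c => if c.1 then c.2.1 else c.2.1 ∪ LoIdx with hAeff
  set Beff : Bool × Finset ℕ × Finset ℕ → Finset ℕ :=
    fun c => if c.1 then c.2.2 ∪ UpIdx else c.2.2 with hBeff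
  set O : Bool × Finset ℕ × Finset ℕ → Set ℝ :=
    fun c => Ioo (0:ℝ) 1 ∩ ⋂ a ∈ Aeff c, ⋂ b ∈ Beff c,
      {x : ℝ | ev (g a) x < ev (g b) x} with hO
  -- membership facts for CC
  have hCCmem : ∀ c ∈ CC,
      (Aeff c ⊆ Finset.range n) ∧ (Beff c ⊆ Finset.range n) ∧
      (∀ a ∈ Aeff c, ∀ b ∈ Beff c, ¬ R b a) := by
    intro c hc
    rw [hCC] at hc
    rcases Finset.mem_union.1 hc with hc' | hc'
    · obtain ⟨d, hd, rfl⟩ := Finset.mem_image.1 hc'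
      obtain ⟨hdmem, hdP⟩ := Finset.mem_filter.1 hd
      obtain ⟨hne, hnA, hsep⟩ := hdP
      rw [Finset.mem_product] at hdmem
      have hA : d.1 ⊆ Finset.range n := Finset.mem_powerset.1 hdmem.1
      have hB : d.2 ⊆ Finset.range n := Finset.mem_powerset.1 hdmem.2
      refine ⟨?_, ?_, ?_⟩
      · show (if true then d.1 else d.1 ∪ LoIdx) ⊆ _
        simpa using hA
      · show (if true then d.2 ∪ UpIdx else d.2) ⊆ _
        simp only [if_true]
        exact Finset.union_subset hB (fun i hi' => Finset.mem_range.2 (hUpIdx_lt i hi'))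
      · intro a ha b hb
        simp only [hAeff, hBeff, if_true] at ha hb
        rcases Finset.mem_union.1 hb with hb' | hb'
        · exact hsep a ha b hb'
        · intro hRba
          exact hnA a ha (htrans n b a (hUpIdx_R b hb') hRba)
    · obtain ⟨d, hd, rfl⟩ := Finset.mem_image.1 hc'
      obtain ⟨hdmem, hdP⟩ := Finset.mem_filter.1 hd
      obtain ⟨hne, hnB, hsep⟩ := hdP
      rw [Finset.mem_product] at hdmem
      have hA : d.1 ⊆ Finset.range n := Finset.mem_powerset.1 hdmem.1
      have hB : d.2 ⊆ Finset.range n := Finset.mem_powerset.1 hdmem.2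
      refine ⟨?_, ?_, ?_⟩
      · show (if false then d.1 else d.1 ∪ LoIdx) ⊆ _
        simp only [Bool.false_eq_true, if_false]
        exact Finset.union_subset hA (fun i hi' => Finset.mem_range.2 (hLoIdx_lt i hi'))
      · show (if false then d.2 ∪ UpIdx else d.2) ⊆ _
        simp only [Bool.false_eq_true, if_false]
        exact hB
      · intro a ha b hb
        simp only [hAeff, hBeff, Bool.false_eq_true, if_false] at ha hb
        rcases Finset.mem_union.1 ha with ha' | ha'
        · exact hsep a ha' b hb
        · intro hRba
          exact hnB b hb (htrans b a n hRba (hLoIdx_R a ha'))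
  have hOopen : ∀ c ∈ CC, IsOpen (O c) ∧ (O c).Nonempty := by
    intro c hc
    constructor
    · rw [hO]
      apply IsOpen.inter isOpen_Ioo
      apply isOpen_biInter_finset
      intro a ha
      apply isOpen_biInter_finset
      intro b hb
      exact isOpen_lt (continuous_ev (g a)) (continuous_ev (g b))
    · obtain ⟨hAsub, hBsub, hsep⟩ := hCCmem c hc
      obtain ⟨x, hx1, hx2⟩ := hSep (Aeff c) (Beff c)
        (fun a ha => Finset.mem_range.1 (hAsub ha))
        (fun b hb => Finset.mem_range.1 (hBsub hb)) hsep
      refine ⟨x, ?_⟩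
      rw [hO]
      refine ⟨hx1, ?_⟩
      simp only [Set.mem_iInter]
      intro a ha b hb
      exact hx2 a ha b hb
  obtain ⟨pt, hptinj, hptmem⟩ := choose_points CC O hOopen
  -- bounds used in specs
  set bd : Bool × Finset ℕ × Finset ℕ → ℚ := fun c =>
    if c.1 then (WithBot.unbotD 0 (c.2.1.image (fun a => (g a).eval (pt c))).max)
    else (WithTop.untopD 0 (c.2.2.image (fun b => (g b).eval (pt c))).min) with hbd
  set specs : List (ℚ × Bool × ℚ) := CC.toList.map (fun c => (pt c, c.1, bd c)) with hspecs
  -- case analysis on configurations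
  have hCCelim : ∀ c ∈ CC,
      (c.1 = true ∧ c.2.1.Nonempty ∧ c.2.1 ⊆ Finset.range n ∧ c.2.2 ⊆ Finset.range n) ∨
      (c.1 = false ∧ c.2.2.Nonempty ∧ c.2.1 ⊆ Finset.range n ∧ c.2.2 ⊆ Finset.range n) := by
    intro c hc
    rw [hCC] at hc
    rcases Finset.mem_union.1 hc with hc' | hc'
    · obtain ⟨d, hd, rfl⟩ := Finset.mem_image.1 hc'
      obtain ⟨hdmem, hdP⟩ := Finset.mem_filter.1 hd
      rw [Finset.mem_product] at hdmem
      exact Or.inl ⟨rfl, hdP.1, Finset.mem_powerset.1 hdmem.1, Finset.mem_powerset.1 hdmem.2⟩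
    · obtain ⟨d, hd, rfl⟩ := Finset.mem_image.1 hc'
      obtain ⟨hdmem, hdP⟩ := Finset.mem_filter.1 hd
      rw [Finset.mem_product] at hdmem
      exact Or.inr ⟨rfl, hdP.1, Finset.mem_powerset.1 hdmem.1, Finset.mem_powerset.1 hdmem.2⟩
  -- unpack O-membership
  have hptO : ∀ c ∈ CC, ((pt c : ℝ) ∈ Ioo (0:ℝ) 1) ∧
      ∀ a ∈ Aeff c, ∀ b ∈ Beff c, ev (g a) (pt c) < ev (g b) (pt c) := by
    intro c hc
    have := hptmem c hc
    rw [hO] at this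
    obtain ⟨h1, h2⟩ := this
    refine ⟨h1, fun a ha b hb => ?_⟩
    simp only [Set.mem_iInter] at h2
    exact h2 a ha b hb
  -- nodup of nodes
  have hnodup : (specs.map (fun s => s.1)).Nodup := by
    rw [hspecs, List.map_map]
    have : ((fun s : ℚ × Bool × ℚ => s.1) ∘ (fun c => (pt c, c.1, bd c))) = pt := rfl
    rw [this]
    apply List.Nodup.map_on _ (Finset.nodup_toList CC)
    intro a ha b hb heq
    exact hptinj (Finset.mem_coe.2 (Finset.mem_toList.1 ha))
      (Finset.mem_coe.2 (Finset.mem_toList.1 hb)) heq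
  -- each spec is feasible
  have hok : ∀ s ∈ specs, specOK Lo Hi s := by
    intro s hs
    rw [hspecs] at hs
    obtain ⟨c, hcl, rfl⟩ := List.mem_map.1 hs
    have hc : c ∈ CC := Finset.mem_toList.1 hcl
    obtain ⟨hIoo, hOrd⟩ := hptO c hc
    obtain ⟨h0, h1⟩ := hIoo
    refine ⟨by exact_mod_cast h0, by exact_mod_cast h1, ?_⟩
    show (if c.1 then _ else _)
    rcases hCCelim c hc with ⟨hc1, hne, hsubA, hsubB⟩ | ⟨hc1, hne, hsubA, hsubB⟩
    · rw [hc1]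
      simp only [if_true]
      intro u hu
      -- bd c = max of evals over c.2.1
      have hbdc : bd c = (WithBot.unbotD 0 (c.2.1.image (fun a => (g a).eval (pt c))).max) := by
        simp only [hbd]; rw [hc1]; simp
      have himgne : (c.2.1.image (fun a => (g a).eval (pt c))).Nonempty := hne.image _
      have hmem := fmax_mem _ himgne
      obtain ⟨a₀, ha₀, heq⟩ := Finset.mem_image.1 hmem
      have hbdev : ((bd c : ℚ):ℝ) = ev (g a₀) ((pt c : ℚ):ℝ) := by
        rw [hbdc, ← heq, ev_rat]
      rw [hbdev]
      have ha₀A : a₀ ∈ Aeff c := by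
        simp only [hAeff, hc1, if_true]; exact ha₀
      rw [hHi] at hu
      rcases Finset.mem_union.1 hu with hu' | hu'
      · obtain ⟨j, hjIdx, rfl⟩ := Finset.mem_image.1 hu'
        have hjB : j ∈ Beff c := by
          simp only [hBeff, hc1, if_true]
          exact Finset.mem_union_right _ hjIdx
        exact hOrd a₀ ha₀A j hjB
      · rw [Finset.mem_singleton.1 hu']
        have hIcc : ((pt c : ℚ):ℝ) ∈ Icc (0:ℝ) 1 := ⟨le_of_lt h0, le_of_lt h1⟩
        have := hMb a₀ (hsubA ha₀) _ hIcc
        have h2 := (abs_le.1 this).2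
        rw [hhi, ev_C]
        push_cast
        linarith
    · rw [hc1]
      simp only [Bool.false_eq_true, if_false]
      intro l hl
      have hbdc : bd c = (WithTop.untopD 0 (c.2.2.image (fun b => (g b).eval (pt c))).min) := by
        simp only [hbd]; rw [hc1]; simp
      have himgne : (c.2.2.image (fun b => (g b).eval (pt c))).Nonempty := hne.image _
      have hmem := fmin_mem _ himgne
      obtain ⟨b₀, hb₀, heq⟩ := Finset.mem_image.1 hmem
      have hbdev : ((bd c : ℚ):ℝ) = ev (g b₀) ((pt c : ℚ):ℝ) := by
        rw [hbdc, ← heq, ev_rat]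
      rw [hbdev]
      have hb₀B : b₀ ∈ Beff c := by
        simp only [hBeff, hc1, Bool.false_eq_true, if_false]; exact hb₀
      rw [hLo] at hl
      rcases Finset.mem_union.1 hl with hl' | hl'
      · obtain ⟨j, hjIdx, rfl⟩ := Finset.mem_image.1 hl'
        have hjA : j ∈ Aeff c := by
          simp only [hAeff, hc1, Bool.false_eq_true, if_false]
          exact Finset.mem_union_right _ hjIdx
        exact hOrd j hjA b₀ hb₀B
      · rw [Finset.mem_singleton.1 hl']
        have hIcc : ((pt c : ℚ):ℝ) ∈ Icc (0:ℝ) 1 := ⟨le_of_lt h0, le_of_lt h1⟩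
        have := hMb b₀ (hsubB hb₀) _ hIcc
        have h2 := (abs_le.1 this).1
        rw [hlo, ev_C]
        push_cast
        linarith
  obtain ⟨h, hh1, hh2, hh3⟩ := satisfy_specs Lo Hi hLone hHine hband specs hnodup hok
  have hg'n : Function.update g n h n = h := Function.update_self n h g
  have hg'i : ∀ i, i ≠ n → Function.update g n h i = g i :=
    fun i hi' => Function.update_of_ne hi' h g
  -- spec satisfaction accessor
  have hsat : ∀ c ∈ CC, specSat h (pt c, c.1, bd c) := by
    intro c hc
    apply hh3
    rw [hspecs]
    exact List.mem_map.2 ⟨c, Finset.mem_toList.2 hc, rfl⟩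
  refine ⟨h, ?_, ?_⟩
  · -- SInv (n+1)
    intro i j hi' hj' hRij hne x hx
    by_cases hin : i = n <;> by_cases hjn : j = n
    · exact absurd (hin.trans hjn.symm) hne
    · have hjlt : j < n := lt_of_le_of_ne (Nat.lt_succ_iff.1 hj') hjn
      have hRnj : R n j := hin ▸ hRij
      have hjUp : j ∈ UpIdx := by
        rw [hUpIdx]
        exact Finset.mem_filter.2 ⟨Finset.mem_range.2 hjlt, hRnj⟩
      have : g j ∈ Hi := by
        rw [hHi]
        exact Finset.mem_union_left _ (Finset.mem_image_of_mem g hjUp)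
      rw [hin, hg'n, hg'i j hjn]
      exact hh2 (g j) this x hx
    · have hilt : i < n := lt_of_le_of_ne (Nat.lt_succ_iff.1 hi') hin
      have hRin : R i n := hjn ▸ hRij
      have hiLo : i ∈ LoIdx := by
        rw [hLoIdx]
        exact Finset.mem_filter.2 ⟨Finset.mem_range.2 hilt, hRin⟩
      have : g i ∈ Lo := by
        rw [hLo]
        exact Finset.mem_union_left _ (Finset.mem_image_of_mem g hiLo)
      rw [hjn, hg'n, hg'i i hin]
      exact hh1 (g i) this x hx
    · have hilt : i < n := lt_of_le_of_ne (Nat.lt_succ_iff.1 hi') hin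
      have hjlt : j < n := lt_of_le_of_ne (Nat.lt_succ_iff.1 hj') hjn
      rw [hg'i i hin, hg'i j hjn]
      exact hS i j hilt hjlt hRij hne x hx
  · -- Sep (n+1)
    intro A B hAb hBb hsepAB
    by_cases hnA : n ∈ A <;> by_cases hnB : n ∈ B
    · exact absurd (hrefl n) (hsepAB n hnA n hnB)
    · -- n ∈ A only : type-A configuration
      rcases B.eq_empty_or_nonempty with rfl | hBne
      · exact ⟨1/2, by norm_num, fun a ha b hb => absurd hb (Finset.notMem_empty b)⟩
      · set c : Bool × Finset ℕ × Finset ℕ := (false, A.erase n, B) with hcdef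
        have hc : c ∈ CC := by
          rw [hCC]
          apply Finset.mem_union_right
          apply Finset.mem_image_of_mem
          apply Finset.mem_filter.2
          constructor
          · rw [Finset.mem_product]
            constructor
            · apply Finset.mem_powerset.2
              intro a ha
              have h1 := Finset.mem_of_mem_erase ha
              have h2 := Finset.ne_of_mem_erase ha
              exact Finset.mem_range.2 (lt_of_le_of_ne (Nat.lt_succ_iff.1 (hAb a h1)) h2)
            · apply Finset.mem_powerset.2
              intro b hb
              have hbn : b ≠ n := fun hh => hnB (hh ▸ hb)
              exact Finset.mem_range.2 (lt_of_le_of_ne (Nat.lt_succ_iff.1 (hBb b hb)) hbn)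
          · refine ⟨hBne, fun b hb => hsepAB n hnA b hb, fun a ha b hb =>
              hsepAB a (Finset.mem_of_mem_erase ha) b hb⟩
        obtain ⟨hIoo, hOrd⟩ := hptO c hc
        refine ⟨(pt c : ℝ), hIoo, ?_⟩
        intro a ha b hb
        have hbn : b ≠ n := fun hh => hnB (hh ▸ hb)
        rw [hg'i b hbn]
        by_cases han : a = n
        · subst han
          rw [hg'n]
          have hss := hsat c hc
          unfold specSat at hss
          rw [show c.1 = false from rfl] at hss
          simp only [Bool.false_eq_true, if_false] at hss
          -- h.eval (pt c) < bd c ≤ (g b).eval (pt c)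
          have himgne : (c.2.2.image (fun b => (g b).eval (pt c))).Nonempty := hBne.image _
          have hle := fmin_le _ himgne ((g b).eval (pt c))
            (Finset.mem_image_of_mem _ (show b ∈ c.2.2 from hb))
          have hbdc : bd c = (WithTop.untopD 0 (c.2.2.image (fun b => (g b).eval (pt c))).min) := by
            rfl
          rw [← hbdc] at hle
          have : h.eval (pt c) < (g b).eval (pt c) := lt_of_lt_of_le hss hle
          rw [ev_rat, ev_rat]
          exact_mod_cast this
        · have haA' : a ∈ A.erase n := Finset.mem_erase.2 ⟨han, ha⟩
          have haAeff : a ∈ Aeff c := by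
            simp only [hAeff, show c.1 = false from rfl, Bool.false_eq_true, if_false]
            exact Finset.mem_union_left _ haA'
          have hbBeff : b ∈ Beff c := by
            simp only [hBeff, show c.1 = false from rfl, Bool.false_eq_true, if_false]
            exact hb
          rw [hg'i a han]
          exact hOrd a haAeff b hbBeff
    · -- n ∈ B only : type-B configuration
      rcases A.eq_empty_or_nonempty with rfl | hAne
      · exact ⟨1/2, by norm_num, fun a ha => absurd ha (Finset.notMem_empty a)⟩
      · set c : Bool × Finset ℕ × Finset ℕ := (true, A, B.erase n) with hcdef
        have hc : c ∈ CC := by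
          rw [hCC]
          apply Finset.mem_union_left
          apply Finset.mem_image_of_mem
          apply Finset.mem_filter.2
          constructor
          · rw [Finset.mem_product]
            constructor
            · apply Finset.mem_powerset.2
              intro a ha
              have han : a ≠ n := fun hh => hnA (hh ▸ ha)
              exact Finset.mem_range.2 (lt_of_le_of_ne (Nat.lt_succ_iff.1 (hAb a ha)) han)
            · apply Finset.mem_powerset.2
              intro b hb
              have h1 := Finset.mem_of_mem_erase hb
              have h2 := Finset.ne_of_mem_erase hb
              exact Finset.mem_range.2 (lt_of_le_of_ne (Nat.lt_succ_iff.1 (hBb b h1)) h2)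
          · refine ⟨hAne, fun a ha => hsepAB a ha n hnB, fun a ha b hb =>
              hsepAB a ha b (Finset.mem_of_mem_erase hb)⟩
        obtain ⟨hIoo, hOrd⟩ := hptO c hc
        refine ⟨(pt c : ℝ), hIoo, ?_⟩
        intro a ha b hb
        have han : a ≠ n := fun hh => hnA (hh ▸ ha)
        rw [hg'i a han]
        by_cases hbn : b = n
        · subst hbn
          rw [hg'n]
          have hss := hsat c hc
          unfold specSat at hss
          rw [show c.1 = true from rfl] at hss
          simp only [if_true] at hss
          have himgne : (c.2.1.image (fun a => (g a).eval (pt c))).Nonempty := hAne.image _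
          have hle := fmax_le _ himgne ((g a).eval (pt c))
            (Finset.mem_image_of_mem _ (show a ∈ c.2.1 from ha))
          have hbdc : bd c = (WithBot.unbotD 0 (c.2.1.image (fun a => (g a).eval (pt c))).max) := by
            rfl
          rw [← hbdc] at hle
          have : (g a).eval (pt c) < h.eval (pt c) := lt_of_le_of_lt hle hss
          rw [ev_rat, ev_rat]
          exact_mod_cast this
        · have hbB' : b ∈ B.erase n := Finset.mem_erase.2 ⟨hbn, hb⟩
          have haAeff : a ∈ Aeff c := by
            simp only [hAeff, show c.1 = true from rfl, if_true]
            exact ha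
          have hbBeff : b ∈ Beff c := by
            simp only [hBeff, show c.1 = true from rfl, if_true]
            exact Finset.mem_union_left _ hbB'
          rw [hg'i b hbn]
          exact hOrd a haAeff b hbBeff
    · -- n in neither
      have hAb' : ∀ a ∈ A, a < n := fun a ha =>
        lt_of_le_of_ne (Nat.lt_succ_iff.1 (hAb a ha)) (fun hh => hnA (hh ▸ ha))
      have hBb' : ∀ b ∈ B, b < n := fun b hb =>
        lt_of_le_of_ne (Nat.lt_succ_iff.1 (hBb b hb)) (fun hh => hnB (hh ▸ hb))
      obtain ⟨x, hx1, hx2⟩ := hSep A B hAb' hBb' hsepAB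
      refine ⟨x, hx1, fun a ha b hb => ?_⟩
      rw [hg'i a (Nat.ne_of_lt (hAb' a ha)), hg'i b (Nat.ne_of_lt (hBb' b hb))]
      exact hx2 a ha b hb

lemma SInv_ext (n : ℕ) (g g' : ℕ → ℚ[X]) (hag : ∀ m, m < n → g m = g' m) :
    SInv R n g → SInv R n g' := by
  intro hS i j hi hj hR hne x hx
  rw [← hag i hi, ← hag j hj]
  exact hS i j hi hj hR hne x hx

lemma Sep_ext (n : ℕ) (g g' : ℕ → ℚ[X]) (hag : ∀ m, m < n → g m = g' m) :
    Sep R n g → Sep R n g' := by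
  intro hSep A B hA hB hsep
  obtain ⟨x, hx1, hx2⟩ := hSep A B hA hB hsep
  refine ⟨x, hx1, fun a ha b hb => ?_⟩
  rw [← hag a (hA a ha), ← hag b (hB b hb)]
  exact hx2 a ha b hb

def GoodT (n : ℕ) (g : ℕ → ℚ[X]) : Prop := SInv R n g ∧ Sep R n g

lemma good_zero : GoodT R 0 (fun _ => 0) :=
  ⟨fun i j hi => absurd hi (Nat.not_lt_zero i),
   fun A B hA hB _ => ⟨1/2, by norm_num, fun a ha => absurd (hA a ha) (Nat.not_lt_zero a)⟩⟩

variable (hrefl : ∀ i, R i i) (htrans : ∀ i j k, R i j → R j k → R i k)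
  (hanti : ∀ i j, R i j → R j i → i = j)

noncomputable def seqT : (n : ℕ) → {g : ℕ → ℚ[X] // GoodT R n g}
  | 0 => ⟨fun _ => 0, good_zero R⟩
  | n+1 =>
      let prev := seqT n
      ⟨Function.update prev.1 n
        (Classical.choose (extend R hrefl htrans hanti n prev.1 prev.2.1 prev.2.2)),
       Classical.choose_spec (extend R hrefl htrans hanti n prev.1 prev.2.1 prev.2.2)⟩

lemma seqT_succ (n : ℕ) : (seqT R hrefl htrans hanti (n+1)).1 =
    Function.update (seqT R hrefl htrans hanti n).1 n
      (Classical.choose (extend R hrefl htrans hanti n (seqT R hrefl htrans hanti n).1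
        (seqT R hrefl htrans hanti n).2.1 (seqT R hrefl htrans hanti n).2.2)) := rfl

lemma seqT_coh : ∀ N m, m < N →
    (seqT R hrefl htrans hanti N).1 m = (seqT R hrefl htrans hanti (m+1)).1 m := by
  intro N
  induction N with
  | zero => intro m hm; exact absurd hm (Nat.not_lt_zero m)
  | succ N ih =>
      intro m hm
      rcases Nat.lt_succ_iff_lt_or_eq.1 hm with hlt | rfl
      · rw [seqT_succ, Function.update_of_ne (Nat.ne_of_lt hlt)]
        exact ih m hlt
      · rfl

noncomputable def fF : ℕ → ℚ[X] := fun m => (seqT R hrefl htrans hanti (m+1)).1 m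

lemma good_fF (N : ℕ) : SInv R N (fF R hrefl htrans hanti) ∧ Sep R N (fF R hrefl htrans hanti) := by
  have hg := (seqT R hrefl htrans hanti N).2
  have hag : ∀ m, m < N → (seqT R hrefl htrans hanti N).1 m = fF R hrefl htrans hanti m :=
    fun m hm => seqT_coh R hrefl htrans hanti N m hm
  exact ⟨SInv_ext R N _ _ hag hg.1, Sep_ext R N _ _ hag hg.2⟩

end Order

end PolyUniv

open PolyUniv in
/-- Polynomials with rational coefficients, ordered by pointwise comparison of values
on the open rational interval `(0, 1)`, form a universal order for countable partial
orders. -/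
theorem polynomials_universal (P : Type) [Countable P] [PartialOrder P] :
    ∃ f : P → Polynomial ℚ,
      ∀ p q : P, p ≤ q ↔ ∀ x : ℚ, 0 < x → x < 1 → (f p).eval x ≤ (f q).eval x := by
  classical
  obtain ⟨ι, hι⟩ := exists_injective_nat P
  set R : ℕ → ℕ → Prop := fun m k => m = k ∨ ∃ p q : P, ι p = m ∧ ι q = k ∧ p ≤ q with hR
  have hrefl : ∀ i, R i i := fun i => Or.inl rfl
  have htrans : ∀ i j k, R i j → R j k → R i k := by
    rintro i j k (rfl | ⟨p, q, rfl, rfl, hpq⟩) hjk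
    · exact hjk
    · rcases hjk with heq | ⟨p', q', hp', hq', hpq'⟩
      · exact Or.inr ⟨p, q, rfl, heq ▸ rfl, hpq⟩
      · have : p' = q := hι hp'
        subst this
        exact Or.inr ⟨p, q', rfl, hq' ▸ rfl, le_trans hpq hpq'⟩
  have hanti : ∀ i j, R i j → R j i → i = j := by
    rintro i j (rfl | ⟨p, q, rfl, rfl, hpq⟩) hji
    · rfl
    · rcases hji with heq | ⟨p', q', hp', hq', hpq'⟩
      · exact heq.symm
      · have h1 : p' = q := hι hp'
        have h2 : q' = p := hι hq'
        have h3 : q ≤ p := by rw [h1, h2] at hpq'; exact hpq'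
        exact congrArg ι (le_antisymm hpq h3)
  set F : ℕ → ℚ[X] := fF R hrefl htrans hanti with hF
  refine ⟨fun p => F (ι p), fun p q => ?_⟩
  constructor
  · intro hpq x hx0 hx1
    by_cases hpqe : p = q
    · subst hpqe; exact le_refl _
    have hRpq : R (ι p) (ι q) := Or.inr ⟨p, q, rfl, rfl, hpq⟩
    have hne : ι p ≠ ι q := fun h => hpqe (hι h)
    set N := max (ι p) (ι q) + 1 with hN
    have hS := (good_fF R hrefl htrans hanti N).1
    have hIcc : ((x:ℚ):ℝ) ∈ Icc (0:ℝ) 1 := by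
      constructor
      · have : (0:ℝ) < (x:ℝ) := by exact_mod_cast hx0
        linarith
      · have : (x:ℝ) < 1 := by exact_mod_cast hx1
        linarith
    have hlt := hS (ι p) (ι q) (Nat.lt_succ_of_le (le_max_left _ _))
      (Nat.lt_succ_of_le (le_max_right _ _)) hRpq hne ((x:ℚ):ℝ) hIcc
    rw [ev_rat, ev_rat] at hlt
    have : (F (ι p)).eval x < (F (ι q)).eval x := by exact_mod_cast hlt
    exact le_of_lt this
  · intro hx
    by_contra hpq
    have hne : p ≠ q := fun h => hpq (h ▸ le_refl p)
    have hNR : ¬ R (ι p) (ι q) := by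
      rintro (heq | ⟨p', q', h1, h2, hle⟩)
      · exact hne (hι heq)
      · have hp' : p' = p := hι h1
        have hq' : q' = q := hι h2
        subst hp'; subst hq'
        exact hpq hle
    set N := max (ι p) (ι q) + 1 with hN
    have hSep := (good_fF R hrefl htrans hanti N).2
    obtain ⟨xr, hxr1, hxr2⟩ := hSep {ι q} {ι p}
      (fun a ha => by rw [Finset.mem_singleton.1 ha]; exact Nat.lt_succ_of_le (le_max_right _ _))
      (fun b hb => by rw [Finset.mem_singleton.1 hb]; exact Nat.lt_succ_of_le (le_max_left _ _))
      (fun a ha b hb => by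
        rw [Finset.mem_singleton.1 ha, Finset.mem_singleton.1 hb]; exact hNR)
    have hlt := hxr2 (ι q) (Finset.mem_singleton_self _) (ι p) (Finset.mem_singleton_self _)
    set O : Set ℝ := Ioo (0:ℝ) 1 ∩ {y | ev (F (ι q)) y < ev (F (ι p)) y} with hO
    have hOopen : IsOpen O := IsOpen.inter isOpen_Ioo
      (isOpen_lt (continuous_ev _) (continuous_ev _))
    have hOne : O.Nonempty := ⟨xr, hxr1, hlt⟩
    obtain ⟨q₀, hq₀O, _⟩ := rat_in_open_avoid O hOopen hOne ∅
    obtain ⟨hq₀Ioo, hq₀lt⟩ := hq₀O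
    have hq₀0 : 0 < q₀ := by exact_mod_cast hq₀Ioo.1
    have hq₀1 : q₀ < 1 := by exact_mod_cast hq₀Ioo.2
    have := hx q₀ hq₀0 hq₀1
    have hq₀lt2 : ev (F (ι q)) ((q₀:ℚ):ℝ) < ev (F (ι p)) ((q₀:ℚ):ℝ) := hq₀lt
    rw [ev_rat, ev_rat] at hq₀lt2
    have hq₀lt' : (F (ι q)).eval q₀ < (F (ι p)).eval q₀ := by exact_mod_cast hq₀lt2
    exact absurd this (not_le.2 hq₀lt')
end
end

section
/- Let 𝒮 be the collection of subsets S of the integers ℤ such that S is 2^n-periodic for some natural number n, i.e., there exists n with x ∈ S ↔ x + 2^n ∈ S for all x ∈ ℤ. Then (𝒮, ⊆) is universal: for every partial order P on a countable type there is a map f : P → 𝒮 such that p ≤ q if and only if f p ⊆ f q. -/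
namespace PeriodicUniv

def Per (q : ℤ) (T : Set ℤ) : Prop := ∀ x : ℤ, x ∈ T ↔ x + q ∈ T

lemma Per.add_mul {q : ℤ} {T : Set ℤ} (h : Per q T) (x k : ℤ) : x ∈ T ↔ x + q * k ∈ T := by
  induction k using Int.induction_on with
  | zero => simp
  | succ n ih =>
      have e : x + q * ((n : ℤ) + 1) = (x + q * n) + q := by ring
      rw [e, ← h (x + q * n)]; exact ih
  | pred n ih =>
      have h2 := h (x + q * (-(n : ℤ) - 1))
      have e : x + q * (-(n : ℤ) - 1) + q = x + q * (-(n : ℤ)) := by ring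
      rw [e] at h2
      rw [ih]
      exact h2.symm

lemma Per.congr {q : ℤ} {T : Set ℤ} (h : Per q T) {x y : ℤ} (e : x % q = y % q) :
    x ∈ T ↔ y ∈ T := by
  obtain ⟨k, hk⟩ : q ∣ y - x := Int.ModEq.dvd e
  have hy : y = x + q * k := by linarith
  rw [hy]; exact h.add_mul x k

lemma per_iUnion {ι : Sort*} {q : ℤ} {f : ι → Set ℤ} (h : ∀ i, Per q (f i)) :
    Per q (⋃ i, f i) := by
  intro x
  simp only [Set.mem_iUnion]
  exact exists_congr fun i => h i x

lemma Per.union {q : ℤ} {A B : Set ℤ} (hA : Per q A) (hB : Per q B) : Per q (A ∪ B) := by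
  intro x
  simp only [Set.mem_union]
  exact or_congr (hA x) (hB x)

lemma Per.double {q : ℤ} {T : Set ℤ} (h : Per q T) : Per (q * 2) T := fun x => h.add_mul x 2

def oddHalf (m : ℕ) (x : ℤ) : Set ℤ := {y : ℤ | y % 2 ^ (m + 1) = x % 2 ^ m + 2 ^ m}

lemma oddHalf_per (m : ℕ) (x : ℤ) : Per (2 ^ (m + 1)) (oddHalf m x) := by
  intro y
  simp only [oddHalf, Set.mem_setOf_eq]
  have : (y + 2 ^ (m + 1)) % 2 ^ (m + 1) = y % 2 ^ (m + 1) := by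
    have := Int.add_mul_emod_self_left (a := y) (b := (2 : ℤ) ^ (m + 1)) (c := 1)
    simpa using this
  rw [this]

lemma mem_oddHalf_self (m : ℕ) (x : ℤ) : (x % 2 ^ m + 2 ^ m) ∈ oddHalf m x := by
  have h0 : (0 : ℤ) ≤ x % 2 ^ m := Int.emod_nonneg x (by positivity)
  have h1 : x % 2 ^ m < 2 ^ m := Int.emod_lt_of_pos x (by positivity)
  show (x % 2 ^ m + 2 ^ m) % 2 ^ (m + 1) = x % 2 ^ m + 2 ^ m
  have h2 : (2 : ℤ) ^ (m + 1) = 2 ^ m + 2 ^ m := by ring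
  refine Int.emod_eq_of_lt (by linarith) (by rw [h2]; linarith)

lemma oddHalf_mod {m : ℕ} {x y : ℤ} (hy : y ∈ oddHalf m x) : y % 2 ^ m = x % 2 ^ m := by
  have hdvd : (2 : ℤ) ^ m ∣ 2 ^ (m + 1) := ⟨2, by ring⟩
  have h1 : y % 2 ^ (m + 1) % 2 ^ m = y % 2 ^ m := Int.emod_emod_of_dvd y hdvd
  rw [← h1, hy]
  have h2 : (x % 2 ^ m + 2 ^ m * 1) % 2 ^ m = x % 2 ^ m % 2 ^ m :=
    Int.add_mul_emod_self_left _ _ _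
  simpa [Int.emod_emod_of_dvd x (dvd_refl ((2:ℤ) ^ m))] using h2

lemma evenRep_not_mem (m : ℕ) (x z : ℤ) : (x % 2 ^ m) ∉ oddHalf m z := by
  intro hmem
  have h0 : (0 : ℤ) ≤ x % 2 ^ m := Int.emod_nonneg x (by positivity)
  have h1 : x % 2 ^ m < 2 ^ m := Int.emod_lt_of_pos x (by positivity)
  have h3 : (0 : ℤ) ≤ z % 2 ^ m := Int.emod_nonneg z (by positivity)
  have h4 : (2:ℤ) ^ m ≤ 2 ^ (m+1) := by
    have : (2:ℤ) ^ (m+1) = 2 ^ m + 2 ^ m := by ring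
    linarith
  have h2 : x % 2 ^ m % 2 ^ (m + 1) = x % 2 ^ m := Int.emod_eq_of_lt h0 (by linarith)
  have := hmem
  simp only [oddHalf, Set.mem_setOf_eq] at this
  rw [h2] at this
  linarith

variable {P : Type} [PartialOrder P]

/-- a good family of periodic sets representing `u 0, …, u (n-1)`. -/
structure GoodFam (u : ℕ → P) (n : ℕ) (m : ℕ) (S : Fin n → Set ℤ) : Prop where
  per : ∀ i : Fin n, Per (2 ^ m) (S i)
  ord : ∀ i j : Fin n, u i ≤ u j ↔ S i ⊆ S j
  rich : ∀ p p' : P, ¬ p ≤ p' → ∃ x : ℤ,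
      (∀ k : Fin n, p ≤ u k → x ∈ S k) ∧ (∀ i : Fin n, u i ≤ p' → x ∉ S i)

lemma base (u : ℕ → P) : GoodFam u 0 0 Fin.elim0 :=
  ⟨fun i => i.elim0, fun i => i.elim0,
   fun _ _ _ => ⟨0, fun k => k.elim0, fun i => i.elim0⟩⟩

lemma step (u : ℕ → P) (n m : ℕ) (S : Fin n → Set ℤ) (h : GoodFam u n m S) :
    ∃ T : Set ℤ, GoodFam u (n + 1) (m + 1) (Fin.snoc S T) := by
  classical
  choose x hx1 hx2 using h.rich
  set U : Set ℤ := ⋃ (i : Fin n) (_ : u i ≤ u n), S i with hU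
  set W : Set ℤ :=
    ⋃ (p : P) (p' : P) (_ : p ≤ u n) (hnle : ¬ p ≤ p'), oddHalf m (x p p' hnle) with hW
  have memU : ∀ y : ℤ, y ∈ U ↔ ∃ i : Fin n, u i ≤ u n ∧ y ∈ S i := by
    intro y; simp [hU, Set.mem_iUnion]
  have memW : ∀ y : ℤ, y ∈ W ↔ ∃ (p p' : P) (_ : p ≤ u n) (hnle : ¬ p ≤ p'),
      y ∈ oddHalf m (x p p' hnle) := by
    intro y; simp [hW, Set.mem_iUnion]
  have perU : Per (2 ^ m) U := per_iUnion fun i => per_iUnion fun _ => h.per i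
  have pow1 : (2:ℤ) ^ (m+1) = 2 ^ m * 2 := by ring
  have perS' : ∀ i : Fin n, Per (2 ^ (m+1)) (S i) := fun i => by
    rw [pow1]; exact (h.per i).double
  have perU' : Per (2 ^ (m+1)) U := by rw [pow1]; exact perU.double
  have perW : Per (2 ^ (m+1)) W :=
    per_iUnion fun p => per_iUnion fun p' => per_iUnion fun _ => per_iUnion fun hnle =>
      oddHalf_per m _
  -- transfer membership within a mod 2^m class
  have Hodd : ∀ {z y : ℤ}, y ∈ oddHalf m z → ∀ {T' : Set ℤ}, Per (2 ^ m) T' →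
      (y ∈ T' ↔ z ∈ T') := fun hy _ hT => hT.congr (oddHalf_mod hy)
  have Heven : ∀ (z : ℤ) {T' : Set ℤ}, Per (2 ^ m) T' → (z % 2 ^ m ∈ T' ↔ z ∈ T') :=
    fun z _ hT => hT.congr (Int.emod_emod_of_dvd z (dvd_refl _))
  refine ⟨U ∪ W, ?_, ?_, ?_⟩
  · -- periodicity
    intro i
    refine Fin.lastCases ?_ ?_ i
    · rw [Fin.snoc_last]; exact perU'.union perW
    · intro j; rw [Fin.snoc_castSucc]; exact perS' j
  · -- order characterization
    intro i j
    refine Fin.lastCases ?_ (fun i0 => ?_) i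
    · refine Fin.lastCases ?_ (fun j0 => ?_) j
      · simp only [Fin.snoc_last]
        exact iff_of_true le_rfl subset_rfl
      · -- new ⊆ old
        rw [Fin.snoc_last, Fin.snoc_castSucc]
        constructor
        · intro hle y hy
          rcases hy with hyU | hyW
          · rcases (memU y).1 hyU with ⟨i1, hi1, hyi⟩
            exact (h.ord i1 j0).1 (hi1.trans hle) hyi
          · rcases (memW y).1 hyW with ⟨p, p', hple, hnle, hyo⟩
            have hx : x p p' hnle ∈ S j0 := hx1 p p' hnle j0 (hple.trans hle)
            exact (Hodd hyo (h.per j0)).2 hx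
        · intro hsub
          by_contra hn
          have hy := mem_oddHalf_self m (x (u n) (u j0) hn)
          have hyW : (x (u n) (u j0) hn % 2 ^ m + 2 ^ m) ∈ W :=
            (memW _).2 ⟨u n, u j0, le_rfl, hn, hy⟩
          have hmem : (x (u n) (u j0) hn % 2 ^ m + 2 ^ m) ∈ S j0 := hsub (Or.inr hyW)
          have : x (u n) (u j0) hn ∈ S j0 := (Hodd hy (h.per j0)).1 hmem
          exact hx2 (u n) (u j0) hn j0 le_rfl this
    · refine Fin.lastCases ?_ (fun j0 => ?_) j
      · -- old ⊆ new
        rw [Fin.snoc_last, Fin.snoc_castSucc]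
        constructor
        · intro hle y hy
          exact Or.inl ((memU y).2 ⟨i0, hle, hy⟩)
        · intro hsub
          by_contra hn
          have hxi : x (u i0) (u n) hn ∈ S i0 := hx1 (u i0) (u n) hn i0 le_rfl
          have hxe : (x (u i0) (u n) hn % 2 ^ m) ∈ S i0 := (Heven _ (h.per i0)).2 hxi
          rcases hsub hxe with hyU | hyW
          · rcases (memU _).1 hyU with ⟨i1, hi1, hyi⟩
            have : x (u i0) (u n) hn ∈ S i1 := (Heven _ (h.per i1)).1 hyi
            exact hx2 (u i0) (u n) hn i1 hi1 this
          · rcases (memW _).1 hyW with ⟨p, p', _, hnle, hmem⟩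
            exact evenRep_not_mem m _ _ hmem
      · rw [Fin.snoc_castSucc, Fin.snoc_castSucc]
        exact h.ord i0 j0
  · -- richness
    intro p p' hpp'
    by_cases hp : p ≤ u n
    · by_cases hq : u n ≤ p'
      · exact absurd (hp.trans hq) hpp'
      · refine ⟨x p p' hpp' % 2 ^ m + 2 ^ m, ?_, ?_⟩
        · intro k
          refine Fin.lastCases ?_ (fun k0 => ?_) k
          · intro _
            rw [Fin.snoc_last]
            exact Or.inr ((memW _).2 ⟨p, p', hp, hpp', mem_oddHalf_self m _⟩)
          · intro hk0
            rw [Fin.snoc_castSucc]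
            exact (Hodd (mem_oddHalf_self m _) (h.per k0)).2 (hx1 p p' hpp' k0 hk0)
        · intro i
          refine Fin.lastCases ?_ (fun i0 => ?_) i
          · intro hi; exact absurd hi hq
          · intro hi0
            rw [Fin.snoc_castSucc]
            exact fun hy => hx2 p p' hpp' i0 hi0
              ((Hodd (mem_oddHalf_self m _) (h.per i0)).1 hy)
    · by_cases hq : u n ≤ p'
      · refine ⟨x p p' hpp' % 2 ^ m, ?_, ?_⟩
        · intro k
          refine Fin.lastCases ?_ (fun k0 => ?_) k
          · intro hk; exact absurd hk hp
          · intro hk0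
            rw [Fin.snoc_castSucc]
            exact (Heven _ (h.per k0)).2 (hx1 p p' hpp' k0 hk0)
        · intro i
          refine Fin.lastCases ?_ (fun i0 => ?_) i
          · intro _
            rw [Fin.snoc_last]
            rintro (hyU | hyW)
            · rcases (memU _).1 hyU with ⟨i1, hi1, hyi⟩
              exact hx2 p p' hpp' i1 (hi1.trans hq) ((Heven _ (h.per i1)).1 hyi)
            · rcases (memW _).1 hyW with ⟨pp, pp', _, hnle, hmem⟩
              exact evenRep_not_mem m _ _ hmem
          · intro hi0
            rw [Fin.snoc_castSucc]
            exact fun hy => hx2 p p' hpp' i0 hi0 ((Heven _ (h.per i0)).1 hy)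
      · refine ⟨x p p' hpp', ?_, ?_⟩
        · intro k
          refine Fin.lastCases ?_ (fun k0 => ?_) k
          · intro hk; exact absurd hk hp
          · intro hk0
            rw [Fin.snoc_castSucc]
            exact hx1 p p' hpp' k0 hk0
        · intro i
          refine Fin.lastCases ?_ (fun i0 => ?_) i
          · intro hi; exact absurd hi hq
          · intro hi0
            rw [Fin.snoc_castSucc]
            exact hx2 p p' hpp' i0 hi0

noncomputable def chain (u : ℕ → P) : ∀ n : ℕ, Σ' (m : ℕ) (S : Fin n → Set ℤ), GoodFam u n m S
  | 0 => ⟨0, Fin.elim0, base u⟩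
  | n + 1 =>
      let c := chain u n
      ⟨c.1 + 1, Fin.snoc c.2.1 (step u n c.1 c.2.1 c.2.2).choose,
        (step u n c.1 c.2.1 c.2.2).choose_spec⟩

lemma chain_castSucc (u : ℕ → P) (n : ℕ) (i : Fin n) :
    (chain u (n + 1)).2.1 (Fin.castSucc i) = (chain u n).2.1 i := by
  show (Fin.snoc (chain u n).2.1 _ : Fin (n+1) → Set ℤ) _ = _
  rw [Fin.snoc_castSucc]

lemma chain_stable (u : ℕ → P) (j : ℕ) :
    ∀ n (hj : j < n),
      (chain u n).2.1 ⟨j, hj⟩ = (chain u (j + 1)).2.1 ⟨j, Nat.lt_succ_self j⟩ := by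
  intro n
  induction n with
  | zero => intro h; exact absurd h (Nat.not_lt_zero j)
  | succ n ih =>
      intro hj
      rcases Nat.lt_succ_iff_lt_or_eq.1 hj with h | h
      · have e : (⟨j, hj⟩ : Fin (n + 1)) = Fin.castSucc ⟨j, h⟩ := rfl
        rw [e, chain_castSucc, ih h]
      · subst h; rfl

noncomputable def gfun (u : ℕ → P) (j : ℕ) : Set ℤ :=
  (chain u (j + 1)).2.1 ⟨j, Nat.lt_succ_self j⟩

lemma gfun_per (u : ℕ → P) (j : ℕ) : ∃ mm : ℕ, Per (2 ^ mm) (gfun u j) :=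
  ⟨(chain u (j + 1)).1, (chain u (j + 1)).2.2.per _⟩

lemma gfun_ord (u : ℕ → P) (a b : ℕ) : u a ≤ u b ↔ gfun u a ⊆ gfun u b := by
  have ha : a < max a b + 1 := Nat.lt_succ_of_le (le_max_left a b)
  have hb : b < max a b + 1 := Nat.lt_succ_of_le (le_max_right a b)
  have h := (chain u (max a b + 1)).2.2.ord ⟨a, ha⟩ ⟨b, hb⟩
  rw [chain_stable u a _ ha, chain_stable u b _ hb] at h
  exact h

end PeriodicUniv

/-- The collection of subsets of `ℤ` that are `2 ^ n`-periodic for some `n`, ordered by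
inclusion, is universal for countable partial orders. -/
theorem periodicSets_universal (P : Type) [Countable P] [PartialOrder P] :
    ∃ f : P → Set ℤ,
      (∀ p, ∃ n : ℕ, ∀ x : ℤ, x ∈ f p ↔ x + 2 ^ n ∈ f p) ∧
      ∀ p q : P, p ≤ q ↔ f p ⊆ f q := by
  rcases isEmpty_or_nonempty P with hP | hP
  · exact ⟨fun _ => ∅, fun p => isEmptyElim p, fun p => isEmptyElim p⟩
  · obtain ⟨u, hu⟩ := exists_surjective_nat P
    choose c hc using hu
    refine ⟨fun p => PeriodicUniv.gfun u (c p), ?_, ?_⟩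
    · intro p
      exact PeriodicUniv.gfun_per u (c p)
    · intro p q
      have h := PeriodicUniv.gfun_ord u (c p) (c q)
      rwa [hc p, hc q] at h
end

section
/- Let 𝒯𝒱 be the set of finite sets of 0–1 vectors (lists of Booleans), with the relation: for vectors v, v', v ≼ v' iff v is at least as long as v' and the i-th entry of v is ≥ the i-th entry of v' for every i below the length of v' (with false < true), and for finite sets V, V' of vectors, V ≤ V' iff for every v ∈ V there exists v' ∈ V' with v ≼ v'. Then the quasi-order (𝒯𝒱, ≤) contains a universal partial order: for every partial order P on a countable type there is a map f : P → 𝒯𝒱 such that p ≤ q if and only if f p ≤ f q. -/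
open scoped Classical

/-- The truncated-vector order on 0–1 vectors: `v ≼ w` iff `v` is at least as long as
`w` and entrywise (with `false < true`) `v` dominates `w` below the length of `w`. -/
def TVvecLe (v w : List Bool) : Prop :=
  w.length ≤ v.length ∧ ∀ i < w.length, w.getD i false ≤ v.getD i false

/-- The order on finite sets of 0–1 vectors: `V ≤ W` iff every vector of `V` is
dominated by some vector of `W`. -/
def TVle (V W : Finset (List Bool)) : Prop :=
  ∀ v ∈ V, ∃ w ∈ W, TVvecLe v w

/-- Code of an element `r`: vector of length `2 * e r + 2` whose true entries are at
positions `2 * e s + 1` for `r ≤ s`. -/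
noncomputable def TVkvec {P : Type} [PartialOrder P] (e : P → ℕ) (r : P) : List Bool :=
  List.ofFn (n := 2 * e r + 2) fun j => decide (∃ s : P, 2 * e s + 1 = (j : ℕ) ∧ r ≤ s)

lemma TVkvec_length {P : Type} [PartialOrder P] (e : P → ℕ) (r : P) :
    (TVkvec e r).length = 2 * e r + 2 := by simp [TVkvec]

lemma TVkvec_getD {P : Type} [PartialOrder P] (e : P → ℕ) (r : P) (j : ℕ)
    (hj : j < 2 * e r + 2) :
    (TVkvec e r).getD j false = decide (∃ s : P, 2 * e s + 1 = j ∧ r ≤ s) := by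
  rw [List.getD_eq_getElem _ _ (by simpa [TVkvec_length] using hj)]
  simp only [TVkvec, List.getElem_ofFn]

lemma TVkvec_le {P : Type} [PartialOrder P] (e : P → ℕ) {a b : P}
    (hab : a ≤ b) (heb : e b ≤ e a) : TVvecLe (TVkvec e a) (TVkvec e b) := by
  constructor
  · simp only [TVkvec_length]; omega
  · intro i hi
    rw [TVkvec_length] at hi
    have hia : i < 2 * e a + 2 := by omega
    rw [TVkvec_getD e b i hi, TVkvec_getD e a i hia]
    by_cases hB : ∃ s : P, 2 * e s + 1 = i ∧ b ≤ s
    · obtain ⟨s, hs1, hs2⟩ := hB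
      have hA : ∃ s : P, 2 * e s + 1 = i ∧ a ≤ s := ⟨s, hs1, hab.trans hs2⟩
      simp [hA]
    · simp [hB]

lemma TVkvec_le_rev {P : Type} [PartialOrder P] {e : P → ℕ}
    (he : Function.Injective e) {p r : P}
    (h : TVvecLe (TVkvec e p) (TVkvec e r)) : p ≤ r := by
  obtain ⟨hlen, hent⟩ := h
  simp only [TVkvec_length] at hlen
  have hmark : (2 * e r + 1) < (TVkvec e r).length := by rw [TVkvec_length]; omega
  have h1 := hent _ hmark
  rw [TVkvec_getD e r _ (by omega), TVkvec_getD e p _ (by omega)] at h1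
  have hT : decide (∃ s : P, 2 * e s + 1 = 2 * e r + 1 ∧ r ≤ s) = true :=
    decide_eq_true ⟨r, rfl, le_refl r⟩
  have h2 : ∃ s : P, 2 * e s + 1 = 2 * e r + 1 ∧ p ≤ s := by
    refine of_decide_eq_true ?_
    cases hdec : decide (∃ s : P, 2 * e s + 1 = 2 * e r + 1 ∧ p ≤ s) with
    | true => rfl
    | false => rw [hdec, hT] at h1; exact absurd h1 (by simp)
  obtain ⟨s, hs1, hs2⟩ := h2
  have hes : e s = e r := by omega
  exact (he hes) ▸ hs2

/-- The quasi-order of truncated vector-sets contains a universal partial order. -/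
theorem truncatedVectors_universal (P : Type) [Countable P] [PartialOrder P] :
    ∃ f : P → Finset (List Bool), ∀ p q : P, p ≤ q ↔ TVle (f p) (f q) := by
  obtain ⟨e, he⟩ := Countable.exists_injective_nat P
  have hfin : ∀ q : P, {r : P | r ≤ q ∧ e r ≤ e q}.Finite := by
    intro q
    have hsub : {r : P | r ≤ q ∧ e r ≤ e q} ⊆ e ⁻¹' (Set.Iic (e q)) := fun r hr => hr.2
    exact ((Set.finite_Iic (e q)).preimage he.injOn).subset hsub
  refine ⟨fun q => (hfin q).toFinset.image (TVkvec e), ?_⟩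
  intro p q
  constructor
  · intro hpq v hv
    simp only [Finset.mem_image, Set.Finite.mem_toFinset, Set.mem_setOf_eq] at hv
    obtain ⟨r, ⟨hrp, hre⟩, rfl⟩ := hv
    by_cases hcase : e r ≤ e q
    · refine ⟨TVkvec e r, ?_, TVkvec_le e le_rfl le_rfl⟩
      simp only [Finset.mem_image, Set.Finite.mem_toFinset, Set.mem_setOf_eq]
      exact ⟨r, ⟨hrp.trans hpq, hcase⟩, rfl⟩
    · refine ⟨TVkvec e q, ?_, TVkvec_le e (hrp.trans hpq) (by omega)⟩
      simp only [Finset.mem_image, Set.Finite.mem_toFinset, Set.mem_setOf_eq]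
      exact ⟨q, ⟨le_refl q, le_refl _⟩, rfl⟩
  · intro h
    have hkp : TVkvec e p ∈ (hfin p).toFinset.image (TVkvec e) := by
      simp only [Finset.mem_image, Set.Finite.mem_toFinset, Set.mem_setOf_eq]
      exact ⟨p, ⟨le_refl p, le_refl _⟩, rfl⟩
    obtain ⟨w, hw, hvw⟩ := h _ hkp
    simp only [Finset.mem_image, Set.Finite.mem_toFinset, Set.mem_setOf_eq] at hw
    obtain ⟨r, ⟨hrq, hre⟩, rfl⟩ := hw
    exact (TVkvec_le_rev he hvw).trans hrq
end

section
/- For every finite family F of finite connected simple graphs there exists a simple graph U on a countable type such that: (a) no member of F admits a graph homomorphism into U, and (b) every simple graph G on a countable type such that no member of F admits a graph homomorphism into G has a graph embedding (induced, i.e., preserving adjacency and non-adjacency) into U. In other words, the class Forb_h(F) of countable graphs omitting all homomorphic images of members of F contains an embedding-universal graph. -/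
universe u

set_option linter.unusedSectionVars false
namespace CSS

variable {ι : Type} [Finite ι] {m : ι → ℕ}

/-- vertex pool -/
abbrev W : Type := ℕ ⊕ ℕ

def natOf : W → ℕ := Sum.elim (fun _ => 0) (fun t => t + 1)

variable (F : ∀ i : ι, SimpleGraph (Fin (m i)))

/-- no homomorphism from any member of F -/
def FFree {α : Type} (H : SimpleGraph α) : Prop := ∀ i, IsEmpty (F i →g H)

lemma ffree_mono {α : Type} {H H' : SimpleGraph α} (h : ∀ x y, H.Adj x y → H'.Adj x y)
    (hf : FFree F H') : FFree F H := by
  intro i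
  constructor
  intro g
  exact (hf i).false ⟨fun v => g v, fun ha => h _ _ (g.map_adj ha)⟩

lemma ffree_comap {α β : Type} {H : SimpleGraph β} (f : α → β) {H' : SimpleGraph α}
    (h : ∀ x y, H'.Adj x y → H.Adj (f x) (f y)) (hf : FFree F H) : FFree F H' := by
  intro i
  constructor
  intro g
  exact (hf i).false ⟨fun v => f (g v), fun ha => h _ _ (g.map_adj ha)⟩

/-- extension pattern: graph on `b` fresh vertices plus attachments to `ℓ` boundary slots -/
structure Pat (ℓ b : ℕ) where
  inner : SimpleGraph (Fin b)
  cross : Fin ℓ → Fin b → Prop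

/-- free amalgam of `H` with the pattern `B` glued along the tuple `c` -/
def Amal {ℓ b : ℕ} (H : SimpleGraph W) (c : Fin ℓ → W) (B : Pat ℓ b) :
    SimpleGraph (W ⊕ Fin b) where
  Adj x y :=
    (∃ w w', x = Sum.inl w ∧ y = Sum.inl w' ∧ H.Adj w w') ∨
    (∃ j z, x = Sum.inl (c j) ∧ y = Sum.inr z ∧ B.cross j z) ∨
    (∃ j z, x = Sum.inr z ∧ y = Sum.inl (c j) ∧ B.cross j z) ∨
    (∃ z z', x = Sum.inr z ∧ y = Sum.inr z' ∧ B.inner.Adj z z')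
  symm := by
    constructor; rintro x y (⟨w, w', rfl, rfl, h⟩ | ⟨j, z, rfl, rfl, h⟩ | ⟨j, z, rfl, rfl, h⟩ |
      ⟨z, z', rfl, rfl, h⟩)
    · exact Or.inl ⟨w', w, rfl, rfl, h.symm⟩
    · exact Or.inr (Or.inr (Or.inl ⟨j, z, rfl, rfl, h⟩))
    · exact Or.inr (Or.inl ⟨j, z, rfl, rfl, h⟩)
    · exact Or.inr (Or.inr (Or.inr ⟨z', z, rfl, rfl, h.symm⟩))
  loopless := by
    constructor; rintro x (⟨w, w', h1, h2, h⟩ | ⟨j, z, h1, h2, h⟩ | ⟨j, z, h1, h2, h⟩ | ⟨z, z', h1, h2, h⟩)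
    · rw [h1] at h2; cases h2; exact H.loopless.irrefl _ h
    · rw [h1] at h2; cases h2
    · rw [h1] at h2; cases h2
    · rw [h1] at h2; cases h2; exact B.inner.loopless.irrefl _ h

lemma amal_adj_inl_inl {ℓ b : ℕ} {H : SimpleGraph W} {c : Fin ℓ → W} {B : Pat ℓ b}
    {w w' : W} : (Amal H c B).Adj (Sum.inl w) (Sum.inl w') ↔ H.Adj w w' := by
  constructor
  · rintro (⟨a, a', h1, h2, h⟩ | ⟨j, z, h1, h2, h⟩ | ⟨j, z, h1, h2, h⟩ | ⟨z, z', h1, h2, h⟩) <;>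
      simp_all
  · intro h; exact Or.inl ⟨w, w', rfl, rfl, h⟩

lemma amal_adj_inr_inr {ℓ b : ℕ} {H : SimpleGraph W} {c : Fin ℓ → W} {B : Pat ℓ b}
    {z z' : Fin b} : (Amal H c B).Adj (Sum.inr z) (Sum.inr z') ↔ B.inner.Adj z z' := by
  constructor
  · rintro (⟨a, a', h1, h2, h⟩ | ⟨j, y, h1, h2, h⟩ | ⟨j, y, h1, h2, h⟩ | ⟨y, y', h1, h2, h⟩) <;>
      simp_all
  · intro h; exact Or.inr (Or.inr (Or.inr ⟨z, z', rfl, rfl, h⟩))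

lemma amal_adj_inl_inr {ℓ b : ℕ} {H : SimpleGraph W} {c : Fin ℓ → W} {B : Pat ℓ b}
    {w : W} {z : Fin b} :
    (Amal H c B).Adj (Sum.inl w) (Sum.inr z) ↔ ∃ j, w = c j ∧ B.cross j z := by
  constructor
  · rintro (⟨a, a', h1, h2, h⟩ | ⟨j, y, h1, h2, h⟩ | ⟨j, y, h1, h2, h⟩ | ⟨y, y', h1, h2, h⟩)
    · cases h2
    · injection h1 with h1'; injection h2 with h2'; subst h2'; exact ⟨j, h1', h⟩
    · cases h1
    · cases h1
  · rintro ⟨j, rfl, h⟩; exact Or.inr (Or.inl ⟨j, z, rfl, rfl, h⟩)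

lemma amal_adj_inr_inl {ℓ b : ℕ} {H : SimpleGraph W} {c : Fin ℓ → W} {B : Pat ℓ b}
    {w : W} {z : Fin b} :
    (Amal H c B).Adj (Sum.inr z) (Sum.inl w) ↔ ∃ j, w = c j ∧ B.cross j z := by
  rw [(Amal H c B).adj_comm]; exact amal_adj_inl_inr

/-- consistency: the free amalgam is still F-free -/
def Con {ℓ b : ℕ} (H : SimpleGraph W) (c : Fin ℓ → W) (B : Pat ℓ b) : Prop :=
  FFree F (Amal H c B)

/-- Con is antitone in H -/
lemma con_anti {ℓ b : ℕ} {H H' : SimpleGraph W} (hsub : ∀ x y, H.Adj x y → H'.Adj x y)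
    {c : Fin ℓ → W} {B : Pat ℓ b} (h : Con F H' c B) : Con F H c B := by
  apply ffree_mono F _ h
  rintro x y (⟨w, w', rfl, rfl, hh⟩ | hh)
  · exact Or.inl ⟨w, w', rfl, rfl, hsub _ _ hh⟩
  · exact Or.inr hh

/-- Con only depends on the pattern up to pointwise iff -/
lemma con_congr {ℓ b : ℕ} {H : SimpleGraph W} {c : Fin ℓ → W} {B B' : Pat ℓ b}
    (h1 : ∀ z z', B.inner.Adj z z' ↔ B'.inner.Adj z z')
    (h2 : ∀ j z, B.cross j z ↔ B'.cross j z) (h : Con F H c B') : Con F H c B := by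
  apply ffree_mono F _ h
  rintro x y (⟨w, w', rfl, rfl, hh⟩ | ⟨j, z, rfl, rfl, hh⟩ | ⟨j, z, rfl, rfl, hh⟩ |
    ⟨z, z', rfl, rfl, hh⟩)
  · exact Or.inl ⟨w, w', rfl, rfl, hh⟩
  · exact Or.inr (Or.inl ⟨j, z, rfl, rfl, (h2 j z).mp hh⟩)
  · exact Or.inr (Or.inr (Or.inl ⟨j, z, rfl, rfl, (h2 j z).mp hh⟩))
  · exact Or.inr (Or.inr (Or.inr ⟨z, z', rfl, rfl, (h1 z z').mp hh⟩))

/-- the folding lemma: if the pattern is realized (weakly, as a subgraph) by actual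
vertices of `H`, then attaching a fresh copy of it is consistent. -/
lemma con_of_fold {ℓ b : ℕ} {H : SimpleGraph W} {c : Fin ℓ → W} {B : Pat ℓ b}
    (ξ : Fin b → W)
    (hin : ∀ z z', B.inner.Adj z z' → H.Adj (ξ z) (ξ z'))
    (hcr : ∀ j z, B.cross j z → H.Adj (c j) (ξ z))
    (hf : FFree F H) : Con F H c B := by
  apply ffree_comap F (Sum.elim id ξ) _ hf
  rintro x y (⟨w, w', rfl, rfl, hh⟩ | ⟨j, z, rfl, rfl, hh⟩ | ⟨j, z, rfl, rfl, hh⟩ |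
    ⟨z, z', rfl, rfl, hh⟩)
  · exact hh
  · exact hcr j z hh
  · exact (hcr j z hh).symm
  · exact hin z z' hh

/-- a piece: a member of F with every vertex marked absent (`none`), interior
(`some none`) or boundary pinned to slot j (`some (some j)`). -/
def Piece (ℓ : ℕ) : Type := Σ i : ι, Fin (m i) → Option (Option (Fin ℓ))

def Realizes {ℓ : ℕ} (H : SimpleGraph W) (c : Fin ℓ → W) (p : Piece (m := m) ℓ) : Prop :=
  ∃ h : Fin (m p.1) → W,
    (∀ u j, p.2 u = some (some j) → h u = c j) ∧
    (∀ u, p.2 u = some none → ∀ j, h u ≠ c j) ∧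
    (∀ u v, (F p.1).Adj u v → p.2 u = some none → p.2 v ≠ none → H.Adj (h u) (h v))

/-- existential closedness relative to the class of F-free graphs -/
def EC (H : SimpleGraph W) : Prop :=
  ∀ (ℓ b : ℕ) (c : Fin ℓ → W) (B : Pat ℓ b), Function.Injective c → Con F H c B →
    ∃ d : Fin b → W, Function.Injective d ∧ (∀ y j, d y ≠ c j) ∧
      (∀ y y', H.Adj (d y) (d y') ↔ B.inner.Adj y y') ∧
      (∀ j y, H.Adj (c j) (d y) ↔ B.cross j y)

open Classical in
/-- Main transfer lemma: consistency transfers along a pair of tuples with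
matching induced structure and transferable pieces. -/
lemma con_transfer {ℓ b : ℕ} {H H' : SimpleGraph W} {c c' : Fin ℓ → W}
    (hinj' : Function.Injective c')
    (hiso : ∀ j j', H'.Adj (c' j) (c' j') → H.Adj (c j) (c j'))
    (hpiece : ∀ p : Piece (m := m) ℓ, Realizes F H' c' p → Realizes F H c p)
    {B : Pat ℓ b} (hc : Con F H c B) : Con F H' c' B := by
  intro i
  constructor
  intro g
  -- decompose the offending homomorphism into a piece and a fresh part
  set ρ : Fin (m i) → Option (Option (Fin ℓ)) := fun u =>
    Sum.elim (fun w => if h : ∃ j, w = c' j then some (some (choose h)) else some none)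
      (fun _ => none) (g u) with hρ
  have hρ_inr : ∀ u z, g u = Sum.inr z → ρ u = none := by
    intro u z h; simp only [hρ, h, Sum.elim_inr]
  have hρ_bd : ∀ u w (h : g u = Sum.inl w) (hex : ∃ j, w = c' j),
      ρ u = some (some (choose hex)) := by
    intro u w h hex; simp only [hρ, h, Sum.elim_inl, dif_pos hex]
  have hρ_int : ∀ u w, g u = Sum.inl w → (¬ ∃ j, w = c' j) → ρ u = some none := by
    intro u w h hex; simp only [hρ, h, Sum.elim_inl, dif_neg hex]
  set h0 : Fin (m i) → W := fun u => Sum.elim id (fun _ => Sum.inl 0) (g u) with hh0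
  have hreal : Realizes F H' c' ⟨i, ρ⟩ := by
    refine ⟨h0, ?_, ?_, ?_⟩
    · intro u j hj
      have hj : ρ u = some (some j) := hj
      rcases hgu : g u with w | z
      · simp only [hh0, hgu, Sum.elim_inl, id]
        by_cases hex : ∃ j', w = c' j'
        · rw [hρ_bd u w hgu hex] at hj
          simp only [Option.some.injEq] at hj
          rw [← hj]
          exact choose_spec hex
        · rw [hρ_int u w hgu hex] at hj; simp at hj
      · rw [hρ_inr u z hgu] at hj; simp at hj
    · intro u hu j
      have hu : ρ u = some none := hu
      rcases hgu : g u with w | z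
      · simp only [hh0, hgu, Sum.elim_inl, id]
        by_cases hex : ∃ j', w = c' j'
        · rw [hρ_bd u w hgu hex] at hu; simp at hu
        · intro hcon; exact hex ⟨j, hcon⟩
      · rw [hρ_inr u z hgu] at hu; simp at hu
    · intro u v huv hu hv
      have hu : ρ u = some none := hu
      have hv : ρ v ≠ none := hv
      have huv : (F i).Adj u v := huv
      have hadj := g.map_adj huv
      rcases hgu : g u with w | z
      · rcases hgv : g v with w' | z'
        · simp only [hh0, hgu, hgv, Sum.elim_inl, id]
          rw [hgu, hgv] at hadj
          exact amal_adj_inl_inl.mp hadj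
        · rw [hρ_inr v z' hgv] at hv; simp at hv
      · rw [hρ_inr u z hgu] at hu; simp at hu
  obtain ⟨hH, hbd0, hint0, hedge0⟩ := hpiece _ hreal
  have hbd : ∀ (u : Fin (m i)) (j : Fin ℓ), ρ u = some (some j) → hH u = c j := hbd0
  have hedge : ∀ (u v : Fin (m i)), (F i).Adj u v → ρ u = some none → ρ v ≠ none →
      H.Adj (hH u) (hH v) := hedge0
  -- reassemble a homomorphism into the amalgam over H
  set gg : Fin (m i) → W ⊕ Fin b := fun u =>
    Sum.elim (fun w => if h : ∃ j, w = c' j then Sum.inl (c (choose h)) else Sum.inl (hH u))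
      (fun z => Sum.inr z) (g u) with hgg
  have key : ∀ u v, (F i).Adj u v → (Amal H c B).Adj (gg u) (gg v) := by
    intro u v huv
    have hadj := g.map_adj huv
    rcases hgu : g u with w | z <;> rcases hgv : g v with w' | z' <;>
      rw [hgu, hgv] at hadj <;>
      simp only [hgg, hgu, hgv, Sum.elim_inl, Sum.elim_inr]
    · -- inl / inl
      by_cases h1 : ∃ j, w = c' j <;> by_cases h2 : ∃ j, w' = c' j
      · rw [dif_pos h1, dif_pos h2, amal_adj_inl_inl]
        apply hiso
        rw [← choose_spec h1, ← choose_spec h2]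
        exact amal_adj_inl_inl.mp hadj
      · rw [dif_pos h1, dif_neg h2, amal_adj_inl_inl]
        have := hedge v u ((F i).adj_symm huv) (hρ_int v w' hgv h2)
          (by rw [hρ_bd u w hgu h1]; simp)
        rw [hbd u (choose h1) (hρ_bd u w hgu h1)] at this
        exact this.symm
      · rw [dif_neg h1, dif_pos h2, amal_adj_inl_inl]
        have := hedge u v huv (hρ_int u w hgu h1)
          (by rw [hρ_bd v w' hgv h2]; simp)
        rw [hbd v (choose h2) (hρ_bd v w' hgv h2)] at this
        exact this
      · rw [dif_neg h1, dif_neg h2, amal_adj_inl_inl]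
        exact hedge u v huv (hρ_int u w hgu h1)
          (by rw [hρ_int v w' hgv h2]; simp)
    · -- inl / inr
      rcases amal_adj_inl_inr.mp hadj with ⟨j, rfl, hcr⟩
      have h1 : ∃ j', c' j = c' j' := ⟨j, rfl⟩
      rw [dif_pos h1]
      have hj : choose h1 = j := hinj' (choose_spec h1).symm
      rw [hj]
      exact amal_adj_inl_inr.mpr ⟨j, rfl, hcr⟩
    · -- inr / inl
      rcases amal_adj_inr_inl.mp hadj with ⟨j, rfl, hcr⟩
      have h1 : ∃ j', c' j = c' j' := ⟨j, rfl⟩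
      rw [dif_pos h1]
      have hj : choose h1 = j := hinj' (choose_spec h1).symm
      rw [hj]
      exact amal_adj_inr_inl.mpr ⟨j, rfl, hcr⟩
    · -- inr / inr
      exact amal_adj_inr_inr.mpr (amal_adj_inr_inr.mp hadj)
  exact (hc i).false ⟨gg, fun {u v} huv => key u v huv⟩

/-! ### The generic chain construction -/

def Task : Type := Σ ℓ b : ℕ, (Fin ℓ → W) × (Fin b → Fin b → Bool) × (Fin ℓ → Fin b → Bool)

noncomputable instance : Encodable Task := by unfold Task; infer_instance

/-- the pattern encoded by a task -/
def patOfTask (τ : Task) : Pat τ.1 τ.2.1 :=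
  ⟨SimpleGraph.fromRel (fun y y' => τ.2.2.2.1 y y' = true), fun j y => τ.2.2.2.2 j y = true⟩

/-- the graph obtained by attaching a fresh copy of the pattern at block `base` -/
def attach {ℓ b : ℕ} (H : SimpleGraph W) (c : Fin ℓ → W) (B : Pat ℓ b) (base : ℕ)
    (hb : ∀ j, natOf (c j) ≤ base) : SimpleGraph W where
  Adj x y := H.Adj x y ∨
    (∃ y₁ y₂ : Fin b, B.inner.Adj y₁ y₂ ∧ x = Sum.inr (base + (y₁ : ℕ)) ∧
      y = Sum.inr (base + (y₂ : ℕ))) ∨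
    (∃ j y₁, B.cross j y₁ ∧ x = c j ∧ y = Sum.inr (base + (y₁ : ℕ))) ∨
    (∃ j y₁, B.cross j y₁ ∧ y = c j ∧ x = Sum.inr (base + (y₁ : ℕ)))
  symm := by
    constructor; rintro x y (h | ⟨y₁, y₂, h1, h2, h3⟩ | ⟨j, y₁, h1, h2, h3⟩ | ⟨j, y₁, h1, h2, h3⟩)
    · exact Or.inl h.symm
    · exact Or.inr (Or.inl ⟨y₂, y₁, h1.symm, h3, h2⟩)
    · exact Or.inr (Or.inr (Or.inr ⟨j, y₁, h1, h2, h3⟩))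
    · exact Or.inr (Or.inr (Or.inl ⟨j, y₁, h1, h2, h3⟩))
  loopless := by
    constructor; rintro x (h | ⟨y₁, y₂, h1, h2, h3⟩ | ⟨j, y₁, h1, h2, h3⟩ | ⟨j, y₁, h1, h2, h3⟩)
    · exact H.loopless.irrefl _ h
    · rw [h2] at h3
      have hv : (y₁ : ℕ) = (y₂ : ℕ) := by
        have := Sum.inr.inj h3; omega
      have hy : y₁ = y₂ := Fin.ext hv
      rw [hy] at h1
      exact B.inner.loopless.irrefl _ h1
    · rw [h2] at h3
      have := hb j
      rw [h3] at this
      simp only [natOf, Sum.elim_inr] at this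
      omega
    · rw [h2] at h3
      have := hb j
      rw [h3] at this
      simp only [natOf, Sum.elim_inr] at this
      omega

def tbase (st : ℕ × SimpleGraph W) {ℓ b : ℕ} (c : Fin ℓ → W) (_ : Fin b → Fin b → Bool) : ℕ :=
  max st.1 (Finset.univ.sup fun j => natOf (c j))

lemma tbase_le (st : ℕ × SimpleGraph W) {ℓ b : ℕ} (c : Fin ℓ → W) (Bb : Fin b → Fin b → Bool) :
    ∀ j, natOf (c j) ≤ tbase st c Bb :=
  fun j => le_max_of_le_right (Finset.le_sup (f := fun j => natOf (c j)) (Finset.mem_univ j))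

lemma le_tbase (st : ℕ × SimpleGraph W) {ℓ b : ℕ} (c : Fin ℓ → W) (Bb : Fin b → Fin b → Bool) :
    st.1 ≤ tbase st c Bb := le_max_left _ _

open Classical in
/-- one step of the chain construction -/
noncomputable def chainStep (s : ℕ) (st : ℕ × SimpleGraph W) : ℕ × SimpleGraph W :=
  match Encodable.decode (α := Task) s with
  | none => st
  | some τ =>
    if hP : Function.Injective τ.2.2.1 ∧ Con F st.2 τ.2.2.1 (patOfTask τ) then
      (tbase st τ.2.2.1 τ.2.2.2.1 + τ.2.1,
        attach st.2 τ.2.2.1 (patOfTask τ) (tbase st τ.2.2.1 τ.2.2.2.1)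
          (tbase_le st τ.2.2.1 τ.2.2.2.1))
    else st

noncomputable def chain (st0 : ℕ × SimpleGraph W) : ℕ → ℕ × SimpleGraph W
  | 0 => st0
  | s + 1 => chainStep F s (chain st0 s)

/-- boundedness invariant -/
def Bnd (k : ℕ) (H : SimpleGraph W) : Prop := ∀ x y, H.Adj x y → natOf x ≤ k ∧ natOf y ≤ k

section ChainLemmas

variable (st0 : ℕ × SimpleGraph W)

lemma chainStep_adj_mono {s : ℕ} {st : ℕ × SimpleGraph W} {x y : W} (h : st.2.Adj x y) :
    (chainStep F s st).2.Adj x y := by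
  unfold chainStep
  cases hdec : Encodable.decode (α := Task) s with
  | none => exact h
  | some τ =>
    dsimp only
    split
    · exact Or.inl h
    · exact h

lemma chainStep_k_mono {s : ℕ} {st : ℕ × SimpleGraph W} : st.1 ≤ (chainStep F s st).1 := by
  unfold chainStep
  cases hdec : Encodable.decode (α := Task) s with
  | none => exact le_refl _
  | some τ =>
    dsimp only
    split
    · exact le_trans (le_tbase st τ.2.2.1 τ.2.2.2.1) (Nat.le_add_right _ _)
    · exact le_refl _

lemma chainStep_bnd {s : ℕ} {st : ℕ × SimpleGraph W} (hB : Bnd st.1 st.2) :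
    Bnd (chainStep F s st).1 (chainStep F s st).2 := by
  unfold chainStep
  cases hdec : Encodable.decode (α := Task) s with
  | none => exact hB
  | some τ =>
    dsimp only
    split
    · rintro x y (h | ⟨y₁, y₂, h1, rfl, rfl⟩ | ⟨j, y₁, h1, rfl, rfl⟩ | ⟨j, y₁, h1, rfl, rfl⟩)
      · have := hB x y h
        have hk := le_tbase st τ.2.2.1 τ.2.2.2.1
        constructor <;> omega
      · simp only [natOf, Sum.elim_inr]
        have := y₁.isLt
        have := y₂.isLt
        constructor <;> omega
      · have h2 := tbase_le st τ.2.2.1 τ.2.2.2.1 j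
        have := y₁.isLt
        simp only [natOf, Sum.elim_inr] at h2 ⊢
        constructor <;> omega
      · have h2 := tbase_le st τ.2.2.1 τ.2.2.2.1 j
        have := y₁.isLt
        simp only [natOf, Sum.elim_inr] at h2 ⊢
        constructor <;> omega
    · exact hB

lemma chainStep_stable {s : ℕ} {st : ℕ × SimpleGraph W} {x y : W}
    (hx : natOf x ≤ st.1) (hy : natOf y ≤ st.1) :
    (chainStep F s st).2.Adj x y ↔ st.2.Adj x y := by
  constructor
  · intro h
    unfold chainStep at h
    rcases hdec : Encodable.decode (α := Task) s with _ | τ <;> rw [hdec] at h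
    · exact h
    · dsimp only at h
      split at h
      · have hk := le_tbase st τ.2.2.1 τ.2.2.2.1
        rcases h with h | ⟨y₁, y₂, h1, rfl, rfl⟩ | ⟨j, y₁, h1, rfl, rfl⟩ |
          ⟨j, y₁, h1, rfl, rfl⟩
        · exact h
        · simp only [natOf, Sum.elim_inr] at hx; omega
        · simp only [natOf, Sum.elim_inr] at hy; omega
        · simp only [natOf, Sum.elim_inr] at hx; omega
      · exact h
  · exact chainStep_adj_mono F

lemma chainStep_ffree {s : ℕ} {st : ℕ × SimpleGraph W} (hB : Bnd st.1 st.2)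
    (hF : FFree F st.2) : FFree F (chainStep F s st).2 := by
  unfold chainStep
  cases hdec : Encodable.decode (α := Task) s with
  | none => exact hF
  | some τ =>
    dsimp only
    split
    · rename_i hP
      set base := tbase st τ.2.2.1 τ.2.2.2.1 with hbase
      set b := τ.2.1
      -- map the attached graph into the abstract amalgam
      refine ffree_comap F (fun x : W =>
        Sum.elim (fun a => (Sum.inl (Sum.inl a : W) : W ⊕ Fin b))
          (fun t => if h : base ≤ t ∧ t < base + b then Sum.inr ⟨t - base, by omega⟩
            else Sum.inl (Sum.inr t)) x) ?_ hP.2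
      have hlow : ∀ x : W, natOf x ≤ base →
          Sum.elim (fun a => (Sum.inl (Sum.inl a : W) : W ⊕ Fin b))
            (fun t => if h : base ≤ t ∧ t < base + b then Sum.inr ⟨t - base, by omega⟩
              else Sum.inl (Sum.inr t)) x = Sum.inl x := by
        rintro (a | t) hx
        · rfl
        · simp only [natOf, Sum.elim_inr] at hx
          simp only [Sum.elim_inr]
          rw [dif_neg]
          omega
      have hblk : ∀ y₁ : Fin b,
          Sum.elim (fun a => (Sum.inl (Sum.inl a : W) : W ⊕ Fin b))
            (fun t => if h : base ≤ t ∧ t < base + b then Sum.inr ⟨t - base, by omega⟩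
              else Sum.inl (Sum.inr t)) (Sum.inr (base + (y₁ : ℕ))) = Sum.inr y₁ := by
        intro y₁
        have := y₁.isLt
        simp only [Sum.elim_inr]
        rw [dif_pos (by omega)]
        congr 1
        exact Fin.ext (by simp)
      intro x y hxy
      beta_reduce
      revert hxy
      rintro (h | ⟨y₁, y₂, h1, rfl, rfl⟩ | ⟨j, y₁, h1, rfl, rfl⟩ | ⟨j, y₁, h1, rfl, rfl⟩)
      · have hb := hB x y h
        have hk := le_tbase st τ.2.2.1 τ.2.2.2.1
        rw [hlow x (le_trans hb.1 hk), hlow y (le_trans hb.2 hk)]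
        exact amal_adj_inl_inl.mpr h
      · rw [hblk y₁, hblk y₂]
        exact amal_adj_inr_inr.mpr h1
      · rw [hlow _ (tbase_le st τ.2.2.1 τ.2.2.2.1 j), hblk y₁]
        exact amal_adj_inl_inr.mpr ⟨j, rfl, h1⟩
      · rw [hlow _ (tbase_le st τ.2.2.1 τ.2.2.2.1 j), hblk y₁]
        exact amal_adj_inr_inl.mpr ⟨j, rfl, h1⟩
    · exact hF


lemma chain_adj_le {s s' : ℕ} (h : s ≤ s') {x y : W} (ha : (chain F st0 s).2.Adj x y) :
    (chain F st0 s').2.Adj x y := by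
  induction s', h using Nat.le_induction with
  | base => exact ha
  | succ n hn ih => exact chainStep_adj_mono F ih

lemma chain_k_le {s s' : ℕ} (h : s ≤ s') : (chain F st0 s).1 ≤ (chain F st0 s').1 := by
  induction s', h using Nat.le_induction with
  | base => exact le_refl _
  | succ n hn ih => exact le_trans ih (chainStep_k_mono F)

lemma chain_bnd (hB : Bnd st0.1 st0.2) : ∀ s, Bnd (chain F st0 s).1 (chain F st0 s).2 := by
  intro s
  induction s with
  | zero => exact hB
  | succ n ih => exact chainStep_bnd F ih

lemma chain_ffree (hB : Bnd st0.1 st0.2) (hF : FFree F st0.2) :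
    ∀ s, FFree F (chain F st0 s).2 := by
  intro s
  induction s with
  | zero => exact hF
  | succ n ih => exact chainStep_ffree F (chain_bnd F st0 hB n) ih

lemma chain_agree (hB : Bnd st0.1 st0.2) {s s' : ℕ} (h : s ≤ s') {x y : W}
    (hx : natOf x ≤ (chain F st0 s).1) (hy : natOf y ≤ (chain F st0 s).1) :
    (chain F st0 s').2.Adj x y ↔ (chain F st0 s).2.Adj x y := by
  induction s', h using Nat.le_induction with
  | base => exact Iff.rfl
  | succ n hn ih =>
    rw [← ih]
    exact chainStep_stable F (le_trans hx (chain_k_le F st0 hn))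
      (le_trans hy (chain_k_le F st0 hn))

/-- the union of the chain -/
noncomputable def limitG : SimpleGraph W where
  Adj x y := ∃ s, (chain F st0 s).2.Adj x y
  symm := by constructor; rintro x y ⟨s, h⟩; exact ⟨s, h.symm⟩
  loopless := by constructor; rintro x ⟨s, h⟩; exact (chain F st0 s).2.loopless.irrefl _ h

lemma limit_adj_iff (hB : Bnd st0.1 st0.2) {s : ℕ} {x y : W}
    (hx : natOf x ≤ (chain F st0 s).1) (hy : natOf y ≤ (chain F st0 s).1) :
    (limitG F st0).Adj x y ↔ (chain F st0 s).2.Adj x y := by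
  constructor
  · rintro ⟨s', h⟩
    rcases le_total s' s with hle | hle
    · exact chain_adj_le F st0 hle h
    · exact (chain_agree F st0 hB hle hx hy).mp h
  · intro h
    exact ⟨s, h⟩

lemma limit_ffree (hB : Bnd st0.1 st0.2) (hF : FFree F st0.2) : FFree F (limitG F st0) := by
  intro i
  constructor
  intro g
  classical
  let fS : Fin (m i) → Fin (m i) → ℕ := fun u v =>
    if h : (limitG F st0).Adj (g u) (g v) then Classical.choose h else 0
  let sM : ℕ := Finset.univ.sup (fun q : Fin (m i) × Fin (m i) => fS q.1 q.2)
  have hg : ∀ u v, (F i).Adj u v → (chain F st0 sM).2.Adj (g u) (g v) := by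
    intro u v huv
    have hl := g.map_adj huv
    have h1 : (chain F st0 (fS u v)).2.Adj (g u) (g v) := by
      simp only [fS]
      rw [dif_pos hl]
      exact Classical.choose_spec hl
    refine chain_adj_le F st0 ?_ h1
    exact Finset.le_sup (f := fun q : Fin (m i) × Fin (m i) => fS q.1 q.2)
      (Finset.mem_univ (u, v))
  exact (chain_ffree F st0 hB hF sM i).false ⟨g, fun {u v} huv => hg u v huv⟩

open Classical in
lemma limit_ec (hB : Bnd st0.1 st0.2) : EC F (limitG F st0) := by
  intro ℓ b c B hinj hcon
  let Bb : Fin b → Fin b → Bool := fun y y' => if B.inner.Adj y y' then true else false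
  let Rb : Fin ℓ → Fin b → Bool := fun j y => if B.cross j y then true else false
  let τ : Task := ⟨ℓ, b, (c, Bb, Rb)⟩
  let s : ℕ := Encodable.encode τ
  have hpat1 : ∀ y y', (patOfTask τ).inner.Adj y y' ↔ B.inner.Adj y y' := by
    intro y y'
    simp only [patOfTask, SimpleGraph.fromRel_adj]
    constructor
    · rintro ⟨hne, h | h⟩
      · simp only [τ, Bb] at h
        split at h
        · assumption
        · cases h
      · simp only [τ, Bb] at h
        split at h
        · exact (by assumption : B.inner.Adj y' y).symm
        · cases h
    · intro h
      refine ⟨B.inner.ne_of_adj h, Or.inl ?_⟩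
      simp only [τ, Bb, if_pos h]
  have hpat2 : ∀ j y, (patOfTask τ).cross j y ↔ B.cross j y := by
    intro j y
    simp only [patOfTask, τ, Rb]
    constructor
    · intro h
      split at h
      · assumption
      · cases h
    · intro h
      simp [if_pos h]
  have hP : Function.Injective τ.2.2.1 ∧ Con F (chain F st0 s).2 τ.2.2.1 (patOfTask τ) := by
    constructor
    · exact hinj
    · refine con_congr F hpat1 hpat2 ?_
      refine con_anti F (fun x y h => ?_) hcon
      exact ⟨s, h⟩
  have hstep : chain F st0 (s + 1) =
      (tbase (chain F st0 s) c Bb + b,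
        attach (chain F st0 s).2 c (patOfTask τ) (tbase (chain F st0 s) c Bb)
          (tbase_le (chain F st0 s) c Bb)) := by
    show chainStep F s (chain F st0 s) = _
    unfold chainStep
    rw [show Encodable.decode (α := Task) s = some τ from Encodable.encodek τ]
    dsimp only
    rw [dif_pos hP]
  set base := tbase (chain F st0 s) c Bb with hbase
  have hcle : ∀ j, natOf (c j) ≤ base := tbase_le (chain F st0 s) c Bb
  have hkle : (chain F st0 s).1 ≤ base := le_tbase (chain F st0 s) c Bb
  have hk1 : (chain F st0 (s + 1)).1 = base + b := by rw [hstep]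
  have hadj1 : ∀ x y, (chain F st0 (s + 1)).2.Adj x y ↔
      (attach (chain F st0 s).2 c (patOfTask τ) base (tbase_le (chain F st0 s) c Bb)).Adj x y := by
    intro x y; rw [hstep]
  refine ⟨fun y => Sum.inr (base + (y : ℕ)), ?_, ?_, ?_, ?_⟩
  · intro y y' h
    have := Sum.inr.inj h
    exact Fin.ext (by omega)
  · intro y j h
    have := hcle j
    rw [← h] at this
    simp only [natOf, Sum.elim_inr] at this
    omega
  · intro y y'
    have hx : natOf (Sum.inr (base + (y : ℕ)) : W) ≤ (chain F st0 (s + 1)).1 := by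
      rw [hk1]; simp only [natOf, Sum.elim_inr]; have := y.isLt; omega
    have hy : natOf (Sum.inr (base + (y' : ℕ)) : W) ≤ (chain F st0 (s + 1)).1 := by
      rw [hk1]; simp only [natOf, Sum.elim_inr]; have := y'.isLt; omega
    rw [limit_adj_iff F st0 hB hx hy, hadj1, ← hpat1 y y']
    constructor
    · rintro (h | ⟨y₁, y₂, h1, h2, h3⟩ | ⟨j, y₁, h1, h2, h3⟩ | ⟨j, y₁, h1, h2, h3⟩)
      · have := (chain_bnd F st0 hB s) _ _ h
        simp only [natOf, Sum.elim_inr] at this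
        omega
      · have e2 := Sum.inr.inj h2
        have e3 := Sum.inr.inj h3
        have hy1 : y₁ = y := Fin.ext (by omega)
        have hy2 : y₂ = y' := Fin.ext (by omega)
        rw [hy1, hy2] at h1
        exact h1
      · have := hcle j
        rw [← h2] at this
        simp only [natOf, Sum.elim_inr] at this
        omega
      · have := hcle j
        rw [← h2] at this
        simp only [natOf, Sum.elim_inr] at this
        omega
    · intro h
      exact Or.inr (Or.inl ⟨y, y', h, rfl, rfl⟩)
  · intro j y
    have hx : natOf (c j) ≤ (chain F st0 (s + 1)).1 := by
      rw [hk1]; exact le_trans (hcle j) (Nat.le_add_right _ _)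
    have hy : natOf (Sum.inr (base + (y : ℕ)) : W) ≤ (chain F st0 (s + 1)).1 := by
      rw [hk1]; simp only [natOf, Sum.elim_inr]; have := y.isLt; omega
    rw [limit_adj_iff F st0 hB hx hy, hadj1, ← hpat2 j y]
    constructor
    · rintro (h | ⟨y₁, y₂, h1, h2, h3⟩ | ⟨j', y₁, h1, h2, h3⟩ | ⟨j', y₁, h1, h2, h3⟩)
      · have := (chain_bnd F st0 hB s) _ _ h
        simp only [natOf, Sum.elim_inr] at this
        have := this.2
        omega
      · have := hcle j
        rw [h2] at this
        simp only [natOf, Sum.elim_inr] at this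
        omega
      · have e3 := Sum.inr.inj h3
        have hy1 : y₁ = y := Fin.ext (by omega)
        have hj : j' = j := hinj h2.symm
        rw [hy1, hj] at h1
        exact h1
      · have := hcle j
        rw [h3] at this
        simp only [natOf, Sum.elim_inr] at this
        omega
    · intro h
      exact Or.inr (Or.inr (Or.inl ⟨j, y, h, rfl, rfl⟩))

end ChainLemmas

/-! ### Base case: empty boundary -/

/-- over the empty boundary, a homomorphism into the amalgam stays on one side -/
lemma amal_empty_side {b : ℕ} {H : SimpleGraph W} {B : Pat 0 b} (hconn : ∀ i, (F i).Connected)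
    {i : ι} (g : F i →g Amal H Fin.elim0 B) :
    (∀ u, ∃ w, g u = Sum.inl w) ∨ (∀ u, ∃ z, g u = Sum.inr z) := by
  have hside : ∀ {a b' : Fin (m i)} (p : (F i).Walk a b'), (g a).isLeft = (g b').isLeft := by
    intro a b' p
    induction p with
    | nil => rfl
    | @cons u v w h2 p2 ih =>
      rw [← ih]
      have hA := g.map_adj h2
      rcases hgu : g u with wu | zu <;> rcases hgv : g v with wv | zv
      · simp [hgu, hgv]
      · rw [hgu, hgv] at hA
        rcases amal_adj_inl_inr.mp hA with ⟨j, _⟩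
        exact j.elim0
      · rw [hgu, hgv] at hA
        rcases amal_adj_inr_inl.mp hA with ⟨j, _⟩
        exact j.elim0
      · simp [hgu, hgv]
  have hne : Nonempty (Fin (m i)) := (hconn i).nonempty
  obtain ⟨u0⟩ := hne
  rcases hg0 : g u0 with w0 | z0
  · left
    intro u
    have hr := ((hconn i).preconnected u0 u)
    obtain ⟨p⟩ := hr
    have := hside p
    rw [hg0] at this
    simp only [Sum.isLeft_inl] at this
    rcases hgu : g u with w | z
    · exact ⟨w, rfl⟩
    · rw [hgu] at this; simp at this
  · right
    intro u
    have hr := ((hconn i).preconnected u0 u)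
    obtain ⟨p⟩ := hr
    have := hside p
    rw [hg0] at this
    simp only [Sum.isLeft_inr] at this
    rcases hgu : g u with w | z
    · rw [hgu] at this; simp at this
    · exact ⟨z, rfl⟩

lemma con_empty_transfer (hconn : ∀ i, (F i).Connected) {H H' : SimpleGraph W}
    (hfH' : FFree F H') {b : ℕ} {B : Pat 0 b}
    (h : Con F H Fin.elim0 B) : Con F H' Fin.elim0 B := by
  intro i
  constructor
  intro g
  rcases amal_empty_side F hconn g with hl | hr
  · -- lands in H' : contradiction with F-freeness of H'
    refine (hfH' i).false ⟨fun u => Classical.choose (hl u), ?_⟩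
    intro u v huv
    have hA := g.map_adj huv
    rw [(Classical.choose_spec (hl u) : g u = _), (Classical.choose_spec (hl v) : g v = _)] at hA
    exact amal_adj_inl_inl.mp hA
  · -- lands in the pattern : contradiction with Con over H
    refine (h i).false ⟨fun u => Sum.inr (Classical.choose (hr u)), ?_⟩
    intro u v huv
    have hA := g.map_adj huv
    rw [(Classical.choose_spec (hr u) : g u = _), (Classical.choose_spec (hr v) : g v = _)] at hA
    exact amal_adj_inr_inr.mpr (amal_adj_inr_inr.mp hA)

open Classical in
lemma realizes_empty_transfer (hconn : ∀ i, (F i).Connected) {H H' : SimpleGraph W}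
    (hH : FFree F H) (hH' : FFree F H') (hec' : EC F H')
    (p : Piece (m := m) 0) (hr : Realizes F H Fin.elim0 p) :
    Realizes F H' Fin.elim0 p := by
  obtain ⟨h, hbd, hint, hedge⟩ := hr
  -- the finite set of interior values
  set Y : Finset W := (Finset.univ.filter (fun u => p.2 u = some none)).image h with hY
  set b : ℕ := Fintype.card ↥Y with hb
  set eY : Fin b ≃ ↥Y := (Fintype.equivFin ↥Y).symm with heY
  set Bq : Pat 0 b :=
    ⟨{ Adj := fun z z' => H.Adj (eY z) (eY z')
       symm := ⟨fun z z' hzz => H.adj_symm hzz⟩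
       loopless := ⟨fun z hz => H.loopless.irrefl _ hz⟩ }, fun j _ => j.elim0⟩ with hBq
  have hconH : Con F H Fin.elim0 Bq := by
    refine con_of_fold F (fun z => (eY z : W)) ?_ ?_ hH
    · intro z z' hzz; exact hzz
    · intro j; exact j.elim0
  have hconH' : Con F H' Fin.elim0 Bq := con_empty_transfer F hconn hH' hconH
  obtain ⟨d, hdinj, hdav, hdin, hdcr⟩ := hec' 0 b Fin.elim0 Bq
    (fun u => u.elim0) hconH'
  have hmem : ∀ u, p.2 u = some none → h u ∈ Y := by
    intro u hu
    rw [hY]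
    exact Finset.mem_image.mpr ⟨u, Finset.mem_filter.mpr ⟨Finset.mem_univ u, hu⟩, rfl⟩
  refine ⟨fun u => if hu : p.2 u = some none then d (eY.symm ⟨h u, hmem u hu⟩)
    else Sum.inl 0, ?_, ?_, ?_⟩
  · intro u j
    exact j.elim0
  · intro u hu j
    exact j.elim0
  · intro u v huv hu hv
    have hvint : p.2 v = some none := by
      rcases ho : p.2 v with _ | oo
      · exact absurd ho hv
      · rcases oo with _ | j
        · rfl
        · exact j.elim0
    dsimp only
    rw [dif_pos hu, dif_pos hvint]
    rw [hdin]
    show H.Adj (eY (eY.symm ⟨h u, _⟩) : W) (eY (eY.symm ⟨h v, _⟩) : W)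
    rw [Equiv.apply_symm_apply, Equiv.apply_symm_apply]
    exact hedge u v huv hu hv

/-! ### The back-and-forth invariant and the extension step -/

lemma snoc_inj {a : ℕ} {c : Fin a → W} (hinj : Function.Injective c) {x : W}
    (hx : ∀ j, x ≠ c j) : Function.Injective (Fin.snoc c x : Fin (a + 1) → W) := by
  intro j j' h
  induction j using Fin.lastCases with
  | last =>
    induction j' using Fin.lastCases with
    | last => rfl
    | cast j' =>
      rw [Fin.snoc_last, Fin.snoc_castSucc] at h
      exact absurd h (hx j')
  | cast j =>
    induction j' using Fin.lastCases with
    | last =>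
      rw [Fin.snoc_last, Fin.snoc_castSucc] at h
      exact absurd h.symm (hx j)
    | cast j' =>
      rw [Fin.snoc_castSucc, Fin.snoc_castSucc] at h
      rw [hinj h]

noncomputable instance pieceFintype {ℓ : ℕ} : Fintype (Piece (m := m) ℓ) := by
  classical
  haveI := Fintype.ofFinite ι
  unfold Piece
  infer_instance

def INV (H H' : SimpleGraph W) {ℓ : ℕ} (c c' : Fin ℓ → W) : Prop :=
  Function.Injective c ∧ Function.Injective c' ∧
  (∀ j j', H.Adj (c j) (c j') ↔ H'.Adj (c' j) (c' j')) ∧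
  (∀ p : Piece (m := m) ℓ, Realizes F H c p ↔ Realizes F H' c' p)

open Classical in
lemma inv_step {H H' : SimpleGraph W} (hH : FFree F H) (hH' : FFree F H')
    (hec : EC F H) (hec' : EC F H') {a : ℕ} {c c' : Fin a → W}
    (hinv : INV F H H' c c') (x : W) (hx : ∀ j, x ≠ c j) :
    ∃ x', (∀ j, x' ≠ c' j) ∧ INV F H H' (Fin.snoc c x) (Fin.snoc c' x') := by
  classical
  haveI : Fintype ι := Fintype.ofFinite ι
  obtain ⟨hinjc, hinjc', hiso, hpieces⟩ := hinv
  set cN : Fin (a + 1) → W := Fin.snoc c x with hcNdef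
  have hinjN : Function.Injective cN := snoc_inj hinjc hx
  have hcNc : ∀ j : Fin a, cN j.castSucc = c j := by intro j; rw [hcNdef]; simp
  have hcNl : cN (Fin.last a) = x := by rw [hcNdef]; simp
  -- the finite set of interior values of chosen realizations
  set intim : Piece (m := m) (a + 1) → Finset W := fun p =>
    if hr : Realizes F H cN p then
      (Finset.univ.filter (fun u => p.2 u = some none)).image (Classical.choose hr)
    else ∅ with hintim
  set X : Finset W := insert x (Finset.univ.biUnion intim) with hXdef
  have hxX : x ∈ X := Finset.mem_insert_self _ _
  set b : ℕ := Fintype.card ↥X with hbdef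
  set eX : Fin b ≃ ↥X := (Fintype.equivFin ↥X).symm with heXdef
  set Bh : Pat a b :=
    ⟨{ Adj := fun z z' => H.Adj (eX z) (eX z')
       symm := ⟨fun z z' hzz => H.adj_symm hzz⟩
       loopless := ⟨fun z hz => H.loopless.irrefl _ hz⟩ }, fun j z => H.Adj (c j) (eX z)⟩ with hBhdef
  have hconB : Con F H c Bh :=
    con_of_fold F (fun z => (eX z : W)) (fun _ _ h => h) (fun _ _ h => h) hH
  have hconB' : Con F H' c' Bh :=
    con_transfer F hinjc' (fun j j' h => (hiso j j').mpr h)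
      (fun p hp => (hpieces p).mpr hp) hconB
  obtain ⟨d, hdinj, hdav, hdin, hdcr⟩ := hec' a b c' Bh hinjc' hconB'
  set x' : W := d (eX.symm ⟨x, hxX⟩) with hx'def
  have hx'av : ∀ j, x' ≠ c' j := fun j => hdav _ j
  set cN' : Fin (a + 1) → W := Fin.snoc c' x' with hcN'def
  have hinjN' : Function.Injective cN' := snoc_inj hinjc' hx'av
  have hcN'c : ∀ j : Fin a, cN' j.castSucc = c' j := by intro j; rw [hcN'def]; simp
  have hcN'l : cN' (Fin.last a) = x' := by rw [hcN'def]; simp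
  -- adjacency dictionary for d
  have hdinX : ∀ (w w' : W) (hw : w ∈ X) (hw' : w' ∈ X),
      H'.Adj (d (eX.symm ⟨w, hw⟩)) (d (eX.symm ⟨w', hw'⟩)) ↔ H.Adj w w' := by
    intro w w' hw hw'
    rw [hdin]
    show H.Adj (↑(eX (eX.symm ⟨w, hw⟩))) (↑(eX (eX.symm ⟨w', hw'⟩))) ↔ _
    rw [Equiv.apply_symm_apply, Equiv.apply_symm_apply]
  have hdcrX : ∀ (j : Fin a) (w : W) (hw : w ∈ X),
      H'.Adj (c' j) (d (eX.symm ⟨w, hw⟩)) ↔ H.Adj (c j) w := by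
    intro j w hw
    rw [hdcr]
    show H.Adj (c j) (↑(eX (eX.symm ⟨w, hw⟩))) ↔ _
    rw [Equiv.apply_symm_apply]
  -- the extended induced isomorphism
  have hisoN : ∀ j j' : Fin (a + 1), H.Adj (cN j) (cN j') ↔ H'.Adj (cN' j) (cN' j') := by
    intro j j'
    induction j using Fin.lastCases with
    | last =>
      induction j' using Fin.lastCases with
      | last =>
        rw [hcNl, hcN'l]
        exact iff_of_false (H.loopless.irrefl x) (H'.loopless.irrefl x')
      | cast j' =>
        rw [hcNl, hcN'l, hcNc, hcN'c, H.adj_comm, H'.adj_comm, hx'def]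
        exact (hdcrX j' x hxX).symm
    | cast j =>
      induction j' using Fin.lastCases with
      | last =>
        rw [hcNl, hcN'l, hcNc, hcN'c, hx'def]
        exact (hdcrX j x hxX).symm
      | cast j' =>
        rw [hcNc, hcN'c, hcNc, hcN'c]
        exact hiso j j'
  -- forward transfer of pieces
  have hfwd : ∀ p : Piece (m := m) (a + 1), Realizes F H cN p → Realizes F H' cN' p := by
    intro p hr
    set hp : Fin (m p.1) → W := Classical.choose hr with hhp
    obtain ⟨hbd, hint, hedge⟩ := Classical.choose_spec hr
    have hmem : ∀ u, p.2 u = some none → hp u ∈ X := by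
      intro u hu
      rw [hXdef]
      refine Finset.mem_insert_of_mem (Finset.mem_biUnion.mpr ⟨p, Finset.mem_univ p, ?_⟩)
      rw [hintim]
      dsimp only
      rw [dif_pos hr]
      exact Finset.mem_image.mpr ⟨u, Finset.mem_filter.mpr ⟨Finset.mem_univ u, hu⟩, rfl⟩
    set dd : W → W := fun w => if hw : w ∈ X then d (eX.symm ⟨w, hw⟩) else Sum.inl 0 with hdd
    have hddX : ∀ (w : W) (hw : w ∈ X), dd w = d (eX.symm ⟨w, hw⟩) := by
      intro w hw
      rw [hdd]
      dsimp only
      rw [dif_pos hw]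
    refine ⟨fun u => match p.2 u with
      | some (some j) => cN' j
      | some none => dd (hp u)
      | none => Sum.inl 0, ?_, ?_, ?_⟩
    · intro u j hj
      dsimp only
      rw [hj]
    · intro u hu j
      dsimp only
      rw [hu, hddX (hp u) (hmem u hu)]
      induction j using Fin.lastCases with
      | last =>
        rw [hcN'l, hx'def]
        intro hcon
        have h1 := hdinj hcon
        have h2 : hp u = x := congrArg Subtype.val (eX.symm.injective h1)
        exact hint u hu (Fin.last a) (by rw [hcNl]; exact h2)
      | cast j0 =>
        rw [hcN'c]
        exact hdav _ j0
    · intro u v huv hu hv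
      dsimp only
      rw [hu, hddX (hp u) (hmem u hu)]
      rcases ho : p.2 v with _ | oo
      · exact absurd ho hv
      · rcases oo with _ | j
        · -- interior-interior
          dsimp only
          rw [hddX (hp v) (hmem v ho)]
          rw [hdinX]
          exact hedge u v huv hu (by rw [ho]; simp)
        · -- interior-boundary
          dsimp only
          have hpv : hp v = cN j := hbd v j ho
          have hHadj : H.Adj (hp u) (cN j) := by
            rw [← hpv]
            exact hedge u v huv hu (by rw [ho]; simp)
          induction j using Fin.lastCases with
          | last =>
            rw [hcN'l, hx'def]
            rw [hdinX]
            rw [hcNl] at hHadj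
            exact hHadj
          | cast j0 =>
            rw [hcN'c]
            refine H'.adj_symm ?_
            rw [hdcrX]
            rw [hcNc] at hHadj
            exact hHadj.symm
  -- backward transfer of pieces
  have hbwd : ∀ q : Piece (m := m) (a + 1), Realizes F H' cN' q → Realizes F H cN q := by
    intro q hq
    obtain ⟨k, kbd, kint, kedge⟩ := hq
    set Y : Finset W := (Finset.univ.filter (fun u => q.2 u = some none)).image k with hYdef
    set bq : ℕ := Fintype.card ↥Y with hbqdef
    set eY : Fin bq ≃ ↥Y := (Fintype.equivFin ↥Y).symm with heYdef
    set Bq : Pat (a + 1) bq :=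
      ⟨{ Adj := fun z z' => H'.Adj (eY z) (eY z')
         symm := ⟨fun z z' hzz => H'.adj_symm hzz⟩
         loopless := ⟨fun z hz => H'.loopless.irrefl _ hz⟩ }, fun j z => H'.Adj (cN' j) (eY z)⟩ with hBqdef
    have hconq' : Con F H' cN' Bq :=
      con_of_fold F (fun z => (eY z : W)) (fun _ _ h => h) (fun _ _ h => h) hH'
    have hconq : Con F H cN Bq :=
      con_transfer F hinjN (fun j j' h => (hisoN j j').mp h) (fun p hp => hfwd p hp) hconq'
    obtain ⟨dq, hdqinj, hdqav, hdqin, hdqcr⟩ := hec (a + 1) bq cN Bq hinjN hconq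
    have hmem : ∀ u, q.2 u = some none → k u ∈ Y := by
      intro u hu
      rw [hYdef]
      exact Finset.mem_image.mpr ⟨u, Finset.mem_filter.mpr ⟨Finset.mem_univ u, hu⟩, rfl⟩
    have hdqinY : ∀ (w w' : W) (hw : w ∈ Y) (hw' : w' ∈ Y),
        H.Adj (dq (eY.symm ⟨w, hw⟩)) (dq (eY.symm ⟨w', hw'⟩)) ↔ H'.Adj w w' := by
      intro w w' hw hw'
      rw [hdqin]
      show H'.Adj (↑(eY (eY.symm ⟨w, hw⟩))) (↑(eY (eY.symm ⟨w', hw'⟩))) ↔ _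
      rw [Equiv.apply_symm_apply, Equiv.apply_symm_apply]
    have hdqcrY : ∀ (j : Fin (a + 1)) (w : W) (hw : w ∈ Y),
        H.Adj (cN j) (dq (eY.symm ⟨w, hw⟩)) ↔ H'.Adj (cN' j) w := by
      intro j w hw
      rw [hdqcr]
      show H'.Adj (cN' j) (↑(eY (eY.symm ⟨w, hw⟩))) ↔ _
      rw [Equiv.apply_symm_apply]
    set ddq : W → W := fun w => if hw : w ∈ Y then dq (eY.symm ⟨w, hw⟩) else Sum.inl 0 with hddq
    have hddqY : ∀ (w : W) (hw : w ∈ Y), ddq w = dq (eY.symm ⟨w, hw⟩) := by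
      intro w hw
      rw [hddq]
      dsimp only
      rw [dif_pos hw]
    refine ⟨fun u => match q.2 u with
      | some (some j) => cN j
      | some none => ddq (k u)
      | none => Sum.inl 0, ?_, ?_, ?_⟩
    · intro u j hj
      dsimp only
      rw [hj]
    · intro u hu j
      dsimp only
      rw [hu, hddqY (k u) (hmem u hu)]
      exact hdqav _ j
    · intro u v huv hu hv
      dsimp only
      rw [hu, hddqY (k u) (hmem u hu)]
      rcases ho : q.2 v with _ | oo
      · exact absurd ho hv
      · rcases oo with _ | j
        · dsimp only
          rw [hddqY (k v) (hmem v ho)]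
          rw [hdqinY]
          exact kedge u v huv hu (by rw [ho]; simp)
        · dsimp only
          have hkv : k v = cN' j := kbd v j ho
          have hadj : H'.Adj (cN' j) (k u) := by
            rw [← hkv]
            exact (kedge u v huv hu (by rw [ho]; simp)).symm
          refine H.adj_symm ?_
          rw [hdqcrY]
          exact hadj
  exact ⟨x', hx'av, hinjN, hinjN', hisoN, fun p => ⟨hfwd p, hbwd p⟩⟩

/-! ### The back-and-forth embedding -/

lemma inv_base (hconn : ∀ i, (F i).Connected) {H H' : SimpleGraph W}
    (hH : FFree F H) (hH' : FFree F H') (hec : EC F H) (hec' : EC F H') :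
    INV F H H' (Fin.elim0) (Fin.elim0) := by
  refine ⟨fun j => j.elim0, fun j => j.elim0, fun j => j.elim0, fun p => ?_⟩
  constructor
  · exact realizes_empty_transfer F hconn hH hH' hec' p
  · exact realizes_empty_transfer F hconn hH' hH hec p

open Classical in
noncomputable def forthFun {H H' : SimpleGraph W} (e : ℕ ≃ W) (hH : FFree F H)
    (hH' : FFree F H') (hec : EC F H) (hec' : EC F H') : (k : ℕ) → (Fin k → W)
  | 0 => Fin.elim0
  | k + 1 =>
    Fin.snoc (forthFun e hH hH' hec hec' k)
      (if h : INV F H H' (fun j : Fin k => e (j : ℕ)) (forthFun e hH hH' hec hec' k) then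
        Classical.choose (inv_step F hH hH' hec hec' h (e k)
          (fun j hEq => (Nat.ne_of_lt j.isLt) ((e.injective hEq).symm)))
      else Sum.inl 0)

lemma forth_snoc_dom (e : ℕ ≃ W) (k : ℕ) :
    (fun j : Fin (k + 1) => e (j : ℕ)) = Fin.snoc (fun j : Fin k => e (j : ℕ)) (e k) := by
  funext j
  induction j using Fin.lastCases with
  | last => simp
  | cast j0 => simp

lemma forth_inv (hconn : ∀ i, (F i).Connected) {H H' : SimpleGraph W} (e : ℕ ≃ W)
    (hH : FFree F H) (hH' : FFree F H') (hec : EC F H) (hec' : EC F H') (k : ℕ) :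
    INV F H H' (fun j : Fin k => e (j : ℕ)) (forthFun F e hH hH' hec hec' k) := by
  induction k with
  | zero =>
    have h0 : (fun j : Fin 0 => e (j : ℕ)) = Fin.elim0 := by
      funext j; exact j.elim0
    rw [show forthFun F e hH hH' hec hec' 0 = Fin.elim0 from rfl, h0]
    exact inv_base F hconn hH hH' hec hec'
  | succ k ih =>
    rw [forth_snoc_dom e k]
    show INV F H H' _ (Fin.snoc (forthFun F e hH hH' hec hec' k) _)
    split
    · rename_i hI
      exact (Classical.choose_spec (inv_step F hH hH' hec hec' hI (e k)
        (fun j hEq => (Nat.ne_of_lt j.isLt) ((e.injective hEq).symm)))).2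
    · rename_i hI
      exact absurd ih hI

lemma forth_stab {H H' : SimpleGraph W} (e : ℕ ≃ W) (hH : FFree F H)
    (hH' : FFree F H') (hec : EC F H) (hec' : EC F H') :
    ∀ (k' k : ℕ) (h : k < k'), forthFun F e hH hH' hec hec' k' ⟨k, h⟩ =
      forthFun F e hH hH' hec hec' (k + 1) (Fin.last k) := by
  intro k'
  induction k' with
  | zero => intro k h; exact absurd h (Nat.not_lt_zero k)
  | succ n ih =>
    intro k h
    rcases Nat.lt_succ_iff_lt_or_eq.mp h with h' | rfl
    · show (Fin.snoc (forthFun F e hH hH' hec hec' n) _ : Fin (n + 1) → W) _ = _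
      have hcast : (⟨k, h⟩ : Fin (n + 1)) = (⟨k, h'⟩ : Fin n).castSucc := rfl
      rw [hcast, Fin.snoc_castSucc]
      exact ih k h'
    · rfl

lemma forth_embedding (hconn : ∀ i, (F i).Connected) {H H' : SimpleGraph W}
    (hH : FFree F H) (hH' : FFree F H') (hec : EC F H) (hec' : EC F H') :
    ∃ f : W → W, Function.Injective f ∧ ∀ u v, H'.Adj (f u) (f v) ↔ H.Adj u v := by
  classical
  set e : ℕ ≃ W := (Denumerable.eqv W).symm with he
  set f : W → W := fun w => forthFun F e hH hH' hec hec' (e.symm w + 1) (Fin.last _) with hf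
  have key : ∀ u v : W, ∀ N : ℕ, ∀ (hu : e.symm u < N) (hv : e.symm v < N),
      (forthFun F e hH hH' hec hec' N ⟨e.symm u, hu⟩ = f u) ∧
      (forthFun F e hH hH' hec hec' N ⟨e.symm v, hv⟩ = f v) := by
    intro u v N hu hv
    constructor
    · rw [hf]; exact forth_stab F e hH hH' hec hec' N (e.symm u) hu
    · rw [hf]; exact forth_stab F e hH hH' hec hec' N (e.symm v) hv
  refine ⟨f, ?_, ?_⟩
  · intro u v hEq
    set N : ℕ := max (e.symm u) (e.symm v) + 1 with hN
    have hu : e.symm u < N := by omega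
    have hv : e.symm v < N := by omega
    obtain ⟨h1, h2⟩ := key u v N hu hv
    have hI := forth_inv F hconn e hH hH' hec hec' N
    have hinj := hI.2.1
    have : (⟨e.symm u, hu⟩ : Fin N) = ⟨e.symm v, hv⟩ := by
      apply hinj
      rw [h1, h2, hEq]
    have h3 : e.symm u = e.symm v := by
      have := congrArg Fin.val this
      exact this
    calc u = e (e.symm u) := (e.apply_symm_apply u).symm
    _ = e (e.symm v) := by rw [h3]
    _ = v := e.apply_symm_apply v
  · intro u v
    set N : ℕ := max (e.symm u) (e.symm v) + 1 with hN
    have hu : e.symm u < N := by omega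
    have hv : e.symm v < N := by omega
    obtain ⟨h1, h2⟩ := key u v N hu hv
    have hI := forth_inv F hconn e hH hH' hec hec' N
    have hiso := hI.2.2.1 ⟨e.symm u, hu⟩ ⟨e.symm v, hv⟩
    rw [h1, h2] at hiso
    have heu : e ((⟨e.symm u, hu⟩ : Fin N) : ℕ) = u := e.apply_symm_apply u
    have hev : e ((⟨e.symm v, hv⟩ : Fin N) : ℕ) = v := e.apply_symm_apply v
    dsimp only at hiso
    rw [heu, hev] at hiso
    exact hiso.symm

/-! ### Pushing a countable graph onto the vertex pool -/

def pushG {V : Type u} (G : SimpleGraph V) (f : V → ℕ) (hf : Function.Injective f) :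
    SimpleGraph W where
  Adj x y := ∃ u v, G.Adj u v ∧ x = Sum.inl (f u) ∧ y = Sum.inl (f v)
  symm := by constructor; rintro x y ⟨u, v, h, rfl, rfl⟩; exact ⟨v, u, h.symm, rfl, rfl⟩
  loopless := by
    constructor; rintro x ⟨u, v, h, rfl, h2⟩
    have : f u = f v := Sum.inl.inj h2
    exact G.loopless.irrefl v (by rwa [hf this] at h)

lemma pushG_adj_iff {V : Type u} {G : SimpleGraph V} {f : V → ℕ}
    {hf : Function.Injective f} {u v : V} :
    (pushG G f hf).Adj (Sum.inl (f u)) (Sum.inl (f v)) ↔ G.Adj u v := by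
  constructor
  · rintro ⟨a, b', h, h1, h2⟩
    have ha : a = u := hf (Sum.inl.inj h1).symm
    have hb : b' = v := hf (Sum.inl.inj h2).symm
    rwa [ha, hb] at h
  · intro h
    exact ⟨u, v, h, rfl, rfl⟩

lemma pushG_bnd {V : Type u} (G : SimpleGraph V) (f : V → ℕ) (hf : Function.Injective f) :
    Bnd 0 (pushG G f hf) := by
  rintro x y ⟨u, v, h, rfl, rfl⟩
  exact ⟨le_refl 0, le_refl 0⟩

lemma exists_adj (hconn : ∀ i, (F i).Connected) (hm : ∀ i, 2 ≤ m i) (i : ι)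
    (u : Fin (m i)) : ∃ v, (F i).Adj u v := by
  haveI : Nontrivial (Fin (m i)) := Fin.nontrivial_iff_two_le.mpr (hm i)
  obtain ⟨u', hu'⟩ := exists_ne u
  obtain ⟨p⟩ := (hconn i).preconnected u u'
  cases p with
  | nil => exact absurd rfl hu'
  | cons h p => exact ⟨_, h⟩

lemma pushG_ffree {V : Type u} (hconn : ∀ i, (F i).Connected) (hm : ∀ i, 2 ≤ m i)
    (G : SimpleGraph V) (f : V → ℕ) (hf : Function.Injective f)
    (hG : ∀ i, IsEmpty (F i →g G)) : FFree F (pushG G f hf) := by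
  intro i
  constructor
  intro g
  classical
  have hval : ∀ u : Fin (m i), ∃ a : V, g u = Sum.inl (f a) := by
    intro u
    obtain ⟨v, hv⟩ := exists_adj F hconn hm i u
    obtain ⟨a, b', _, h1, _⟩ := g.map_adj hv
    exact ⟨a, h1⟩
  set ψ : Fin (m i) → V := fun u => Classical.choose (hval u) with hψ
  refine (hG i).false ⟨ψ, ?_⟩
  intro u v huv
  obtain ⟨a, b', hab, h1, h2⟩ := g.map_adj huv
  have hu : g u = Sum.inl (f (ψ u)) := Classical.choose_spec (hval u)
  have hv : g v = Sum.inl (f (ψ v)) := Classical.choose_spec (hval v)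
  have ha : a = ψ u := hf (Sum.inl.inj (h1.symm.trans hu))
  have hb : b' = ψ v := hf (Sum.inl.inj (h2.symm.trans hv))
  rwa [ha, hb] at hab

lemma bot_ffree (hconn : ∀ i, (F i).Connected) (hm : ∀ i, 2 ≤ m i) :
    FFree F (⊥ : SimpleGraph W) := by
  intro i
  constructor
  intro g
  obtain ⟨u0⟩ := (hconn i).nonempty
  obtain ⟨v, hv⟩ := exists_adj F hconn hm i u0
  exact g.map_adj hv

lemma bot_bnd : Bnd 0 (⊥ : SimpleGraph W) := by
  rintro x y h
  exact absurd h (by simp)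

end CSS

open CSS in
/-- For every finite family `F` of finite connected simple graphs, the class
`Forb_h(F)` of countable graphs admitting no homomorphism from any member of `F`
contains an embedding-universal graph. -/
theorem forbh_graphs_universal {ι : Type} [Finite ι] {m : ι → ℕ}
    (F : ∀ i : ι, SimpleGraph (Fin (m i))) (hconn : ∀ i, (F i).Connected) :
    ∃ (W : Type) (_ : Countable W) (U : SimpleGraph W),
      (∀ i, IsEmpty (F i →g U)) ∧
      ∀ (V : Type u) [Countable V] (G : SimpleGraph V),
        (∀ i, IsEmpty (F i →g G)) → Nonempty (G ↪g U) := by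
  classical
  by_cases hdeg : ∃ i, m i ≤ 1
  · -- degenerate case : some member is a single vertex
    obtain ⟨i0, hi0⟩ := hdeg
    refine ⟨Empty, inferInstance, ⊥, ?_, ?_⟩
    · intro i
      constructor
      intro g
      obtain ⟨u0⟩ := (hconn i).nonempty
      exact (g u0).elim
    · intro V _ G hG
      haveI : IsEmpty V := by
        constructor
        intro v
        refine (hG i0).false ⟨fun _ => v, ?_⟩
        intro a b hab
        have : a = b := by
          have h1 := a.isLt
          have h2 := b.isLt
          exact Fin.ext (by omega)
        rw [this] at hab
        exact absurd hab ((F i0).loopless.irrefl b)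
      exact ⟨⟨⟨fun v => isEmptyElim v, fun {a} => isEmptyElim a⟩, fun {a b} => isEmptyElim a⟩⟩
  · -- main case
    have hm : ∀ i, 2 ≤ m i := by
      intro i
      by_contra hlt
      push_neg at hlt
      exact hdeg ⟨i, by omega⟩
    set U : SimpleGraph CSS.W := limitG F (0, ⊥) with hU
    have hUff : FFree F U := limit_ffree F (0, ⊥) (bot_bnd) (bot_ffree F hconn hm)
    have hUec : EC F U := limit_ec F (0, ⊥) (bot_bnd)
    refine ⟨CSS.W, inferInstance, U, hUff, ?_⟩
    intro V _ G hG
    obtain ⟨f0, hf0⟩ := (countable_iff_exists_injective V).mp inferInstance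
    set Gp : SimpleGraph CSS.W := pushG G f0 hf0 with hGp
    have hGpff : FFree F Gp := pushG_ffree F hconn hm G f0 hf0 hG
    have hGpbnd : Bnd 0 Gp := pushG_bnd G f0 hf0
    set Gs : SimpleGraph CSS.W := limitG F (0, Gp) with hGs
    have hGsff : FFree F Gs := limit_ffree F (0, Gp) hGpbnd hGpff
    have hGsec : EC F Gs := limit_ec F (0, Gp) hGpbnd
    -- Gp is an induced subgraph of Gs on the inl part
    have hpres : ∀ a b : ℕ, Gs.Adj (Sum.inl a) (Sum.inl b) ↔ Gp.Adj (Sum.inl a) (Sum.inl b) := by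
      intro a b
      have := limit_adj_iff F (0, Gp) hGpbnd (s := 0)
        (x := (Sum.inl a : CSS.W)) (y := (Sum.inl b : CSS.W))
        (by simp [natOf, chain]) (by simp [natOf, chain])
      rw [hGs]
      rw [this]
      rfl
    obtain ⟨f, hfinj, hfiso⟩ := forth_embedding F hconn hGsff hUff hGsec hUec
    refine ⟨⟨⟨fun v => f (Sum.inl (f0 v)), ?_⟩, ?_⟩⟩
    · intro u v h
      have h1 := hfinj h
      exact hf0 (Sum.inl.inj h1)
    · intro u v
      show U.Adj (f (Sum.inl (f0 u))) (f (Sum.inl (f0 v))) ↔ G.Adj u v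
      rw [hfiso]
      rw [show Gs.Adj (Sum.inl (f0 u)) (Sum.inl (f0 v)) ↔ Gp.Adj (Sum.inl (f0 u)) (Sum.inl (f0 v))
        from hpres (f0 u) (f0 v)]
      exact pushG_adj_iff
end

section
/- For every odd integer l ≥ 3 there exists a simple graph U on a countable type such that: (a) for every odd j with 3 ≤ j ≤ l there is no graph homomorphism from the cycle graph C_j into U, and (b) every simple graph G on a countable type admitting no graph homomorphism from C_j for any odd j with 3 ≤ j ≤ l has a graph embedding (preserving adjacency and non-adjacency) into U. -/
universe u

namespace ForbOdd

/-- A "walk-promise structure" with cap `L`. -/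
structure IsStruc (L : ℕ) {V : Type*} (W : ℕ → V → V → Prop) : Prop where
  wle : ∀ {n u v}, W n u v → n ≤ L
  zero : ∀ u v, W 0 u v ↔ u = v
  symm : ∀ {n u v}, W n u v → W n v u
  comp : ∀ {q r u v z}, W q u v → W r v z → q + r ≤ L → W (q + r) u z
  nodd : ∀ {q r u v}, W q u v → W r u v → Odd (q + r) → q + r ≤ L → False

theorem IsStruc.refl {L : ℕ} {V : Type*} {W : ℕ → V → V → Prop} (h : IsStruc L W) (u : V) :
    W 0 u u := (h.zero u u).2 rfl

/-- A one-point extension type over a subset `A` of a structure. -/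
structure IsType (L : ℕ) {V : Type*} (W : ℕ → V → V → Prop) (A : Set V)
    (t : ℕ → V → Prop) (s : ℕ → Prop) : Prop where
  mem : ∀ {n b}, t n b → b ∈ A
  tle : ∀ {n b}, t n b → n ≤ L
  sle : ∀ {n}, s n → n ≤ L
  t0 : ∀ b, ¬ t 0 b
  s0 : s 0
  comp1 : ∀ {q r b c}, t q b → W r b c → c ∈ A → q + r ≤ L → t (q + r) c
  comp2 : ∀ {q r b c}, t q b → t r c → q + r ≤ L → W (q + r) b c
  comp3 : ∀ {q r b}, s q → t r b → q + r ≤ L → t (q + r) b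
  comp4 : ∀ {q r b}, t q b → t r b → q + r ≤ L → s (q + r)
  comp5 : ∀ {q r}, s q → s r → q + r ≤ L → s (q + r)
  nodd1 : ∀ {q r b}, t q b → t r b → Odd (q + r) → q + r ≤ L → False
  nodd2 : ∀ {q r}, s q → s r → Odd (q + r) → q + r ≤ L → False

/-- Promises from the new point to old points, via shortest routes through `A`. -/
def extD (L : ℕ) {V : Type*} (E : ℕ → V → V → Prop) (t : ℕ → V → Prop) (n : ℕ) (b : V) :
    Prop :=
  n ≤ L ∧ ∃ a q r, q + r = n ∧ t q a ∧ E r a b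

/-- The one-point amalgam. -/
def extend (L : ℕ) {V : Type*} (E : ℕ → V → V → Prop) (p : V) (t : ℕ → V → Prop)
    (s : ℕ → Prop) : ℕ → V → V → Prop := fun n u v =>
  (u ≠ p ∧ v ≠ p ∧ E n u v) ∨ (u = p ∧ v = p ∧ s n) ∨
  (u = p ∧ v ≠ p ∧ extD L E t n v) ∨ (u ≠ p ∧ v = p ∧ extD L E t n u)

section Amalgam

variable {L : ℕ} {V : Type*} {E : ℕ → V → V → Prop} {A : Set V} {p : V}
  {t : ℕ → V → Prop} {s : ℕ → Prop}

theorem extend_old (hu : u ≠ p) (hv : v ≠ p) :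
    extend L E p t s n u v ↔ E n u v := by
  simp [extend, hu, hv]

theorem extend_diag : extend L E p t s n p p ↔ s n := by
  simp [extend]

theorem extend_new (hv : v ≠ p) : extend L E p t s n p v ↔ extD L E t n v := by
  simp [extend, hv]

theorem extend_new' (hu : u ≠ p) : extend L E p t s n u p ↔ extD L E t n u := by
  simp [extend, hu]

theorem extend_exact (hE : IsStruc L E) (hT : IsType L E A t s) (hv : v ≠ p) (hvA : v ∈ A) :
    extend L E p t s n p v ↔ t n v := by
  rw [extend_new hv]
  constructor
  · rintro ⟨hn, a, q, r, hqr, ht, hEr⟩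
    exact hqr ▸ hT.comp1 ht hEr hvA (hqr ▸ hn)
  · intro h
    exact ⟨hT.tle h, v, n, 0, by omega, h, hE.refl v⟩

theorem extend_isStruc (hE : IsStruc L E) (hT : IsType L E A t s) :
    IsStruc L (extend L E p t s) := by
  constructor
  · rintro n u v (⟨_, _, h⟩ | ⟨_, _, h⟩ | ⟨_, _, h, _⟩ | ⟨_, _, h, _⟩)
    · exact hE.wle h
    · exact hT.sle h
    · exact h
    · exact h
  · intro u v
    constructor
    · rintro (⟨_, _, h⟩ | ⟨hu, hv, _⟩ | ⟨_, _, _, a, q, r, hqr, ht, _⟩ |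
        ⟨_, _, _, a, q, r, hqr, ht, _⟩)
      · exact (hE.zero u v).1 h
      · exact hu.trans hv.symm
      · obtain rfl : q = 0 := by omega
        exact absurd ht (hT.t0 a)
      · obtain rfl : q = 0 := by omega
        exact absurd ht (hT.t0 a)
    · rintro rfl
      by_cases hu : u = p
      · subst hu; exact Or.inr (Or.inl ⟨rfl, rfl, hT.s0⟩)
      · exact Or.inl ⟨hu, hu, hE.refl u⟩
  · rintro n u v (⟨hu, hv, h⟩ | ⟨hu, hv, h⟩ | ⟨hu, hv, h⟩ | ⟨hu, hv, h⟩)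
    · exact Or.inl ⟨hv, hu, hE.symm h⟩
    · exact Or.inr (Or.inl ⟨hv, hu, h⟩)
    · exact Or.inr (Or.inr (Or.inr ⟨hv, hu, h⟩))
    · exact Or.inr (Or.inr (Or.inl ⟨hv, hu, h⟩))
  · rintro q r u v z h1 h2 hL
    by_cases hu : u = p <;> by_cases hv : v = p <;> by_cases hz : z = p
    · subst hu hv hz
      rw [extend_diag] at h1 h2 ⊢
      exact hT.comp5 h1 h2 hL
    · subst hu hv
      rw [extend_diag] at h1; rw [extend_new hz] at h2; rw [extend_new hz]
      obtain ⟨_, a, q1, r1, hq1, ht1, hE1⟩ := h2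
      exact ⟨hL, a, q + q1, r1, by omega, hT.comp3 h1 ht1 (by omega), hE1⟩
    · subst hu hz
      rw [extend_new hv] at h1; rw [extend_new' hv] at h2; rw [extend_diag]
      obtain ⟨_, a1, q1, r1, hq1, ht1, hE1⟩ := h1
      obtain ⟨_, a2, q2, r2, hq2, ht2, hE2⟩ := h2
      have h12 : E (r1 + r2) a1 a2 := hE.comp hE1 (hE.symm hE2) (by omega)
      have ht1' : t (q1 + (r1 + r2)) a2 := hT.comp1 ht1 h12 (hT.mem ht2) (by omega)
      have := hT.comp4 ht1' ht2 (by omega)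
      exact (by omega : q1 + (r1 + r2) + q2 = q + r) ▸ this
    · subst hu
      rw [extend_new hv] at h1; rw [extend_old hv hz] at h2; rw [extend_new hz]
      obtain ⟨_, a, q1, r1, hq1, ht1, hE1⟩ := h1
      exact ⟨hL, a, q1, r1 + r, by omega, ht1, hE.comp hE1 h2 (by omega)⟩
    · subst hv hz
      rw [extend_new' hu] at h1; rw [extend_diag] at h2; rw [extend_new' hu]
      obtain ⟨_, a, q1, r1, hq1, ht1, hE1⟩ := h1
      refine ⟨hL, a, q1 + r, r1, by omega, ?_, hE1⟩
      have := hT.comp3 (q := r) (r := q1) h2 ht1 (by omega)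
      exact (by omega : r + q1 = q1 + r) ▸ this
    · subst hv
      rw [extend_new' hu] at h1; rw [extend_new hz] at h2; rw [extend_old hu hz]
      obtain ⟨_, a1, q1, r1, hq1, ht1, hE1⟩ := h1
      obtain ⟨_, a2, q2, r2, hq2, ht2, hE2⟩ := h2
      have h12 : E (q1 + q2) a1 a2 := hT.comp2 ht1 ht2 (by omega)
      have : E (r1 + (q1 + q2) + r2) u z :=
        hE.comp (hE.comp (hE.symm hE1) h12 (by omega)) hE2 (by omega)
      exact (by omega : r1 + (q1 + q2) + r2 = q + r) ▸ this
    · subst hz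
      rw [extend_old hu hv] at h1; rw [extend_new' hv] at h2; rw [extend_new' hu]
      obtain ⟨_, a, q1, r1, hq1, ht1, hE1⟩ := h2
      exact ⟨hL, a, q1, r1 + q, by omega, ht1,
        (by omega : r1 + q = r1 + q) ▸ hE.comp hE1 (hE.symm h1) (by omega)⟩
    · rw [extend_old hu hv] at h1; rw [extend_old hv hz] at h2; rw [extend_old hu hz]
      exact hE.comp h1 h2 hL
  · rintro q r u v h1 h2 hodd hL
    by_cases hu : u = p <;> by_cases hv : v = p
    · subst hu hv
      rw [extend_diag] at h1 h2
      exact hT.nodd2 h1 h2 hodd hL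
    · subst hu
      rw [extend_new hv] at h1 h2
      obtain ⟨_, a1, q1, r1, hq1, ht1, hE1⟩ := h1
      obtain ⟨_, a2, q2, r2, hq2, ht2, hE2⟩ := h2
      have h12 : E (r1 + r2) a1 a2 := hE.comp hE1 (hE.symm hE2) (by omega)
      have ht1' : t (q1 + (r1 + r2)) a2 := hT.comp1 ht1 h12 (hT.mem ht2) (by omega)
      exact hT.nodd1 ht1' ht2 ((by omega : q1 + (r1 + r2) + q2 = q + r) ▸ hodd) (by omega)
    · subst hv
      rw [extend_new' hu] at h1 h2
      obtain ⟨_, a1, q1, r1, hq1, ht1, hE1⟩ := h1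
      obtain ⟨_, a2, q2, r2, hq2, ht2, hE2⟩ := h2
      have h12 : E (r1 + r2) a1 a2 := hE.comp hE1 (hE.symm hE2) (by omega)
      have ht1' : t (q1 + (r1 + r2)) a2 := hT.comp1 ht1 h12 (hT.mem ht2) (by omega)
      exact hT.nodd1 ht1' ht2 ((by omega : q1 + (r1 + r2) + q2 = q + r) ▸ hodd) (by omega)
    · rw [extend_old hu hv] at h1 h2
      exact hE.nodd h1 h2 hodd hL

end Amalgam


section Generic

open Classical in
/-- Data describing a finite one-point extension task. -/
abbrev TaskData : Type := Finset ℕ × Finset (ℕ × ℕ) × Finset ℕ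

def decT (T : Finset (ℕ × ℕ)) : ℕ → ℕ → Prop := fun n b => (n, b) ∈ T

def decS (S : Finset ℕ) : ℕ → Prop := fun n => n = 0 ∨ n ∈ S

def Good (L : ℕ) (E : ℕ → ℕ → ℕ → Prop) (p : ℕ) (d : TaskData) : Prop :=
  (↑d.1 : Set ℕ) ⊆ Set.Iio p ∧ IsType L E ↑d.1 (decT d.2.1) (decS d.2.2)

noncomputable def tenum : ℕ → TaskData :=
  fun n => (exists_surjective_nat TaskData).choose n.unpair.1

theorem tenum_spec (d : TaskData) (N : ℕ) : ∃ s, N ≤ s ∧ tenum s = d := by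
  obtain ⟨i, hi⟩ := (exists_surjective_nat TaskData).choose_spec d
  exact ⟨Nat.pair i N, Nat.right_le_pair i N, by simp [tenum, Nat.unpair_pair, hi]⟩

open Classical in
noncomputable def St (L : ℕ) : ℕ → ℕ → ℕ → ℕ → Prop
  | 0 => fun n u v => n = 0 ∧ u = v
  | s + 1 =>
    if Good L (St L s) (s + 1) (tenum s) then
      extend L (St L s) (s + 1) (decT (tenum s).2.1) (decS (tenum s).2.2)
    else St L s

theorem St_isStruc (L : ℕ) : ∀ s, IsStruc L (St L s) := by
  intro s
  induction s with
  | zero =>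
    constructor
    · rintro n u v ⟨rfl, rfl⟩; exact Nat.zero_le L
    · intro u v; simp [St]
    · rintro n u v ⟨rfl, rfl⟩; exact ⟨rfl, rfl⟩
    · rintro q r u v z ⟨rfl, rfl⟩ ⟨rfl, rfl⟩ _; exact ⟨rfl, rfl⟩
    · rintro q r u v ⟨rfl, rfl⟩ ⟨rfl, -⟩ hodd _; simp at hodd
  | succ s ih =>
    rw [St]
    split
    · next h => exact extend_isStruc ih h.2
    · exact ih

theorem St_stable (L : ℕ) {s : ℕ} {u v : ℕ} (hu : u ≤ s) (hv : v ≤ s) (n : ℕ) :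
    St L (s + 1) n u v ↔ St L s n u v := by
  rw [St]
  split
  · exact extend_old (by omega) (by omega)
  · rfl

theorem St_stable' (L : ℕ) {s s' : ℕ} (h : s ≤ s') {u v : ℕ} (hu : u ≤ s) (hv : v ≤ s)
    (n : ℕ) : St L s' n u v ↔ St L s n u v := by
  induction s' with
  | zero =>
    have : s = 0 := by omega
    subst this; rfl
  | succ s' ih =>
    rcases Nat.lt_or_ge s (s' + 1) with h' | h'
    · rw [St_stable L (by omega) (by omega), ih (by omega)]
    · have : s = s' + 1 := by omega
      subst this; rfl

/-- The generic structure on `ℕ`. -/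
def MW (L : ℕ) : ℕ → ℕ → ℕ → Prop := fun n u v => St L (max u v) n u v

theorem MW_iff_St (L : ℕ) {s u v : ℕ} (hu : u ≤ s) (hv : v ≤ s) (n : ℕ) :
    MW L n u v ↔ St L s n u v :=
  (St_stable' L (by omega : max u v ≤ s) (le_max_left u v) (le_max_right u v) n).symm

theorem MW_isStruc (L : ℕ) : IsStruc L (MW L) := by
  constructor
  · intro n u v h
    exact (St_isStruc L _).wle h
  · intro u v
    exact (St_isStruc L _).zero u v
  · intro n u v h
    show St L (max v u) n v u
    rw [max_comm v u]
    exact (St_isStruc L _).symm h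
  · intro q r u v z h1 h2 hL
    set s := max u (max v z) with hs
    rw [MW_iff_St L (by omega : u ≤ s) (by omega : v ≤ s)] at h1
    rw [MW_iff_St L (by omega : v ≤ s) (by omega : z ≤ s)] at h2
    rw [MW_iff_St L (by omega : u ≤ s) (by omega : z ≤ s)]
    exact (St_isStruc L s).comp h1 h2 hL
  · intro q r u v h1 h2 hodd hL
    exact (St_isStruc L _).nodd h1 h2 hodd hL

open Classical in
/-- The extension property of the generic structure. -/
theorem exists_realization (L : ℕ) (A : Finset ℕ) (t : ℕ → ℕ → Prop) (s : ℕ → Prop)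
    (hT : IsType L (MW L) ↑A t s) :
    ∃ x : ℕ, (∀ n a, a ∈ A → (MW L n x a ↔ t n a)) ∧ (∀ n, MW L n x x ↔ s n) := by
  classical
  set T : Finset (ℕ × ℕ) := ((Finset.range (L + 1)) ×ˢ A).filter (fun nb => t nb.1 nb.2) with hT'
  set S : Finset ℕ := (Finset.range (L + 1)).filter s with hS'
  have hdT : decT T = t := by
    funext n b
    simp only [decT, hT', Finset.mem_filter, Finset.mem_product, Finset.mem_range, eq_iff_iff]
    constructor
    · exact fun h => h.2
    · intro h; exact ⟨⟨by have := hT.tle h; omega, hT.mem h⟩, h⟩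
  have hdS : decS S = s := by
    funext n
    simp only [decS, hS', Finset.mem_filter, Finset.mem_range, eq_iff_iff]
    constructor
    · rintro (rfl | h)
      · exact hT.s0
      · exact h.2
    · intro h; exact Or.inr ⟨by have := hT.sle h; omega, h⟩
  obtain ⟨st, hstge, hst⟩ := tenum_spec (A, T, S) (A.sup id)
  have hA : ∀ a ∈ A, a ≤ st := fun a ha => le_trans (Finset.le_sup (f := id) ha) hstge
  have hGood : Good L (St L st) (st + 1) (A, T, S) := by
    refine ⟨fun a ha => ?_, ?_⟩
    · simp only [Finset.coe_sort_coe, Set.mem_Iio]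
      have := hA a (by exact_mod_cast ha)
      omega
    · show IsType L (St L st) ↑A (decT T) (decS S)
      rw [hdT, hdS]
      constructor
      case mem => exact fun h => hT.mem h
      case tle => exact fun h => hT.tle h
      case sle => exact fun h => hT.sle h
      case t0 => exact hT.t0
      case s0 => exact hT.s0
      case comp1 =>
        intro q r b c htb hw hc hL
        have hb : b ∈ A := hT.mem htb
        rw [← MW_iff_St L (hA b hb) (hA c hc)] at hw
        exact hT.comp1 htb hw hc hL
      case comp2 =>
        intro q r b c htb htc hL
        rw [← MW_iff_St L (hA b (hT.mem htb)) (hA c (hT.mem htc))]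
        exact hT.comp2 htb htc hL
      case comp3 => exact fun h1 h2 h3 => hT.comp3 h1 h2 h3
      case comp4 => exact fun h1 h2 h3 => hT.comp4 h1 h2 h3
      case comp5 => exact fun h1 h2 h3 => hT.comp5 h1 h2 h3
      case nodd1 => exact fun h1 h2 h3 h4 => hT.nodd1 h1 h2 h3 h4
      case nodd2 => exact fun h1 h2 h3 h4 => hT.nodd2 h1 h2 h3 h4
  refine ⟨st + 1, ?_, ?_⟩
  · intro n a ha
    have ha' : a ≤ st := hA a ha
    have hmax : max (st + 1) a = st + 1 := by omega
    show St L (max (st + 1) a) n (st + 1) a ↔ t n a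
    rw [hmax, St, hst, if_pos hGood,
      extend_exact (St_isStruc L st) hGood.2 (by omega) (by exact_mod_cast ha), hdT]
  · intro n
    show St L (max (st + 1) (st + 1)) n (st + 1) (st + 1) ↔ s n
    rw [max_self, St, hst, if_pos hGood, extend_diag, hdS]

end Generic


section Graph

open SimpleGraph

/-- Walk-promises of a graph, capped at `L`. -/
def gw (L : ℕ) {V : Type u} (G : SimpleGraph V) : ℕ → V → V → Prop :=
  fun n u v => n ≤ L ∧ ∃ w : G.Walk u v, w.length = n

theorem hom_of_closedWalk {V : Type u} {G : SimpleGraph V} {u : V} (c : G.Walk u u)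
    {j : ℕ} (hj : 3 ≤ j) (hlen : c.length = j) : Nonempty (cycleGraph j →g G) := by
  obtain ⟨m, rfl⟩ : ∃ m, j = m + 3 := ⟨j - 3, by omega⟩
  have key : ∀ a : Fin (m + 3), G.Adj (c.getVert a.val) (c.getVert (a + 1).val) := by
    intro a
    rcases Nat.lt_or_ge (a.val + 1) (m + 3) with h | h
    · have hv : ((a + 1 : Fin (m + 3))).val = a.val + 1 := by
        simp [Fin.add_def, Fin.val_one]
        omega
      rw [hv]
      exact c.adj_getVert_succ (by omega)
    · have ha : a.val = m + 2 := by have := a.isLt; omega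
      have hv : ((a + 1 : Fin (m + 3))).val = 0 := by
        simp only [Fin.add_def, Fin.val_one, ha]
        rw [show m + 2 + 1 = m + 3 from rfl, Nat.mod_self]
      rw [hv, ha]
      have h1 := c.adj_getVert_succ (i := m + 2) (by omega)
      have h2 : c.getVert (m + 2 + 1) = u := by
        rw [show m + 2 + 1 = c.length by omega, c.getVert_length]
      rw [h2] at h1
      rwa [c.getVert_zero]
  refine ⟨⟨fun i => c.getVert i.val, ?_⟩⟩
  intro a b hab
  rw [cycleGraph_adj] at hab
  rcases hab with hab | hab
  · have : a = b + 1 := by rwa [sub_eq_iff_eq_add'] at hab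
    subst this
    exact (key b).symm
  · have : b = a + 1 := by rwa [sub_eq_iff_eq_add'] at hab
    subst this
    exact key a

theorem gw_isStruc (L : ℕ) {V : Type u} (G : SimpleGraph V)
    (hG : ∀ j, 3 ≤ j → j ≤ L → Odd j → IsEmpty (cycleGraph j →g G)) :
    IsStruc L (gw L G) := by
  constructor
  · exact fun h => h.1
  · intro u v
    constructor
    · rintro ⟨-, w, hw⟩
      exact w.eq_of_length_eq_zero hw
    · rintro rfl
      exact ⟨Nat.zero_le L, Walk.nil, rfl⟩
  · rintro n u v ⟨hn, w, hw⟩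
    exact ⟨hn, w.reverse, by simp [hw]⟩
  · rintro q r u v z ⟨hq, w1, hw1⟩ ⟨hr, w2, hw2⟩ hL
    exact ⟨hL, w1.append w2, by simp [hw1, hw2]⟩
  · rintro q r u v ⟨hq, w1, hw1⟩ ⟨hr, w2, hw2⟩ hodd hL
    set c : G.Walk u u := w1.append w2.reverse with hc
    have hclen : c.length = q + r := by simp [hc, hw1, hw2]
    rcases Nat.lt_or_ge (q + r) 3 with h3 | h3
    · have h1 : q + r = 1 := by
        rcases hodd with ⟨k, hk⟩; omega
      have := c.adj_getVert_succ (i := 0) (by omega)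
      rw [c.getVert_zero, show (0 + 1 : ℕ) = c.length by omega, c.getVert_length] at this
      exact G.loopless.irrefl u this
    · obtain ⟨h⟩ := hom_of_closedWalk c h3 hclen
      exact (hG (q + r) h3 hL hodd).false h

theorem gw_one (L : ℕ) (hL : 1 ≤ L) {V : Type u} {G : SimpleGraph V} (u v : V) :
    gw L G 1 u v ↔ G.Adj u v := by
  constructor
  · rintro ⟨-, w, hw⟩
    have := w.adj_getVert_succ (i := 0) (by omega)
    rwa [w.getVert_zero, show (0 + 1 : ℕ) = w.length by omega, w.getVert_length] at this
  · intro h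
    exact ⟨hL, Walk.cons h Walk.nil, rfl⟩

/-- The universal graph. -/
def UG (L : ℕ) : SimpleGraph ℕ where
  Adj u v := MW L 1 u v
  symm := ⟨fun u v h => (MW_isStruc L).symm h⟩
  loopless := ⟨fun u h =>
    (MW_isStruc L).nodd h ((MW_isStruc L).refl u) (by decide) (by simpa using (MW_isStruc L).wle h)⟩

theorem UG_no_cycle (L j : ℕ) (h3 : 3 ≤ j) (hjL : j ≤ L) (hodd : Odd j) :
    IsEmpty (cycleGraph j →g UG L) := by
  obtain ⟨m, rfl⟩ : ∃ m, j = m + 3 := ⟨j - 3, by omega⟩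
  constructor
  intro h
  set v0 : ℕ := h ⟨0, by omega⟩ with hv0
  have edge : ∀ i : ℕ, ∀ hi : i + 1 < m + 3,
      (cycleGraph (m + 3)).Adj ⟨i, by omega⟩ ⟨i + 1, hi⟩ := by
    intro i hi
    rw [cycleGraph_adj]
    right
    have : (⟨i + 1, hi⟩ : Fin (m + 3)) = ⟨i, by omega⟩ + 1 := by
      apply Fin.ext
      simp only [Fin.add_def, Fin.val_one]
      exact (Nat.mod_eq_of_lt hi).symm
    rw [this, add_sub_cancel_left]
  have claim : ∀ i : ℕ, ∀ hi : i < m + 3, MW L i v0 (h ⟨i, hi⟩) := by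
    intro i
    induction i with
    | zero => intro hi; exact (MW_isStruc L).refl v0
    | succ i ih =>
      intro hi
      have prev := ih (by omega)
      have hadj : (UG L).Adj (h ⟨i, by omega⟩) (h ⟨i + 1, hi⟩) := h.map_adj (edge i hi)
      have := (MW_isStruc L).comp prev hadj (by omega)
      exact this
  have last := claim (m + 2) (by omega)
  have hadj : (cycleGraph (m + 3)).Adj ⟨m + 2, by omega⟩ ⟨0, by omega⟩ := by
    rw [cycleGraph_adj]
    right
    have : (⟨0, by omega⟩ : Fin (m + 3)) = ⟨m + 2, by omega⟩ + 1 := by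
      apply Fin.ext
      simp only [Fin.add_def, Fin.val_one]
      rw [show m + 2 + 1 = m + 3 from rfl, Nat.mod_self]
    rw [this, add_sub_cancel_left]
  have hadj' : (UG L).Adj (h ⟨m + 2, by omega⟩) (h ⟨0, by omega⟩) := h.map_adj hadj
  have hfull : MW L (m + 2 + 1) v0 v0 := (MW_isStruc L).comp last hadj' (by omega)
  exact (MW_isStruc L).nodd hfull ((MW_isStruc L).refl v0) (by simpa using hodd)
    (by omega)

end Graph


section Embed

open SimpleGraph

variable {V : Type u} [Nonempty V] (L : ℕ) (G : SimpleGraph V) (e : V ↪ ℕ)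

/-- Partial inverse of the enumeration. -/
noncomputable def vtx (n : ℕ) : V := Function.invFun e n

theorem vtx_eq {v : V} {n : ℕ} (h : e v = n) : vtx e n = v := by
  apply e.injective
  rw [show (e : V → ℕ) = e.toFun from rfl] at h ⊢
  have : e.toFun (Function.invFun e.toFun n) = n := Function.invFun_eq ⟨v, h⟩
  rw [vtx]
  exact this.trans h.symm

/-- Vertices enumerated before `n`. -/
noncomputable def SF (n : ℕ) : Finset V := by
  classical
  exact ((Finset.range n).image (vtx e)).filter (fun u => e u < n)

theorem mem_SF {n : ℕ} {u : V} : u ∈ SF e n ↔ e u < n := by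
  classical
  rw [SF]
  constructor
  · intro h
    exact (Finset.mem_filter.1 h).2
  · intro h
    refine Finset.mem_filter.2 ⟨Finset.mem_image.2 ⟨e u, Finset.mem_range.2 h, vtx_eq e rfl⟩, h⟩

def tP (n : ℕ) (g : V → ℕ) : ℕ → ℕ → Prop :=
  fun k m => ∃ u, e u < n ∧ g u = m ∧ gw L G k (vtx e n) u

def sP (n : ℕ) : ℕ → Prop := fun k => gw L G k (vtx e n) (vtx e n)

noncomputable def AF (n : ℕ) (g : V → ℕ) : Finset ℕ := (SF e n).image g

open Classical in
noncomputable def pick (n : ℕ) (g : V → ℕ) : ℕ :=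
  if h : ∃ x : ℕ, (∀ k a, a ∈ AF e n g → (MW L k x a ↔ tP L G e n g k a)) ∧
      (∀ k, MW L k x x ↔ sP L G e n k) then h.choose else 0

noncomputable def emb : ℕ → V → ℕ
  | 0 => fun _ => 0
  | n + 1 => fun w => if e w = n then pick L G e n (emb n) else emb n w

theorem emb_stable : ∀ {m n : ℕ}, m ≤ n → ∀ {u : V}, e u < m → emb L G e n u = emb L G e m u := by
  intro m n
  induction n with
  | zero => intro h u _; interval_cases m; rfl
  | succ n ih =>
    intro h u hu
    rcases Nat.lt_or_ge m (n + 1) with h' | h'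
    · have : emb L G e (n + 1) u = emb L G e n u := by
        rw [emb]
        simp only [if_neg (by omega : ¬ e u = n)]
      rw [this, ih (by omega) hu]
    · have : m = n + 1 := by omega
      subst this; rfl

theorem emb_inv (hG : IsStruc L (gw L G)) :
    ∀ n, ∀ u u' : V, e u < n → e u' < n → ∀ k,
      (gw L G k u u' ↔ MW L k (emb L G e n u) (emb L G e n u')) := by
  intro n
  induction n with
  | zero => intro u u' hu; omega
  | succ n ih =>
    -- injectivity of `emb n` on earlier vertices
    have hinj : ∀ {u u' : V}, e u < n → e u' < n →
        emb L G e n u = emb L G e n u' → u = u' := by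
      intro u u' hu hu' hh
      have := (ih u u' hu hu' 0).2 (by rw [hh]; exact (MW_isStruc L).refl _)
      exact (hG.zero u u').1 this
    by_cases hex : ∃ v : V, e v = n
    · obtain ⟨v, hv⟩ := hex
      have hvtx : vtx e n = v := vtx_eq e hv
      -- the type is valid
      have hT : IsType L (MW L) ↑(AF e n (emb L G e n)) (tP L G e n (emb L G e n))
          (sP L G e n) := by
        constructor
        case mem =>
          rintro k m ⟨u, hu, hgu, -⟩
          exact Finset.mem_coe.2 (Finset.mem_image.2 ⟨u, (mem_SF e).2 hu, hgu⟩)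
        case tle => rintro k m ⟨u, -, -, hw⟩; exact hw.1
        case sle => exact fun h => h.1
        case t0 =>
          rintro m ⟨u, hu, -, hw⟩
          have : vtx e n = u := (hG.zero _ _).1 hw
          rw [hvtx] at this
          subst this
          omega
        case s0 => exact hG.refl _
        case comp1 =>
          rintro q r b c ⟨u, hu, hgu, hw⟩ hbc hc hqr
          obtain ⟨u', hu', hgu'⟩ := Finset.mem_image.1 (Finset.mem_coe.1 hc)
          have hu'2 : e u' < n := (mem_SF e).1 hu'
          rw [← hgu, ← hgu'] at hbc
          have : gw L G r u u' := (ih u u' hu hu'2 r).2 hbc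
          exact ⟨u', hu'2, hgu', hG.comp hw this hqr⟩
        case comp2 =>
          rintro q r b c ⟨u, hu, hgu, hw⟩ ⟨u', hu', hgu', hw'⟩ hqr
          rw [← hgu, ← hgu']
          exact (ih u u' hu hu' (q + r)).1 (hG.comp (hG.symm hw) hw' hqr)
        case comp3 =>
          rintro q r b h1 ⟨u, hu, hgu, hw⟩ hqr
          exact ⟨u, hu, hgu, hG.comp h1 hw hqr⟩
        case comp4 =>
          rintro q r b ⟨u, hu, hgu, hw⟩ ⟨u', hu', hgu', hw'⟩ hqr
          have : u = u' := hinj hu hu' (hgu.trans hgu'.symm)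
          subst this
          exact hG.comp hw (hG.symm hw') hqr
        case comp5 => exact fun h1 h2 h3 => hG.comp h1 h2 h3
        case nodd1 =>
          rintro q r b ⟨u, hu, hgu, hw⟩ ⟨u', hu', hgu', hw'⟩ hodd hqr
          have : u = u' := hinj hu hu' (hgu.trans hgu'.symm)
          subst this
          exact hG.nodd hw hw' hodd hqr
        case nodd2 => exact fun h1 h2 h3 h4 => hG.nodd h1 h2 h3 h4
      have hEx : ∃ x : ℕ, (∀ k a, a ∈ AF e n (emb L G e n) →
          (MW L k x a ↔ tP L G e n (emb L G e n) k a)) ∧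
          (∀ k, MW L k x x ↔ sP L G e n k) :=
        exists_realization L _ _ _ hT
      have hpickspec : (∀ k a, a ∈ AF e n (emb L G e n) →
          (MW L k (pick L G e n (emb L G e n)) a ↔ tP L G e n (emb L G e n) k a)) ∧
          (∀ k, MW L k (pick L G e n (emb L G e n)) (pick L G e n (emb L G e n)) ↔
            sP L G e n k) := by
        rw [pick, dif_pos hEx]
        exact hEx.choose_spec
      -- now prove the invariant at n+1
      intro u u' hu hu' k
      have hemb : ∀ {w : V}, e w < n → emb L G e (n + 1) w = emb L G e n w := by
        intro w hw
        rw [emb]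
        simp only [if_neg (by omega : ¬ e w = n)]
      have hembv : emb L G e (n + 1) v = pick L G e n (emb L G e n) := by
        rw [emb]
        simp only [if_pos hv]
      -- case analysis
      rcases Nat.lt_or_ge (e u) n with hun | hun <;> rcases Nat.lt_or_ge (e u') n with hun' | hun'
      · rw [hemb hun, hemb hun']
        exact ih u u' hun hun' k
      · have : u' = v := e.injective (by omega)
        subst this
        rw [hemb hun, hembv]
        have h1 := (hpickspec.1 k (emb L G e n u)
          (Finset.mem_image.2 ⟨u, (mem_SF e).2 hun, rfl⟩))
        constructor
        · intro hw
          exact (MW_isStruc L).symm (h1.2 ⟨u, hun, rfl, hvtx ▸ hG.symm hw⟩)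
        · intro hw
          obtain ⟨w, hwn, hww, hw2⟩ := h1.1 ((MW_isStruc L).symm hw)
          have : w = u := hinj hwn hun hww
          subst this
          exact hG.symm (hvtx ▸ hw2)
      · have : u = v := e.injective (by omega)
        subst this
        rw [hemb hun', hembv]
        have h1 := (hpickspec.1 k (emb L G e n u')
          (Finset.mem_image.2 ⟨u', (mem_SF e).2 hun', rfl⟩))
        constructor
        · intro hw
          exact h1.2 ⟨u', hun', rfl, hvtx ▸ hw⟩
        · intro hw
          obtain ⟨w, hwn, hww, hw2⟩ := h1.1 hw
          have : w = u' := hinj hwn hun' hww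
          subst this
          exact hvtx ▸ hw2
      · have h2 : u = v := e.injective (by omega)
        have h3 : u' = v := e.injective (by omega)
        subst h2; subst h3
        rw [hembv]
        rw [hpickspec.2 k]
        simp only [sP, hvtx]
    · -- no vertex with e v = n
      intro u u' hu hu' k
      have hun : e u < n := by
        rcases Nat.lt_or_ge (e u) n with h | h
        · exact h
        · exact absurd ⟨u, by omega⟩ hex
      have hun' : e u' < n := by
        rcases Nat.lt_or_ge (e u') n with h | h
        · exact h
        · exact absurd ⟨u', by omega⟩ hex
      have hemb : ∀ {w : V}, e w < n → emb L G e (n + 1) w = emb L G e n w := by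
        intro w hw
        rw [emb]
        simp only [if_neg (by omega : ¬ e w = n)]
      rw [hemb hun, hemb hun']
      exact ih u u' hun hun' k

/-- The final embedding map. -/
noncomputable def fmap (v : V) : ℕ := emb L G e (e v + 1) v

theorem fmap_spec (hG : IsStruc L (gw L G)) (u u' : V) (k : ℕ) :
    gw L G k u u' ↔ MW L k (fmap L G e u) (fmap L G e u') := by
  set n := max (e u) (e u') + 1 with hn
  have h1 : emb L G e n u = fmap L G e u := emb_stable L G e (by omega) (by omega)
  have h2 : emb L G e n u' = fmap L G e u' := emb_stable L G e (by omega) (by omega)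
  rw [← h1, ← h2]
  exact emb_inv L G e hG n u u' (by omega) (by omega) k

end Embed

end ForbOdd





/-- For every odd `l ≥ 3`, the class of countable graphs admitting no homomorphism
from any odd cycle `C_j` with `3 ≤ j ≤ l` contains an embedding-universal graph. -/
theorem forbh_oddCycles_universal (l : ℕ) (hl : 3 ≤ l) (hodd : Odd l) :
    ∃ (W : Type) (_ : Countable W) (U : SimpleGraph W),
      (∀ j, 3 ≤ j → j ≤ l → Odd j → IsEmpty (SimpleGraph.cycleGraph j →g U)) ∧
      ∀ (V : Type u) [Countable V] (G : SimpleGraph V),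
        (∀ j, 3 ≤ j → j ≤ l → Odd j → IsEmpty (SimpleGraph.cycleGraph j →g G)) →
        Nonempty (G ↪g U) := by
  refine ⟨ℕ, inferInstance, ForbOdd.UG l, ?_, ?_⟩
  · intro j h3 hjl hodd'
    exact ForbOdd.UG_no_cycle l j h3 hjl hodd'
  · intro V _ G hG
    rcases isEmpty_or_nonempty V with hV | hV
    · exact ⟨⟨Function.Embedding.ofIsEmpty, fun {a} => isEmptyElim a⟩⟩
    · obtain ⟨f, hf⟩ := exists_injective_nat V
      let e : V ↪ ℕ := ⟨f, hf⟩
      have hGs : ForbOdd.IsStruc l (ForbOdd.gw l G) := ForbOdd.gw_isStruc l G hG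
      refine ⟨⟨⟨ForbOdd.fmap l G e, ?_⟩, ?_⟩⟩
      · intro u v h
        have h0 : ForbOdd.MW l 0 (ForbOdd.fmap l G e u) (ForbOdd.fmap l G e v) := by
          rw [h]; exact (ForbOdd.MW_isStruc l).refl _
        have := (ForbOdd.fmap_spec l G e hGs u v 0).2 h0
        exact (hGs.zero u v).1 this
      · intro a b
        show ForbOdd.MW l 1 (ForbOdd.fmap l G e a) (ForbOdd.fmap l G e b) ↔ G.Adj a b
        rw [← ForbOdd.fmap_spec l G e hGs a b 1]
        exact ForbOdd.gw_one l (by omega) a b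
end
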